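/- arXiv:0704.3922 — 6 statements merged into one kernel-verified Lean document; each statement's English description precedes it below -/
import Mathlib

section
/- Let k ≥ 1 be an integer, let c₀ > 0 and η ≥ 0 be constants, and let h : ℝ → ℝ be of class C^{k+1} with |h^{(l)}(y)| ≤ η for all y and all l ∈ {0,…,k+1}, and with 1 + h'(y) ≥ c₀ for all y. Let τ be the inverse of y ↦ y + h(y). Then there exists a constant K, depending only on k and c₀, such that for every l ∈ {1,…,k+1} and every y ∈ ℝ: |τ^{(l)}(y)| ≤ K(η + η^{l−1}). -/
open Topology

lemma aux_tau_smooth (n : WithTop ℕ∞) (c₀ : ℝ) (hc₀ : 0 < c₀) (h τ : ℝ → ℝ)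
    (hh : ContDiff ℝ (n + 1) h) (hlow : ∀ y : ℝ, c₀ ≤ 1 + deriv h y)
    (hinv : ∀ y : ℝ, τ y + h (τ y) = y) :
    ContDiff ℝ (n + 1) τ ∧ ∀ y : ℝ, deriv τ y = (1 + deriv h (τ y))⁻¹ := by
  have hn1 : (1 : WithTop ℕ∞) ≤ n + 1 := le_add_self
  have hn1' : n + 1 ≠ 0 := (zero_lt_one.trans_le hn1).ne'
  have hdiffh : Differentiable ℝ h := hh.differentiable hn1'
  set g : ℝ → ℝ := fun x => x + h x with hg_def
  have hgc : ContDiff ℝ (n + 1) g := contDiff_id.add hh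
  have hgd : ∀ x : ℝ, HasDerivAt g (1 + deriv h x) x := fun x =>
    (hasDerivAt_id x).add (hdiffh x).hasDerivAt
  have hmono : StrictMono g := strictMono_of_deriv_pos fun x => by
    rw [(hgd x).deriv]; linarith [hlow x]
  have hgτ : ∀ y : ℝ, g (τ y) = y := hinv
  have hcd : ContDiff ℝ (n + 1) τ := by
    rw [contDiff_iff_contDiffAt]
    intro y₀
    set a := τ y₀ with ha
    have hd : 1 + deriv h a ≠ 0 := by have := hlow a; linarith
    set e : ℝ ≃L[ℝ] ℝ := ContinuousLinearEquiv.unitsEquivAut ℝ (Units.mk0 _ hd) with he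
    have hfd : HasFDerivAt g (e : ℝ →L[ℝ] ℝ) a := by
      have h0 := (hgd a).hasFDerivAt
      refine h0.congr_fderiv ?_
      ext; simp [he]
    have hca : ContDiffAt ℝ (n + 1) g a := hgc.contDiffAt
    have hL : ContDiffAt ℝ (n + 1) (hca.localInverse hfd hn1') (g a) :=
      hca.to_localInverse hfd hn1'
    have hev : ∀ᶠ y in 𝓝 (g a), g (hca.localInverse hfd hn1' y) = y :=
      (hca.hasStrictFDerivAt' hfd hn1').eventually_right_inverse
    rw [hgτ y₀] at hL hev
    have heq : (hca.localInverse hfd hn1') =ᶠ[𝓝 y₀] τ :=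
      hev.mono fun y hy => hmono.injective (by rw [hgτ]; exact hy)
    exact hL.congr_of_eventuallyEq heq.symm
  refine ⟨hcd, fun y => ?_⟩
  have hτd : Differentiable ℝ τ := hcd.differentiable hn1'
  have h1 : HasDerivAt τ (deriv τ y) y := (hτd y).hasDerivAt
  have h3 : HasDerivAt (fun z => τ z + h (τ z))
      (deriv τ y + deriv h (τ y) * deriv τ y) y :=
    h1.add ((hdiffh (τ y)).hasDerivAt.comp y h1)
  have h4 : (fun z : ℝ => τ z + h (τ z)) = fun z : ℝ => z := funext hinv
  rw [h4] at h3
  have e1 : deriv τ y + deriv h (τ y) * deriv τ y = 1 := h3.unique (hasDerivAt_id y)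
  have e2 : deriv τ y * (1 + deriv h (τ y)) = 1 := by linear_combination e1
  exact eq_inv_of_mul_eq_one_left e2


open Finset in
lemma aux_F_bound (k : ℕ) (hk : 1 ≤ k) (c₀ : ℝ) (hc₀ : 0 < c₀) (η : ℝ) (hη : 0 ≤ η)
    (h : ℝ → ℝ) (hh : ContDiff ℝ (k + 1 : ℕ) h)
    (hb : ∀ l ≤ k + 1, ∀ y : ℝ, |iteratedDeriv l h y| ≤ η)
    (hlow : ∀ y : ℝ, c₀ ≤ 1 + deriv h y) :
    ∀ j ≤ k, ∀ x : ℝ, |iteratedDeriv j (fun x => (1 + deriv h x)⁻¹) x| ≤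
      (max (max c₀⁻¹ (4 ^ k)) 1) ^ (2 * j + 1) *
        (η ^ (min j 1) * (max 1 η) ^ (j - 1)) := by
  obtain ⟨m, rfl⟩ : ∃ m, k = m + 1 := ⟨k - 1, by omega⟩
  set B : ℝ := max (max c₀⁻¹ (4 ^ (m + 1))) 1 with hB_def
  set lam : ℝ := max 1 η with hlam_def
  set M : ℕ → ℝ := fun j => η ^ (min j 1) * lam ^ (j - 1) with hM_def
  set F : ℝ → ℝ := fun x => (1 + deriv h x)⁻¹ with hF_def
  have hB1 : (1 : ℝ) ≤ B := le_max_right _ _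
  have hBc : c₀⁻¹ ≤ B := le_trans (le_max_left _ _) (le_max_left _ _)
  have hB4 : (4 : ℝ) ^ (m + 1) ≤ B := le_trans (le_max_right _ _) (le_max_left _ _)
  have hB0 : (0 : ℝ) ≤ B := by linarith
  have hlam1 : (1 : ℝ) ≤ lam := le_max_left _ _
  have hηlam : η ≤ lam := le_max_right _ _
  have hlam0 : (0 : ℝ) ≤ lam := by linarith
  have hM0 : M 0 = 1 := by simp [hM_def]
  have hMpos : ∀ j, 0 ≤ M j := fun j =>
    mul_nonneg (pow_nonneg hη _) (pow_nonneg hlam0 _)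
  have hMs : ∀ j : ℕ, M (j + 1) = η * lam ^ j := fun j => by
    simp [hM_def, Nat.min_eq_right (by omega : 1 ≤ j + 1)]
  have hMmono : ∀ i j, 1 ≤ i → i ≤ j → M i ≤ M j := by
    intro i j hi hij
    obtain ⟨i, rfl⟩ : ∃ i', i = i' + 1 := ⟨i - 1, by omega⟩
    obtain ⟨j, rfl⟩ : ∃ j', j = j' + 1 := ⟨j - 1, by omega⟩
    rw [hMs, hMs]
    exact mul_le_mul_of_nonneg_left (pow_le_pow_right₀ hlam1 (by omega)) hη
  have hMmul : ∀ b c, η * (M b * M c) ≤ M (b + c + 1) := by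
    have key : ∀ b c : ℕ, η * (M b * M c) ≤ M (b + c + 1) ∨ True := fun _ _ => Or.inr trivial
    intro b c
    have hηη : η * η ≤ η * lam := mul_le_mul_of_nonneg_left hηlam hη
    match b, c with
    | 0, 0 =>
      rw [hM0, show (0+0+1 : ℕ) = 0 + 1 from rfl, hMs]
      simp
    | 0, c + 1 =>
      rw [hM0, hMs, show 0 + (c+1) + 1 = (c+1) + 1 by omega, hMs]
      have e : η * (1 * (η * lam ^ c)) = (η * η) * lam ^ c := by ring
      rw [e]
      calc (η * η) * lam ^ c ≤ (η * lam) * lam ^ c :=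
            mul_le_mul_of_nonneg_right hηη (pow_nonneg hlam0 _)
        _ = η * lam ^ (c + 1) := by ring
    | b + 1, 0 =>
      rw [hM0, hMs, show (b+1) + 0 + 1 = (b+1) + 1 by omega, hMs]
      have e : η * (η * lam ^ b * 1) = (η * η) * lam ^ b := by ring
      rw [e]
      calc (η * η) * lam ^ b ≤ (η * lam) * lam ^ b :=
            mul_le_mul_of_nonneg_right hηη (pow_nonneg hlam0 _)
        _ = η * lam ^ (b + 1) := by ring
    | b + 1, c + 1 =>
      rw [hMs, hMs, show (b+1) + (c+1) + 1 = (b + c + 2) + 1 by omega, hMs]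
      have e : η * (η * lam ^ b * (η * lam ^ c)) = (η * η * η) * (lam ^ b * lam ^ c) := by
        ring
      rw [e, ← pow_add]
      have h2 : η * η * η ≤ η * (lam * lam) := by
        have := mul_le_mul hηlam hηlam hη hlam0
        calc η * η * η = η * (η * η) := by ring
          _ ≤ η * (lam * lam) := mul_le_mul_of_nonneg_left this hη
      calc (η * η * η) * lam ^ (b + c)
          ≤ (η * (lam * lam)) * lam ^ (b + c) :=
            mul_le_mul_of_nonneg_right h2 (pow_nonneg hlam0 _)
        _ = η * lam ^ (b + c + 2) := by ring
  -- smoothness facts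
  have hd1 : ContDiff ℝ ((m + 1 : ℕ) : WithTop ℕ∞) (deriv h) := by
    have h2 : ContDiff ℝ (((m + 1 : ℕ) : WithTop ℕ∞) + 1) h := by exact_mod_cast hh
    exact (contDiff_succ_iff_deriv.1 h2).2.2
  have hne : ∀ x : ℝ, 1 + deriv h x ≠ 0 := fun x => by have := hlow x; linarith
  have hF : ContDiff ℝ ((m + 1 : ℕ) : WithTop ℕ∞) F := (contDiff_const.add hd1).inv hne
  have hFb : ∀ x, |F x| ≤ c₀⁻¹ := by
    intro x
    have h1 : 0 < 1 + deriv h x := lt_of_lt_of_le hc₀ (hlow x)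
    rw [hF_def, abs_of_pos (inv_pos.2 h1)]
    exact inv_anti₀ hc₀ (hlow x)
  have hdd : ContDiff ℝ ((m : ℕ) : WithTop ℕ∞) (deriv (deriv h)) := by
    have h2 : ContDiff ℝ (((m : ℕ) : WithTop ℕ∞) + 1) (deriv h) := by exact_mod_cast hd1
    exact (contDiff_succ_iff_deriv.1 h2).2.2
  have hdd_diff : Differentiable ℝ (deriv h) :=
    hd1.differentiable (by simp)
  have derF : deriv F = fun x => -(deriv (deriv h) x * (F x * F x)) := by
    funext x
    have hu : HasDerivAt (fun x => 1 + deriv h x) (deriv (deriv h) x) x :=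
      ((hdd_diff x).hasDerivAt).const_add 1
    have h3 := hu.inv (hne x)
    rw [hF_def, show deriv (fun x => (1 + deriv h x)⁻¹) x = _ from h3.deriv, div_eq_mul_inv, pow_two, mul_inv]
    ring
  have hitdd : ∀ a : ℕ, iteratedDeriv a (deriv (deriv h)) = iteratedDeriv (a + 2) h := by
    intro a
    rw [show a + 2 = (a + 1) + 1 from rfl, iteratedDeriv_succ', iteratedDeriv_succ']
  have hddb : ∀ a ≤ m, ∀ x : ℝ, |iteratedDeriv a (deriv (deriv h)) x| ≤ η := by
    intro a ha x
    rw [hitdd a]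
    exact hb (a + 2) (by omega) x
  -- main strong induction
  intro j
  induction j using Nat.strong_induction_on with
  | _ j ih =>
    intro hjk x
    match j with
    | 0 =>
      have : |F x| ≤ B := le_trans (hFb x) hBc
      simpa [hM0] using this
    | (j + 1) =>
      have hjm : j ≤ m := by omega
      rw [iteratedDeriv_succ', derF, iteratedDeriv_fun_neg, abs_neg]
      have hNcast : (j : WithTop ℕ∞) ≤ ((m : ℕ) : WithTop ℕ∞) := by exact_mod_cast hjm
      have hFm : ContDiff ℝ ((m : ℕ) : WithTop ℕ∞) F :=
        hF.of_le (by exact_mod_cast (by omega : m ≤ m + 1))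
      have hFF : ContDiff ℝ ((m : ℕ) : WithTop ℕ∞) (fun x => F x * F x) := hFm.mul hFm
      have step1 : |iteratedDeriv j (fun x => deriv (deriv h) x * (F x * F x)) x| ≤
          ∑ a ∈ range (j + 1), (j.choose a : ℝ) *
            ‖iteratedFDeriv ℝ a (deriv (deriv h)) x‖ *
            ‖iteratedFDeriv ℝ (j - a) (fun x => F x * F x) x‖ := by
        rw [← Real.norm_eq_abs, ← norm_iteratedFDeriv_eq_norm_iteratedDeriv]
        exact norm_iteratedFDeriv_mul_le hdd hFF x hNcast
      -- bound each term
      have step2 : ∀ a ∈ range (j + 1), (j.choose a : ℝ) *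
            ‖iteratedFDeriv ℝ a (deriv (deriv h)) x‖ *
            ‖iteratedFDeriv ℝ (j - a) (fun x => F x * F x) x‖ ≤
          (j.choose a : ℝ) * ((2:ℝ) ^ j * (B ^ (2 * j + 2) * M (j + 1))) := by
        intro a ha
        rw [mem_range] at ha
        have ha' : a ≤ j := by omega
        -- inner bound on F * F
        have inner : ‖iteratedFDeriv ℝ (j - a) (fun x => F x * F x) x‖ ≤
            ∑ b ∈ range ((j - a) + 1), ((j - a).choose b : ℝ) *
              ‖iteratedFDeriv ℝ b F x‖ * ‖iteratedFDeriv ℝ ((j - a) - b) F x‖ :=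
          norm_iteratedFDeriv_mul_le hFm hFm x (by exact_mod_cast (by omega : j - a ≤ m))
        have hdda : ‖iteratedFDeriv ℝ a (deriv (deriv h)) x‖ ≤ η := by
          rw [norm_iteratedFDeriv_eq_norm_iteratedDeriv, Real.norm_eq_abs]
          exact hddb a (by omega) x
        have innerterm : ∀ b ∈ range ((j - a) + 1), ((j - a).choose b : ℝ) *
              ‖iteratedFDeriv ℝ b F x‖ * ‖iteratedFDeriv ℝ ((j - a) - b) F x‖ ≤
            ((j - a).choose b : ℝ) * (B ^ (2 * b + 1) * M b *
              (B ^ (2 * ((j - a) - b) + 1) * M ((j - a) - b))) := by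
          intro b hb2
          rw [mem_range] at hb2
          have hFb1 : ‖iteratedFDeriv ℝ b F x‖ ≤ B ^ (2 * b + 1) * M b := by
            rw [norm_iteratedFDeriv_eq_norm_iteratedDeriv, Real.norm_eq_abs]
            exact ih b (by omega) (by omega) x
          have hFb2 : ‖iteratedFDeriv ℝ ((j-a)-b) F x‖ ≤
              B ^ (2 * ((j-a)-b) + 1) * M ((j-a)-b) := by
            rw [norm_iteratedFDeriv_eq_norm_iteratedDeriv, Real.norm_eq_abs]
            exact ih ((j-a)-b) (by omega) (by omega) x
          rw [mul_assoc]
          refine mul_le_mul_of_nonneg_left ?_ (by positivity)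
          exact mul_le_mul hFb1 hFb2 (norm_nonneg _)
            (by have := hMpos b; positivity)
        set S : ℝ := ∑ b ∈ range ((j - a) + 1), ((j - a).choose b : ℝ) *
            (B ^ (2 * b + 1) * M b * (B ^ (2 * ((j - a) - b) + 1) * M ((j - a) - b)))
          with hS_def
        have hY : ‖iteratedFDeriv ℝ (j - a) (fun x => F x * F x) x‖ ≤ S :=
          le_trans inner (by
            refine sum_le_sum ?_
            intro b hb2
            have := innerterm b hb2
            linarith [this])
        have hXY : ‖iteratedFDeriv ℝ a (deriv (deriv h)) x‖ *
            ‖iteratedFDeriv ℝ (j - a) (fun x => F x * F x) x‖ ≤ η * S :=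
          mul_le_mul hdda hY (norm_nonneg _) hη
        have hterm : ∀ b ∈ range ((j - a) + 1),
            ((j - a).choose b : ℝ) * (η * (B ^ (2 * b + 1) * M b *
              (B ^ (2 * ((j - a) - b) + 1) * M ((j - a) - b)))) ≤
            ((j - a).choose b : ℝ) * (B ^ (2 * j + 2) * M (j + 1)) := by
          intro b hb2
          rw [mem_range] at hb2
          refine mul_le_mul_of_nonneg_left ?_ (by positivity)
          set c := (j - a) - b with hc_def
          have hbc : b + c = j - a := by omega
          have e : η * (B ^ (2 * b + 1) * M b * (B ^ (2 * c + 1) * M c)) =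
              (B ^ (2 * b + 1) * B ^ (2 * c + 1)) * (η * (M b * M c)) := by ring
          rw [e, ← pow_add]
          have hBe : B ^ (2 * b + 1 + (2 * c + 1)) ≤ B ^ (2 * j + 2) :=
            pow_le_pow_right₀ hB1 (by omega)
          have hMe : η * (M b * M c) ≤ M (j + 1) :=
            le_trans (hMmul b c) (hMmono (b + c + 1) (j + 1) (by omega) (by omega))
          exact mul_le_mul hBe hMe
            (mul_nonneg hη (mul_nonneg (hMpos _) (hMpos _))) (pow_nonneg hB0 _)
        have hSsum : η * S ≤ (2:ℝ) ^ j * (B ^ (2 * j + 2) * M (j + 1)) := by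
          have e1 : η * S = ∑ b ∈ range ((j - a) + 1), ((j - a).choose b : ℝ) *
              (η * (B ^ (2 * b + 1) * M b *
                (B ^ (2 * ((j - a) - b) + 1) * M ((j - a) - b)))) := by
            rw [hS_def, mul_sum]
            refine sum_congr rfl fun b _ => by ring
          rw [e1]
          calc ∑ b ∈ range ((j - a) + 1), ((j - a).choose b : ℝ) *
              (η * (B ^ (2 * b + 1) * M b *
                (B ^ (2 * ((j - a) - b) + 1) * M ((j - a) - b))))
              ≤ ∑ b ∈ range ((j - a) + 1), ((j - a).choose b : ℝ) *
                (B ^ (2 * j + 2) * M (j + 1)) := sum_le_sum hterm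
            _ = (2:ℝ) ^ (j - a) * (B ^ (2 * j + 2) * M (j + 1)) := by
                rw [← sum_mul, ← Nat.cast_sum, Nat.sum_range_choose]
                push_cast
                ring
            _ ≤ (2:ℝ) ^ j * (B ^ (2 * j + 2) * M (j + 1)) := by
                refine mul_le_mul_of_nonneg_right
                  (pow_le_pow_right₀ (by norm_num) (by omega)) ?_
                exact mul_nonneg (pow_nonneg hB0 _) (hMpos _)
        rw [mul_assoc]
        refine mul_le_mul_of_nonneg_left (le_trans hXY hSsum) (by positivity)
      calc |iteratedDeriv j (fun x => deriv (deriv h) x * (F x * F x)) x|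
          ≤ ∑ a ∈ range (j + 1), (j.choose a : ℝ) *
            ‖iteratedFDeriv ℝ a (deriv (deriv h)) x‖ *
            ‖iteratedFDeriv ℝ (j - a) (fun x => F x * F x) x‖ := step1
        _ ≤ ∑ a ∈ range (j + 1), (j.choose a : ℝ) *
            ((2:ℝ) ^ j * (B ^ (2 * j + 2) * M (j + 1))) := sum_le_sum step2
        _ = (2:ℝ) ^ j * (2:ℝ) ^ j * (B ^ (2 * j + 2) * M (j + 1)) := by
            rw [← sum_mul, ← Nat.cast_sum, Nat.sum_range_choose]
            push_cast
            ring
        _ ≤ B * (B ^ (2 * j + 2) * M (j + 1)) := by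
            refine mul_le_mul_of_nonneg_right ?_
              (mul_nonneg (pow_nonneg hB0 _) (hMpos _))
            have e4 : (2:ℝ) ^ j * 2 ^ j = 4 ^ j := by
              rw [← mul_pow]; norm_num
            rw [e4]
            calc (4:ℝ) ^ j ≤ 4 ^ (m + 1) :=
                  pow_le_pow_right₀ (by norm_num) (by omega)
              _ ≤ B := hB4
        _ = B ^ (2 * (j + 1) + 1) * M (j + 1) := by
            rw [show 2 * (j + 1) + 1 = (2 * j + 2) + 1 from by omega, pow_succ]
            ring


lemma itd_const_mul {n : ℕ} {f : ℝ → ℝ} (hf : ContDiff ℝ (n : ℕ) f) (c x : ℝ) :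
    iteratedDeriv n (fun y => c * f y) x = c * iteratedDeriv n f x := by
  rw [← iteratedDerivWithin_univ, ← iteratedDerivWithin_univ]
  exact iteratedDerivWithin_const_mul (Set.mem_univ x) uniqueDiffOn_univ c hf.contDiffWithinAt

/-- Bound (btl): there is a constant `K = K(k, c₀)` such that the inverse `τ` of
`y ↦ y + h(y)` satisfies `|τ^{(l)}(y)| ≤ K(η + η^{l−1})` for `l = 1,…,k+1`. -/
theorem stmt_2 (k : ℕ) (hk : 1 ≤ k) (c₀ : ℝ) (hc₀ : 0 < c₀) :
    ∃ K : ℝ, ∀ (η : ℝ), 0 ≤ η → ∀ (h τ : ℝ → ℝ),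
      ContDiff ℝ (k + 1) h →
      (∀ l ≤ k + 1, ∀ y : ℝ, |iteratedDeriv l h y| ≤ η) →
      (∀ y : ℝ, c₀ ≤ 1 + deriv h y) →
      (∀ y : ℝ, τ y + h (τ y) = y) →
      ∀ l : ℕ, 1 ≤ l → l ≤ k + 1 → ∀ y : ℝ,
        |iteratedDeriv l τ y| ≤ K * (η + η ^ (l - 1)) := by
  classical
  set B : ℝ := max (max c₀⁻¹ (4 ^ k)) 1 with hB_def
  set A : ℝ := max (max c₀⁻¹ ((Nat.factorial (k + 1) : ℝ) * B ^ (2 * k + 1))) 1 with hA_def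
  have hB1 : (1 : ℝ) ≤ B := le_max_right _ _
  have hB0 : (0 : ℝ) ≤ B := by linarith
  have hA1 : (1 : ℝ) ≤ A := le_max_right _ _
  have hA0 : (0 : ℝ) ≤ A := by linarith
  have hAc : c₀⁻¹ ≤ A := le_trans (le_max_left _ _) (le_max_left _ _)
  have hAf : (Nat.factorial (k + 1) : ℝ) * B ^ (2 * k + 1) ≤ A :=
    le_trans (le_max_right _ _) (le_max_left _ _)
  refine ⟨A ^ ((k + 2) ^ (k + 1)), ?_⟩
  intro η hη h τ hh hb hlow hinv
  have hh' : ContDiff ℝ ((k + 1 : ℕ) : WithTop ℕ∞) h := by exact_mod_cast hh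
  obtain ⟨hτcd, hτd⟩ := aux_tau_smooth (k : ℕ∞) c₀ hc₀ h τ (by exact_mod_cast hh) hlow hinv
  have hτcd' : ContDiff ℝ ((k + 1 : ℕ) : WithTop ℕ∞) τ := by exact_mod_cast hτcd
  set lam : ℝ := max 1 η with hlam_def
  set M : ℕ → ℝ := fun j => η ^ (min j 1) * lam ^ (j - 1) with hM_def
  set F : ℝ → ℝ := fun x => (1 + deriv h x)⁻¹ with hF_def
  have hlam1 : (1 : ℝ) ≤ lam := le_max_left _ _
  have hηlam : η ≤ lam := le_max_right _ _
  have hlam0 : (0 : ℝ) < lam := by linarith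
  have hlamne : lam ≠ 0 := ne_of_gt hlam0
  have hM0 : M 0 = 1 := by simp [hM_def]
  have hMpos : ∀ j, 0 ≤ M j := fun j =>
    mul_nonneg (pow_nonneg hη _) (pow_nonneg (le_of_lt hlam0) _)
  have hMs : ∀ j : ℕ, M (j + 1) = η * lam ^ j := fun j => by
    simp [hM_def, Nat.min_eq_right (by omega : 1 ≤ j + 1)]
  have hηlam1 : η * lam⁻¹ ≤ 1 := by
    rw [← div_eq_mul_inv, div_le_one hlam0]; exact hηlam
  have hηlaminv0 : 0 ≤ η * lam⁻¹ := mul_nonneg hη (by positivity)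
  have hFbound : ∀ j ≤ k, ∀ x : ℝ, |iteratedDeriv j F x| ≤
      B ^ (2 * j + 1) * (η ^ (min j 1) * lam ^ (j - 1)) :=
    aux_F_bound k hk c₀ hc₀ η hη h hh' hb hlow
  -- basic smoothness
  have hne : ∀ x : ℝ, 1 + deriv h x ≠ 0 := fun x => by
    have := hlow x; linarith
  have hd1 : ContDiff ℝ ((k : ℕ) : WithTop ℕ∞) (deriv h) := by
    have h2 : ContDiff ℝ (((k : ℕ) : WithTop ℕ∞) + 1) h := by exact_mod_cast hh
    exact (contDiff_succ_iff_deriv.1 h2).2.2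
  have hFcd : ContDiff ℝ ((k : ℕ) : WithTop ℕ∞) F := (contDiff_const.add hd1).inv hne
  have hτ'b : ∀ w : ℝ, |deriv τ w| ≤ c₀⁻¹ := by
    intro w
    rw [hτd w]
    have h1 : 0 < 1 + deriv h (τ w) := lt_of_lt_of_le hc₀ (hlow (τ w))
    rw [abs_of_pos (inv_pos.2 h1)]
    exact inv_anti₀ hc₀ (hlow (τ w))
  -- scaled functions
  set σ : ℝ → ℝ := fun y => lam * τ (lam⁻¹ * y) with hσ_def
  set Fl : ℝ → ℝ := fun t => F (lam⁻¹ * t) with hFl_def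
  have hσcd : ContDiff ℝ ((k + 1 : ℕ) : WithTop ℕ∞) σ :=
    contDiff_const.mul (hτcd'.comp (contDiff_const.mul contDiff_id))
  have hFlcd : ContDiff ℝ ((k : ℕ) : WithTop ℕ∞) Fl :=
    hFcd.comp (contDiff_const.mul contDiff_id)
  have hS1 : ∀ i : ℕ, i ≤ k + 1 → ∀ y : ℝ,
      iteratedDeriv i σ y = lam * ((lam⁻¹) ^ i * iteratedDeriv i τ (lam⁻¹ * y)) := by
    intro i hi y
    have hτi : ContDiff ℝ (i : ℕ) τ := hτcd'.of_le (by exact_mod_cast hi)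
    have hcomp := iteratedDeriv_comp_const_mul hτi lam⁻¹
    have hg : ContDiff ℝ (i : ℕ) (fun y => τ (lam⁻¹ * y)) :=
      hτi.comp (contDiff_const.mul contDiff_id)
    calc iteratedDeriv i σ y = lam * iteratedDeriv i (fun y => τ (lam⁻¹ * y)) y :=
          itd_const_mul hg lam y
      _ = lam * ((lam⁻¹) ^ i * iteratedDeriv i τ (lam⁻¹ * y)) := by
          rw [hcomp]
  have hFlS : ∀ i : ℕ, i ≤ k → ∀ t : ℝ,
      iteratedDeriv i Fl t = (lam⁻¹) ^ i * iteratedDeriv i F (lam⁻¹ * t) := by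
    intro i hi t
    have hFi : ContDiff ℝ (i : ℕ) F := hFcd.of_le (by exact_mod_cast hi)
    rw [hFl_def]
    rw [iteratedDeriv_comp_const_mul hFi lam⁻¹]
  have hFlb : ∀ i : ℕ, 1 ≤ i → i ≤ k → ∀ t : ℝ,
      |iteratedDeriv i Fl t| ≤ B ^ (2 * k + 1) * (η * lam⁻¹) := by
    intro i hi1 hik t
    rw [hFlS i hik t, abs_mul, abs_pow, abs_inv, abs_of_pos hlam0]
    obtain ⟨i', rfl⟩ : ∃ i', i = i' + 1 := ⟨i - 1, by omega⟩
    have hb1 := hFbound (i' + 1) hik (lam⁻¹ * t)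
    have hmin : min (i' + 1) 1 = 1 := Nat.min_eq_right (by omega)
    rw [hmin, pow_one] at hb1
    have e1 : (i' + 1) - 1 = i' := rfl
    rw [e1] at hb1
    calc (lam⁻¹) ^ (i' + 1) * |iteratedDeriv (i' + 1) F (lam⁻¹ * t)|
        ≤ (lam⁻¹) ^ (i' + 1) * (B ^ (2 * (i' + 1) + 1) * (η * lam ^ i')) :=
          mul_le_mul_of_nonneg_left hb1 (by positivity)
      _ = B ^ (2 * (i' + 1) + 1) * (η * lam⁻¹) * (lam * lam⁻¹) ^ i' := by
          rw [mul_pow]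
          ring
      _ = B ^ (2 * (i' + 1) + 1) * (η * lam⁻¹) := by
          rw [mul_inv_cancel₀ hlamne, one_pow, mul_one]
      _ ≤ B ^ (2 * k + 1) * (η * lam⁻¹) := by
          refine mul_le_mul_of_nonneg_right (pow_le_pow_right₀ hB1 (by omega)) ?_
          exact hηlaminv0
  have hσ' : deriv σ = fun y => Fl (σ y) := by
    funext y
    rw [show deriv σ y = iteratedDeriv 1 σ y from by rw [iteratedDeriv_one],
      hS1 1 (by omega) y, iteratedDeriv_one, pow_one]
    have e1 : lam * (lam⁻¹ * deriv τ (lam⁻¹ * y)) = deriv τ (lam⁻¹ * y) := by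
      field_simp
    rw [e1, hτd]
    rw [hFl_def, hσ_def, hF_def]
    simp only
    rw [inv_mul_cancel_left₀ hlamne]
  -- the main induction
  have main : ∀ l : ℕ, 1 ≤ l → l ≤ k + 1 → ∀ z : ℝ,
      |iteratedDeriv l τ z| ≤ A ^ ((k + 2) ^ l) * M (l - 1) := by
    intro l
    induction l using Nat.strong_induction_on with
    | _ l ih =>
      intro hl1 hlk z
      match l, hl1 with
      | 1, _ =>
        rw [iteratedDeriv_one]
        have : |deriv τ z| ≤ c₀⁻¹ := hτ'b z
        calc |deriv τ z| ≤ c₀⁻¹ := this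
          _ ≤ A := hAc
          _ ≤ A ^ ((k + 2) ^ 1) := le_self_pow₀ hA1 (by positivity)
          _ = A ^ ((k + 2) ^ 1) * M (1 - 1) := by rw [show (1:ℕ) - 1 = 0 from rfl, hM0, mul_one]
      | (n + 2), _ =>
        have hnnk : n + 1 ≤ k := by omega
        set x : ℝ := lam * z with hx_def
        set C : ℝ := B ^ (2 * k + 1) * (η * lam⁻¹) with hC_def
        set D : ℝ := A ^ ((k + 2) ^ (n + 1)) with hD_def
        have hD1 : (1 : ℝ) ≤ D := one_le_pow₀ hA1
        have hD0 : (0 : ℝ) ≤ D := by linarith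
        set gt : ℝ → ℝ := fun t => Fl t - Fl (σ x) with hgt_def
        have hgtcd : ContDiff ℝ ((k : ℕ) : WithTop ℕ∞) gt := hFlcd.sub contDiff_const
        have hσcdk : ContDiff ℝ ((k : ℕ) : WithTop ℕ∞) σ :=
          hσcd.of_le (by exact_mod_cast (by omega : k ≤ k + 1))
        -- derivative identities
        have key1 : iteratedDeriv (n + 2) τ z = lam ^ (n + 1) * iteratedDeriv (n + 2) σ x := by
          rw [hS1 (n + 2) (by omega) x]
          have e0 : lam⁻¹ * x = z := by rw [hx_def, inv_mul_cancel_left₀ hlamne]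
          rw [e0]
          have e1 : lam ^ (n + 1) * (lam * ((lam⁻¹) ^ (n + 2) * iteratedDeriv (n + 2) τ z))
              = (lam * lam⁻¹) ^ (n + 2) * iteratedDeriv (n + 2) τ z := by
            rw [mul_pow]
            ring
          rw [e1, mul_inv_cancel₀ hlamne, one_pow, one_mul]
        have key2 : iteratedDeriv (n + 2) σ x
            = iteratedDeriv (n + 1) (fun y => Fl (σ y)) x := by
          rw [iteratedDeriv_succ', hσ']
        have key3 : iteratedDeriv (n + 1) (fun y => Fl (σ y)) x
            = iteratedDeriv (n + 1) (gt ∘ σ) x := by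
          rw [iteratedDeriv_succ', iteratedDeriv_succ']
          congr 1
          funext y
          rw [show (gt ∘ σ) = fun y => Fl (σ y) - Fl (σ x) from rfl]
          exact (deriv_sub_const _).symm
        -- apply the composition bound
        have hC0 : 0 ≤ C := mul_nonneg (pow_nonneg hB0 _) hηlaminv0
        have hgtb : ∀ i : ℕ, i ≤ n + 1 → ‖iteratedFDeriv ℝ i gt (σ x)‖ ≤ C := by
          intro i hi
          match i, hi with
          | 0, _ =>
            rw [norm_iteratedFDeriv_eq_norm_iteratedDeriv, iteratedDeriv_zero]
            simp only [hgt_def, sub_self, norm_zero]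
            exact hC0
          | (i + 1), hi =>
            rw [norm_iteratedFDeriv_eq_norm_iteratedDeriv, Real.norm_eq_abs]
            have egt : iteratedDeriv (i + 1) gt (σ x) = iteratedDeriv (i + 1) Fl (σ x) := by
              rw [iteratedDeriv_succ', iteratedDeriv_succ']
              congr 1
              funext t
              rw [hgt_def]
              exact deriv_sub_const _
            rw [egt]
            exact hFlb (i + 1) (by omega) (by omega) (σ x)
        have hσb : ∀ i : ℕ, 1 ≤ i → i ≤ n + 1 → ‖iteratedFDeriv ℝ i σ x‖ ≤ D ^ i := by
          intro i hi1 hinn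
          rw [norm_iteratedFDeriv_eq_norm_iteratedDeriv, Real.norm_eq_abs]
          rw [hS1 i (by omega) x, abs_mul, abs_mul, abs_pow, abs_inv,
            abs_of_pos hlam0]
          match i, hi1, hinn with
          | 1, _, _ =>
            rw [pow_one]
            calc lam * (lam⁻¹ * |iteratedDeriv 1 τ (lam⁻¹ * x)|)
                = |iteratedDeriv 1 τ (lam⁻¹ * x)| := by field_simp
              _ ≤ c₀⁻¹ := by rw [iteratedDeriv_one]; exact hτ'b _
              _ ≤ A := hAc
              _ ≤ A ^ ((k + 2) ^ (n + 1)) := le_self_pow₀ hA1 (by positivity)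
              _ = D ^ 1 := by rw [pow_one]
          | (i + 2), _, hinn =>
            have hIH := ih (i + 2) (by omega) (by omega) (by omega : i + 2 ≤ k + 1) (lam⁻¹ * x)
            rw [show (i + 2) - 1 = i + 1 from rfl, hMs i] at hIH
            calc lam * ((lam⁻¹) ^ (i + 2) * |iteratedDeriv (i + 2) τ (lam⁻¹ * x)|)
                ≤ lam * ((lam⁻¹) ^ (i + 2) * (A ^ ((k + 2) ^ (i + 2)) * (η * lam ^ i))) := by
                  refine mul_le_mul_of_nonneg_left
                    (mul_le_mul_of_nonneg_left hIH (by positivity)) (le_of_lt hlam0)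
              _ = A ^ ((k + 2) ^ (i + 2)) * (η * lam⁻¹) * (lam * lam⁻¹) ^ (i + 1) := by
                  rw [mul_pow]
                  ring
              _ = A ^ ((k + 2) ^ (i + 2)) * (η * lam⁻¹) := by
                  rw [mul_inv_cancel₀ hlamne, one_pow, mul_one]
              _ ≤ A ^ ((k + 2) ^ (i + 2)) * 1 :=
                  mul_le_mul_of_nonneg_left hηlam1 (pow_nonneg hA0 _)
              _ = A ^ ((k + 2) ^ (i + 2)) := mul_one _
              _ ≤ D := pow_le_pow_right₀ hA1 (Nat.pow_le_pow_right (by omega) (by omega))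
              _ ≤ D ^ (i + 2) := le_self_pow₀ hD1 (by omega)
        have hncast : ((n + 1 : ℕ) : WithTop ℕ∞) ≤ ((k : ℕ) : WithTop ℕ∞) := by
          exact_mod_cast hnnk
        have comp := norm_iteratedFDeriv_comp_le hgtcd hσcdk hncast x hgtb hσb
        have comp' : |iteratedDeriv (n + 1) (gt ∘ σ) x| ≤ ((n + 1).factorial : ℝ) * C * D ^ (n + 1) := by
          rw [← Real.norm_eq_abs, ← norm_iteratedFDeriv_eq_norm_iteratedDeriv]
          exact comp
        have goalb : |iteratedDeriv (n + 2) τ z|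
            ≤ lam ^ (n + 1) * (((n + 1).factorial : ℝ) * C * D ^ (n + 1)) := by
          rw [key1, abs_mul, abs_pow, abs_of_pos hlam0, key2, key3]
          exact mul_le_mul_of_nonneg_left comp' (pow_nonneg (le_of_lt hlam0) _)
        refine le_trans goalb ?_
        have harith : lam ^ (n + 1) * (((n + 1).factorial : ℝ) * C * D ^ (n + 1))
            = (((n + 1).factorial : ℝ) * B ^ (2 * k + 1)) * D ^ (n + 1)
              * (η * (lam ^ n * (lam * lam⁻¹))) := by
          rw [hC_def]
          ring
        rw [harith, mul_inv_cancel₀ hlamne, mul_one]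
        have hfA : (((n + 1).factorial : ℝ) * B ^ (2 * k + 1)) ≤ A := by
          refine le_trans ?_ hAf
          refine mul_le_mul_of_nonneg_right ?_ (pow_nonneg hB0 _)
          exact_mod_cast Nat.factorial_le (by omega : n + 1 ≤ k + 1)
        calc (((n + 1).factorial : ℝ) * B ^ (2 * k + 1)) * D ^ (n + 1) * (η * lam ^ n)
            ≤ A * D ^ (n + 1) * (η * lam ^ n) := by
              refine mul_le_mul_of_nonneg_right
                (mul_le_mul_of_nonneg_right hfA (pow_nonneg hD0 _)) ?_
              exact mul_nonneg hη (pow_nonneg (le_of_lt hlam0) _)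
          _ = A ^ ((k + 2) ^ (n + 1) * (n + 1) + 1) * (η * lam ^ n) := by
              rw [hD_def, ← pow_mul, ← pow_succ']
          _ ≤ A ^ ((k + 2) ^ (n + 2)) * (η * lam ^ n) := by
              refine mul_le_mul_of_nonneg_right (pow_le_pow_right₀ hA1 ?_)
                (mul_nonneg hη (pow_nonneg (le_of_lt hlam0) _))
              have h1 : 1 ≤ (k + 2) ^ (n + 1) := Nat.one_le_pow _ _ (by omega)
              have h2 := Nat.mul_le_mul_left ((k + 2) ^ (n + 1)) (show n + 1 ≤ k + 1 by omega)
              calc (k + 2) ^ (n + 1) * (n + 1) + 1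
                  ≤ (k + 2) ^ (n + 1) * (k + 1) + (k + 2) ^ (n + 1) := by omega
                _ = (k + 2) ^ (n + 1) * (k + 2) := by ring
                _ = (k + 2) ^ (n + 2) := by rw [← pow_succ]
          _ = A ^ ((k + 2) ^ (n + 2)) * M ((n + 2) - 1) := by
              rw [show (n + 2) - 1 = n + 1 from rfl, hMs n]
  -- conclude
  intro l hl1 hlk y
  have hMle : M (l - 1) ≤ η + η ^ (l - 1) := by
    obtain ⟨j, hj⟩ : ∃ j, l - 1 = j := ⟨l - 1, rfl⟩
    rw [hj]
    match j with
    | 0 => rw [hM0, pow_zero]; linarith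
    | (j + 1) =>
      rw [hMs j]
      rcases le_total η 1 with h1 | h1
      · have : lam = 1 := max_eq_left h1
        rw [this, one_pow, mul_one]
        have : (0:ℝ) ≤ η ^ (j + 1) := pow_nonneg hη _
        linarith
      · have : lam = η := max_eq_right h1
        rw [this, ← pow_succ']
        have : (0:ℝ) ≤ η := hη
        linarith
  have hmain := main l hl1 hlk y
  calc |iteratedDeriv l τ y| ≤ A ^ ((k + 2) ^ l) * M (l - 1) := hmain
    _ ≤ A ^ ((k + 2) ^ (k + 1)) * (η + η ^ (l - 1)) := by
        refine mul_le_mul ?_ hMle (hMpos _) (by positivity)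
        exact pow_le_pow_right₀ hA1 (Nat.pow_le_pow_right (by omega) hlk)
end

section
/- Let k ≥ 1 be an integer, let c₀ > 0 and η ≥ 0 be constants, and let h : ℝ → ℝ be of class C^{k+1} with |h^{(l)}(y)| ≤ η for all y and all l ∈ {0,…,k+1}, and with 1 + h'(y) ≥ c₀ for all y. Let τ be the inverse of y ↦ y + h(y). Then there exist a constant K depending only on k and c₀, and functions α_{l,r} : ℝ → ℝ for 0 ≤ r ≤ l ≤ k, such that: (a) for every l ∈ {0,…,k}, every φ ∈ C^l(ℝ) and every y ∈ ℝ, the l-th derivative of y ↦ φ(τ(y))τ'(y) equals φ^{(l)}(τ(y)) + Σ_{r=0}^{l} α_{l,r}(y) φ^{(r)}(τ(y)); and (b) for every l ∈ {0,…,k} and every y, (1 + 1/τ'(y)) Σ_{r=0}^{l} |α_{l,r}(y)| ≤ K(1 + η)(η + η^k). -/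
open Filter Finset

namespace Stmt3Aux

variable {η : ℝ}

lemma pow_le_E (hη : 0 ≤ η) {a b : ℕ} (h1 : 1 ≤ a) (hab : a ≤ b) : η^a ≤ η + η^b := by
  rcases le_total η 1 with hle | hge
  · have : η^a ≤ η^1 := pow_le_pow_of_le_one hη hle h1
    have hb := pow_nonneg hη b
    simp only [pow_one] at this; linarith
  · have : η^a ≤ η^b := pow_le_pow_right₀ hge hab
    linarith

lemma E_nonneg (hη : 0 ≤ η) (a : ℕ) : 0 ≤ η + η^a :=
  add_nonneg hη (pow_nonneg hη a)

lemma E_mono (hη : 0 ≤ η) {a b : ℕ} (h1 : 1 ≤ a) (hab : a ≤ b) : η + η^a ≤ 2*(η + η^b) := by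
  have := pow_le_E hη h1 hab
  have hb := pow_nonneg hη b
  linarith

lemma E_mul (hη : 0 ≤ η) {a b : ℕ} (ha : 1 ≤ a) (hb : 1 ≤ b) :
    (η + η^a) * (η + η^b) ≤ 4*(η + η^(a+b)) := by
  have e1 : η^2 ≤ η + η^(a+b) := pow_le_E hη (by omega) (by omega)
  have e2 : η^(1+b) ≤ η + η^(a+b) := pow_le_E hη (by omega) (by omega)
  have e3 : η^(a+1) ≤ η + η^(a+b) := pow_le_E hη (by omega) (by omega)
  have e4 : η^(a+b) ≤ η + η^(a+b) := le_add_of_nonneg_left hη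
  have expand : (η + η^a) * (η + η^b) = η^2 + η^(1+b) + η^(a+1) + η^(a+b) := by ring
  rw [expand]; linarith

lemma abs_itd_mul_le {n : ℕ} {f g : ℝ → ℝ} (hf : ContDiff ℝ n f) (hg : ContDiff ℝ n g) (x : ℝ) :
    |iteratedDeriv n (fun y => f y * g y) x| ≤
      ∑ i ∈ Finset.range (n + 1),
        (n.choose i : ℝ) * |iteratedDeriv i f x| * |iteratedDeriv (n-i) g x| := by
  have := norm_iteratedFDeriv_mul_le (𝕜 := ℝ) hf hg x (le_refl (n : WithTop ℕ∞))
  simp only [norm_iteratedFDeriv_eq_norm_iteratedDeriv, Real.norm_eq_abs] at this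
  exact this

/-- product of a "vanishing, degree `j+s`" function and a "bounded, degree `j`" function -/
lemma vb_mul {C C' : ℝ} {u v : ℝ → ℝ} {s n : ℕ} (hη : 0 ≤ η) (hC : 0 ≤ C) (hC' : 0 ≤ C')
    (hu : ∀ j ≤ n, ∀ y, |iteratedDeriv j u y| ≤ C*(η+η^(max (j+s) 1)))
    (hv0 : ∀ y, |v y| ≤ C')
    (hv : ∀ j, 1 ≤ j → j ≤ n → ∀ y, |iteratedDeriv j v y| ≤ C'*(η+η^j))
    (hcu : ContDiff ℝ (n : ℕ) u) (hcv : ContDiff ℝ (n : ℕ) v) :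
    ∀ j ≤ n, ∀ y, |iteratedDeriv j (fun z => u z * v z) y| ≤
      ((2:ℝ)^n*8*C*C')*(η+η^(max (j+s+1) 1)) := by
  intro j hj y
  have hcu' : ContDiff ℝ (j : ℕ) u := hcu.of_le (by exact_mod_cast hj)
  have hcv' : ContDiff ℝ (j : ℕ) v := hcv.of_le (by exact_mod_cast hj)
  refine (abs_itd_mul_le hcu' hcv' y).trans ?_
  have key : ∀ i ∈ Finset.range (j+1),
      (j.choose i : ℝ) * |iteratedDeriv i u y| * |iteratedDeriv (j-i) v y| ≤
      (j.choose i : ℝ) * (8*C*C'*(η+η^(max (j+s+1) 1))) := by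
    intro i hi
    rw [Finset.mem_range] at hi
    have hij : i ≤ j := by omega
    have hchoose : (0:ℝ) ≤ (j.choose i : ℝ) := by positivity
    have hui := hu i (le_trans hij hj) y
    rcases Nat.eq_zero_or_pos (j - i) with hji | hji
    · -- i = j
      have hij' : i = j := by omega
      rw [hji, iteratedDeriv_zero]
      have : |iteratedDeriv i u y| * |v y| ≤ (C*(η+η^(max (i+s) 1))) * C' :=
        mul_le_mul hui (hv0 y) (abs_nonneg _) (by positivity)
      have h2 : (C*(η+η^(max (i+s) 1))) * C' ≤ C*C'*(2*(η+η^(max (j+s+1) 1))) := by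
        have := E_mono hη (a := max (i+s) 1) (b := max (j+s+1) 1) (le_max_right _ _)
          (by subst hij'; omega)
        calc (C*(η+η^(max (i+s) 1))) * C' = C*C'*(η+η^(max (i+s) 1)) := by ring
        _ ≤ C*C'*(2*(η+η^(max (j+s+1) 1))) := by
            apply mul_le_mul_of_nonneg_left this (by positivity)
      rw [mul_assoc]
      apply mul_le_mul_of_nonneg_left _ hchoose
      refine (this.trans h2).trans ?_
      have hE := E_nonneg hη (max (j+s+1) 1)
      have : C*C' ≥ 0 := mul_nonneg hC hC'
      nlinarith [mul_nonneg this hE]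
    · -- j - i ≥ 1
      have hvji := hv (j-i) hji (by omega) y
      have hprod : |iteratedDeriv i u y| * |iteratedDeriv (j-i) v y| ≤
          (C*(η+η^(max (i+s) 1))) * (C'*(η+η^(j-i))) :=
        mul_le_mul hui hvji (abs_nonneg _) (by positivity)
      have hEmul : (η+η^(max (i+s) 1)) * (η+η^(j-i)) ≤ 4*(η+η^(max (i+s) 1 + (j-i))) :=
        E_mul hη (le_max_right _ _) hji
      have hexp : max (i+s) 1 + (j-i) ≤ max (j+s+1) 1 := by omega
      have hEm : η+η^(max (i+s) 1 + (j-i)) ≤ 2*(η+η^(max (j+s+1) 1)) :=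
        E_mono hη (by omega) hexp
      rw [mul_assoc]
      apply mul_le_mul_of_nonneg_left _ hchoose
      have hE1 := E_nonneg hη (max (i+s) 1)
      have hE2 := E_nonneg hη (j-i)
      have hE3 := E_nonneg hη (max (i+s) 1 + (j-i))
      have hE4 := E_nonneg hη (max (j+s+1) 1)
      refine hprod.trans ?_
      calc C * (η + η ^ ((i+s) ⊔ 1)) * (C' * (η + η ^ (j - i)))
          = (C*C') * ((η + η ^ ((i+s) ⊔ 1)) * (η + η ^ (j - i))) := by ring
        _ ≤ (C*C') * (4*(η+η^(max (i+s) 1 + (j-i)))) :=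
            mul_le_mul_of_nonneg_left hEmul (mul_nonneg hC hC')
        _ ≤ (C*C') * (4*(2*(η+η^(max (j+s+1) 1)))) := by
            apply mul_le_mul_of_nonneg_left _ (mul_nonneg hC hC')
            linarith
        _ = 8 * C * C' * (η + η ^ ((j+s+1) ⊔ 1)) := by ring
  refine (Finset.sum_le_sum key).trans ?_
  rw [← Finset.sum_mul]
  have hsum : ∑ i ∈ Finset.range (j+1), (j.choose i : ℝ) = 2^j := by
    exact_mod_cast Nat.sum_range_choose j
  rw [hsum]
  have h2j : (2:ℝ)^j ≤ 2^n := pow_le_pow_right₀ one_le_two hj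
  have hE := E_nonneg hη (max (j+s+1) 1)
  calc (2:ℝ)^j * (8*C*C'*(η+η^(max (j+s+1) 1)))
      ≤ (2:ℝ)^n * (8*C*C'*(η+η^(max (j+s+1) 1))) :=
        mul_le_mul_of_nonneg_right h2j (by positivity)
    _ = 2^n*8*C*C'*(η+η^(max (j+s+1) 1)) := by ring

/-- product of two "bounded with degree-j derivatives" functions -/
lemma b_mul {C C' : ℝ} {u v : ℝ → ℝ} {n : ℕ} (hη : 0 ≤ η) (hC : 0 ≤ C) (hC' : 0 ≤ C')
    (hu0 : ∀ y, |u y| ≤ C)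
    (hu : ∀ j, 1 ≤ j → j ≤ n → ∀ y, |iteratedDeriv j u y| ≤ C*(η+η^j))
    (hv0 : ∀ y, |v y| ≤ C')
    (hv : ∀ j, 1 ≤ j → j ≤ n → ∀ y, |iteratedDeriv j v y| ≤ C'*(η+η^j))
    (hcu : ContDiff ℝ (n : ℕ) u) (hcv : ContDiff ℝ (n : ℕ) v) :
    (∀ y, |u y * v y| ≤ (2:ℝ)^n*4*C*C') ∧
    (∀ j, 1 ≤ j → j ≤ n → ∀ y, |iteratedDeriv j (fun z => u z * v z) y| ≤
      ((2:ℝ)^n*4*C*C')*(η+η^j)) := by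
  constructor
  · intro y
    have h1 : |u y * v y| ≤ C * C' := by
      rw [abs_mul]
      exact mul_le_mul (hu0 y) (hv0 y) (abs_nonneg _) hC
    refine h1.trans ?_
    have h2 : (1:ℝ) ≤ 2^n*4 := by
      have : (1:ℝ) ≤ 2^n := one_le_pow₀ one_le_two
      nlinarith
    nlinarith [mul_nonneg hC hC']
  · intro j hj1 hjn y
    have hcu' : ContDiff ℝ (j : ℕ) u := hcu.of_le (by exact_mod_cast hjn)
    have hcv' : ContDiff ℝ (j : ℕ) v := hcv.of_le (by exact_mod_cast hjn)
    refine (abs_itd_mul_le hcu' hcv' y).trans ?_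
    have hEj := E_nonneg hη j
    have key : ∀ i ∈ Finset.range (j+1),
        (j.choose i : ℝ) * |iteratedDeriv i u y| * |iteratedDeriv (j-i) v y| ≤
        (j.choose i : ℝ) * (4*C*C'*(η+η^j)) := by
      intro i hi
      rw [Finset.mem_range] at hi
      have hij : i ≤ j := by omega
      have hchoose : (0:ℝ) ≤ (j.choose i : ℝ) := by positivity
      rw [mul_assoc]
      apply mul_le_mul_of_nonneg_left _ hchoose
      rcases Nat.eq_zero_or_pos i with hi0 | hi0
      · subst hi0
        rw [iteratedDeriv_zero]
        have hji : j - 0 = j := by omega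
        rw [hji]
        calc |u y| * |iteratedDeriv j v y| ≤ C * (C'*(η+η^j)) :=
              mul_le_mul (hu0 y) (hv j hj1 hjn y) (abs_nonneg _) hC
          _ ≤ 4*C*C'*(η+η^j) := by nlinarith [mul_nonneg (mul_nonneg hC hC') hEj]
      · rcases Nat.eq_zero_or_pos (j-i) with hji0 | hji0
        · have hij' : i = j := by omega
          subst hij'
          rw [hji0, iteratedDeriv_zero]
          calc |iteratedDeriv i u y| * |v y| ≤ (C*(η+η^i)) * C' :=
                mul_le_mul (hu i hi0 (le_trans hij hjn) y) (hv0 y) (abs_nonneg _) (by positivity)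
            _ ≤ 4*C*C'*(η+η^i) := by
                have hEi := E_nonneg hη i
                nlinarith [mul_nonneg (mul_nonneg hC hC') hEi]
        · have h1 := hu i hi0 (le_trans hij hjn) y
          have h2 := hv (j-i) hji0 (by omega) y
          have hEmul : (η+η^i) * (η+η^(j-i)) ≤ 4*(η+η^(i+(j-i))) := E_mul hη hi0 hji0
          have hii : i + (j-i) = j := by omega
          rw [hii] at hEmul
          calc |iteratedDeriv i u y| * |iteratedDeriv (j-i) v y|
              ≤ (C*(η+η^i)) * (C'*(η+η^(j-i))) :=
                mul_le_mul h1 h2 (abs_nonneg _) (by positivity)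
            _ = (C*C') * ((η+η^i)*(η+η^(j-i))) := by ring
            _ ≤ (C*C') * (4*(η+η^j)) :=
                mul_le_mul_of_nonneg_left hEmul (mul_nonneg hC hC')
            _ = 4*C*C'*(η+η^j) := by ring
    refine (Finset.sum_le_sum key).trans ?_
    rw [← Finset.sum_mul]
    have hsum : ∑ i ∈ Finset.range (j+1), (j.choose i : ℝ) = 2^j := by
      exact_mod_cast Nat.sum_range_choose j
    rw [hsum]
    calc (2:ℝ)^j * (4*C*C'*(η+η^j))
        ≤ (2:ℝ)^n * (4*C*C'*(η+η^j)) :=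
          mul_le_mul_of_nonneg_right (pow_le_pow_right₀ one_le_two hjn) (by positivity)
      _ = 2^n*4*C*C'*(η+η^j) := by ring



-- global iteratedDeriv_add
lemma itd_add {n : ℕ} {f g : ℝ → ℝ} (hf : ContDiff ℝ n f) (hg : ContDiff ℝ n g) (x : ℝ) :
    iteratedDeriv n (fun y => f y + g y) x = iteratedDeriv n f x + iteratedDeriv n g x := by
  have := iteratedDerivWithin_fun_add (𝕜 := ℝ) (f := f) (g := g) (s := Set.univ) (x := x)
    (Set.mem_univ x) uniqueDiffOn_univ hf.contDiffWithinAt hg.contDiffWithinAt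
  simpa [iteratedDerivWithin_univ] using this

lemma itd_const : ∀ (n : ℕ), 1 ≤ n → ∀ (c x : ℝ), iteratedDeriv n (fun _ : ℝ => c) x = 0
  | 0, hn => by omega
  | (m+1), _ => by
    intro c x
    rw [iteratedDeriv_succ']
    have hd : deriv (fun _ : ℝ => c) = fun _ : ℝ => (0:ℝ) := funext fun z => deriv_const z c
    rw [hd]
    rcases Nat.eq_zero_or_pos m with hm|hm
    · subst hm; simp
    · exact itd_const m hm 0 x

-- f - const
lemma itd_sub_const {n : ℕ} {f : ℝ → ℝ} (hf : ContDiff ℝ n f) (c : ℝ) (hn : 1 ≤ n) (x : ℝ) :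
    iteratedDeriv n (fun y => f y - c) x = iteratedDeriv n f x := by
  have : (fun y => f y - c) = fun y => f y + (-c) := by funext y; ring
  rw [this, itd_add hf contDiff_const x]
  rw [itd_const n hn (-c) x]
  ring

structure Hyp (k : ℕ) (c₀ η : ℝ) (h τ : ℝ → ℝ) : Prop where
  hk : 1 ≤ k
  hc₀ : 0 < c₀
  hη : 0 ≤ η
  hch : ContDiff ℝ (k+1 : ℕ) h
  hbd : ∀ l ≤ k+1, ∀ y : ℝ, |iteratedDeriv l h y| ≤ η
  hlow : ∀ y : ℝ, c₀ ≤ 1 + deriv h y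
  hinv : ∀ y : ℝ, τ y + h (τ y) = y

variable {k : ℕ} {c₀ η : ℝ} {h τ : ℝ → ℝ}

lemma Hyp.hdiff (H : Hyp k c₀ η h τ) : Differentiable ℝ h :=
  H.hch.differentiable (by simp)

lemma Hyp.dpos (H : Hyp k c₀ η h τ) (x : ℝ) : 0 < 1 + deriv h x :=
  lt_of_lt_of_le H.hc₀ (H.hlow x)

lemma Hyp.hasDerivAt_G (H : Hyp k c₀ η h τ) (x : ℝ) :
    HasDerivAt (fun y => y + h y) (1 + deriv h x) x :=
  (hasDerivAt_id x).add (H.hdiff x).hasDerivAt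

lemma Hyp.G_inj (H : Hyp k c₀ η h τ) : Function.Injective (fun y => y + h y) := by
  apply StrictMono.injective
  apply strictMono_of_deriv_pos
  intro x
  rw [(H.hasDerivAt_G x).deriv]
  exact H.dpos x

lemma Hyp.τ_G (H : Hyp k c₀ η h τ) (x : ℝ) : τ (x + h x) = x := by
  apply H.G_inj
  show τ (x + h x) + h (τ (x + h x)) = x + h x
  exact H.hinv (x + h x)

lemma Hyp.cdG (H : Hyp k c₀ η h τ) : ContDiff ℝ (k+1 : ℕ) (fun y => y + h y) :=
  contDiff_id.add H.hch

lemma Hyp.hasStrictDerivAt_G (H : Hyp k c₀ η h τ) (x : ℝ) :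
    HasStrictDerivAt (fun y => y + h y) (1 + deriv h x) x := by
  have h1 : (1 : WithTop ℕ∞) ≤ (k+1 : ℕ) := by exact_mod_cast Nat.one_le_iff_ne_zero.2 (Nat.succ_ne_zero k)
  have := H.cdG.hasStrictDerivAt (x := x) (by simp)
  rwa [(H.hasDerivAt_G x).deriv] at this

lemma Hyp.hasStrictDerivAt_τ (H : Hyp k c₀ η h τ) (y : ℝ) :
    HasStrictDerivAt τ (1 + deriv h (τ y))⁻¹ y := by
  have hne : 1 + deriv h (τ y) ≠ 0 := (H.dpos (τ y)).ne'
  have := (H.hasStrictDerivAt_G (τ y)).to_local_left_inverse hne (g := τ)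
    (Eventually.of_forall fun x => H.τ_G x)
  rwa [H.hinv y] at this

lemma Hyp.deriv_τ (H : Hyp k c₀ η h τ) (y : ℝ) :
    deriv τ y = (1 + deriv h (τ y))⁻¹ :=
  (H.hasStrictDerivAt_τ y).hasDerivAt.deriv

lemma Hyp.deriv_τ_pos (H : Hyp k c₀ η h τ) (y : ℝ) : 0 < deriv τ y := by
  rw [H.deriv_τ y]; exact inv_pos.2 (H.dpos (τ y))

lemma Hyp.abs_deriv_h_le (H : Hyp k c₀ η h τ) (x : ℝ) : |deriv h x| ≤ η := by
  have := H.hbd 1 (by omega) x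
  rwa [iteratedDeriv_one] at this

lemma Hyp.deriv_τ_le (H : Hyp k c₀ η h τ) (y : ℝ) : deriv τ y ≤ c₀⁻¹ := by
  rw [H.deriv_τ y]
  exact (inv_anti₀ H.hc₀ (H.hlow (τ y)))

lemma Hyp.abs_deriv_τ_sub_one (H : Hyp k c₀ η h τ) (y : ℝ) :
    |deriv τ y - 1| ≤ c₀⁻¹ * η := by
  have hd := H.dpos (τ y)
  rw [H.deriv_τ y]
  have : (1 + deriv h (τ y))⁻¹ - 1 = -(deriv h (τ y)) * (1 + deriv h (τ y))⁻¹ := by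
    field_simp
    ring
  rw [this, abs_mul, abs_neg, mul_comm]
  have h1 : |(1 + deriv h (τ y))⁻¹| ≤ c₀⁻¹ := by
    rw [abs_of_pos (inv_pos.2 hd)]
    exact inv_anti₀ H.hc₀ (H.hlow (τ y))
  exact mul_le_mul h1 (H.abs_deriv_h_le (τ y)) (abs_nonneg _) (inv_nonneg.2 H.hc₀.le)

lemma Hyp.one_div_deriv_τ (H : Hyp k c₀ η h τ) (y : ℝ) :
    1 / deriv τ y = 1 + deriv h (τ y) := by
  rw [H.deriv_τ y, one_div, inv_inv]


lemma Hyp.cdτ (H : Hyp k c₀ η h τ) : ContDiff ℝ (k+1 : ℕ) τ := by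
  rw [contDiff_iff_contDiffAt]
  intro y
  have hn : ((k+1 : ℕ) : WithTop ℕ∞) ≠ 0 := by
    simp
  set x := τ y with hx
  have hGx : ContDiffAt ℝ (k+1 : ℕ) (fun y => y + h y) x := H.cdG.contDiffAt
  have hf' : HasFDerivAt (fun y => y + h y)
      (ContinuousLinearEquiv.unitsEquivAut ℝ (Units.mk0 _ (H.dpos x).ne') : ℝ →L[ℝ] ℝ) x :=
    (H.hasDerivAt_G x).hasFDerivAt_equiv (H.dpos x).ne'
  have hLI : ContDiffAt ℝ (k+1 : ℕ) (hGx.localInverse hf' hn) ((fun y => y + h y) x) :=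
    hGx.to_localInverse hf' hn
  have huniq := (hGx.hasStrictFDerivAt' hf' hn).localInverse_unique
      (g := τ) (Eventually.of_forall fun x' => H.τ_G x')
  have hGxy : (fun y => y + h y) x = y := H.hinv y
  rw [hGxy] at hLI
  rw [show x + h x = y from H.hinv y] at huniq
  exact hLI.congr_of_eventuallyEq huniq

lemma Hyp.cd_itdh (H : Hyp k c₀ η h τ) {m : ℕ} (hm : m ≤ k+1) :
    ContDiff ℝ ((k+1-m : ℕ)) (iteratedDeriv m h) := by
  rw [iteratedDeriv_eq_iterate]
  apply ContDiff.iterate_deriv'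
  have : (k+1-m) + m = k+1 := by omega
  rw [this]
  exact H.hch

lemma Hyp.cd_τ' (H : Hyp k c₀ η h τ) : ContDiff ℝ (k : ℕ) (deriv τ) := by
  have := H.cdτ
  have hcast : ((k+1 : ℕ) : WithTop ℕ∞) = (k : ℕ) + 1 := by push_cast; ring
  rw [hcast] at this
  exact (contDiff_succ_iff_deriv.mp this).2.2

lemma Hyp.cd_Hc (H : Hyp k c₀ η h τ) {m : ℕ} (hm : m ≤ k+1) :
    ContDiff ℝ ((k+1-m : ℕ)) (fun y => iteratedDeriv m h (τ y)) :=
  (H.cd_itdh hm).comp (H.cdτ.of_le (by exact_mod_cast Nat.sub_le (k+1) m))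

lemma Hyp.hasDerivAt_itdh (H : Hyp k c₀ η h τ) {m : ℕ} (hm : m + 1 ≤ k+1) (x : ℝ) :
    HasDerivAt (iteratedDeriv m h) (iteratedDeriv (m+1) h x) x := by
  have hd : DifferentiableAt ℝ (iteratedDeriv m h) x := by
    have := H.cd_itdh (by omega : m ≤ k+1)
    have h1 : ((k+1-m : ℕ) : WithTop ℕ∞) ≠ 0 := by
      exact_mod_cast (by omega : k+1-m ≠ 0)
    exact (this.differentiable h1).differentiableAt
  have := hd.hasDerivAt
  rwa [show deriv (iteratedDeriv m h) x = iteratedDeriv (m+1) h x by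
    rw [iteratedDeriv_succ]] at this

lemma Hyp.hasDerivAt_Hc (H : Hyp k c₀ η h τ) {m : ℕ} (hm : m + 1 ≤ k+1) (y : ℝ) :
    HasDerivAt (fun z => iteratedDeriv m h (τ z))
      (iteratedDeriv (m+1) h (τ y) * deriv τ y) y := by
  have hτd : HasDerivAt τ (deriv τ y) y := by
    have := (H.hasStrictDerivAt_τ y).hasDerivAt
    rwa [← H.deriv_τ y] at this
  exact (H.hasDerivAt_itdh hm (τ y)).comp y hτd

lemma Hyp.deriv_Hc (H : Hyp k c₀ η h τ) {m : ℕ} (hm : m + 1 ≤ k+1) :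
    deriv (fun z => iteratedDeriv m h (τ z)) =
      fun y => iteratedDeriv (m+1) h (τ y) * deriv τ y := by
  funext y
  exact (H.hasDerivAt_Hc hm y).deriv

lemma Hyp.hasDerivAt_τ' (H : Hyp k c₀ η h τ) (y : ℝ) :
    HasDerivAt (deriv τ) (-(iteratedDeriv 2 h (τ y)) * (deriv τ y)^3) y := by
  have hτfun : deriv τ = fun z => (1 + iteratedDeriv 1 h (τ z))⁻¹ := by
    funext z
    rw [H.deriv_τ z, iteratedDeriv_one]
  rw [hτfun]
  have h1 : HasDerivAt (fun z => iteratedDeriv 1 h (τ z))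
      (iteratedDeriv 2 h (τ y) * deriv τ y) y :=
    H.hasDerivAt_Hc (by have := H.hk; omega) y
  have h2 : HasDerivAt (fun z => 1 + iteratedDeriv 1 h (τ z))
      (iteratedDeriv 2 h (τ y) * deriv τ y) y := by
    simpa using (hasDerivAt_const y (1:ℝ)).fun_add h1
  have hne : 1 + iteratedDeriv 1 h (τ y) ≠ 0 := by
    rw [iteratedDeriv_one]; exact (H.dpos (τ y)).ne'
  have := h2.fun_inv hne
  refine this.congr_deriv ?_
  symm
  rw [H.deriv_τ y, iteratedDeriv_one]
  have hd := H.dpos (τ y)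
  have hne' : 1 + deriv h (τ y) ≠ 0 := hd.ne'
  field_simp

lemma Hyp.deriv_τ'_eq (H : Hyp k c₀ η h τ) :
    deriv (deriv τ) = fun y => -(iteratedDeriv 2 h (τ y)) * (deriv τ y)^3 := by
  funext y
  exact (H.hasDerivAt_τ' y).deriv

lemma Hyp.abs_Hc (H : Hyp k c₀ η h τ) {m : ℕ} (hm : m ≤ k+1) (y : ℝ) :
    |iteratedDeriv m h (τ y)| ≤ η := H.hbd m hm (τ y)

lemma Hyp.abs_τ' (H : Hyp k c₀ η h τ) (y : ℝ) : |deriv τ y| ≤ c₀⁻¹ := by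
  rw [abs_of_pos (H.deriv_τ_pos y)]
  exact H.deriv_τ_le y

lemma master (k : ℕ) (c₀ : ℝ) (hk : 1 ≤ k) (hc₀ : 0 < c₀) (n : ℕ) :
    ∃ C : ℝ, 0 < C ∧ ∀ {η : ℝ} {h τ : ℝ → ℝ}, Hyp k c₀ η h τ →
      (∀ j, j ≤ n → ∀ m, 1 ≤ m → m + j ≤ k+1 → ∀ y,
        |iteratedDeriv j (fun z => iteratedDeriv m h (τ z)) y| ≤ C * (η + η^(max j 1))) ∧
      (∀ j, j ≤ n → 1 ≤ j → j ≤ k → ∀ y,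
        |iteratedDeriv (j+1) τ y| ≤ C * (η + η^j)) := by
  induction n with
  | zero =>
    refine ⟨1, one_pos, fun {η h τ} H => ⟨?_, ?_⟩⟩
    · intro j hj m hm hmj y
      have hj0 : j = 0 := by omega
      subst hj0
      rw [iteratedDeriv_zero]
      have := H.abs_Hc (by omega : m ≤ k+1) y
      have h2 : η ≤ 1 * (η + η^(max 0 1)) := by
        have := H.hη
        norm_num
        linarith
      exact this.trans h2
    · intro j hj h1j; omega
  | succ n IH =>
    obtain ⟨C, hCpos, hIH⟩ := IH
    set B : ℝ := max c₀⁻¹ C with hB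
    have hBpos : 0 < B := lt_of_lt_of_le (inv_pos.2 hc₀) (le_max_left _ _)
    set C2 : ℝ := (2:ℝ)^n*4*B*B with hC2
    set C3 : ℝ := (2:ℝ)^n*4*B*C2 with hC3
    set D1 : ℝ := (2:ℝ)^n*8*C*B with hD1
    set D2 : ℝ := (2:ℝ)^n*8*C*C3 with hD2
    have hC2pos : 0 < C2 := by positivity
    have hC3pos : 0 < C3 := by positivity
    have hD1pos : 0 < D1 := by positivity
    have hD2pos : 0 < D2 := by positivity
    refine ⟨max C (max D1 D2), by positivity, fun {η h τ} H => ?_⟩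
    obtain ⟨ihH, ihT⟩ := hIH H
    have hη := H.hη
    have hCle : C ≤ max C (max D1 D2) := le_max_left _ _
    have hD1le : D1 ≤ max C (max D1 D2) := le_trans (le_max_left _ _) (le_max_right _ _)
    have hD2le : D2 ≤ max C (max D1 D2) := le_trans (le_max_right _ _) (le_max_right _ _)
    have hv0 : ∀ y, |deriv τ y| ≤ B := fun y => (H.abs_τ' y).trans (le_max_left _ _)
    have hvIH : n ≤ k → ∀ j, 1 ≤ j → j ≤ n → ∀ y,
        |iteratedDeriv j (deriv τ) y| ≤ B*(η+η^j) := by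
      intro hnk j h1 h2 y
      rw [← iteratedDeriv_succ']
      refine (ihT j h2 h1 (by omega) y).trans ?_
      exact mul_le_mul_of_nonneg_right (le_max_right _ _) (E_nonneg hη j)
    have hcv : n ≤ k → ContDiff ℝ (n:ℕ) (deriv τ) := fun hnk =>
      H.cd_τ'.of_le (by exact_mod_cast hnk)
    constructor
    · -- composition bounds
      intro j hj m hm hmj y
      rcases Nat.lt_or_ge j (n+1) with hlt | hge
      · exact (ihH j (by omega) m hm hmj y).trans
          (mul_le_mul_of_nonneg_right hCle (E_nonneg hη _))
      · have hjeq : j = n+1 := by omega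
        subst hjeq
        have hnk : n + 1 ≤ k := by omega
        have hrw : iteratedDeriv (n+1) (fun z => iteratedDeriv m h (τ z)) =
            iteratedDeriv n (fun z => iteratedDeriv (m+1) h (τ z) * deriv τ z) := by
          rw [iteratedDeriv_succ', H.deriv_Hc (by omega : m+1 ≤ k+1)]
        rw [hrw]
        have hu : ∀ i ≤ n, ∀ y,
            |iteratedDeriv i (fun z => iteratedDeriv (m+1) h (τ z)) y| ≤
              C*(η+η^(max (i+0) 1)) := by
          intro i hin y
          simpa using ihH i (by omega) (m+1) (by omega) (by omega) y
        have hcu : ContDiff ℝ (n:ℕ) (fun z => iteratedDeriv (m+1) h (τ z)) := by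
          refine (H.cd_Hc (by omega : m+1 ≤ k+1)).of_le ?_
          exact_mod_cast (by omega : n ≤ k+1-(m+1))
        have := vb_mul hη hCpos.le hBpos.le hu hv0 (hvIH (by omega))
          hcu (hcv (by omega)) n le_rfl y
        refine this.trans ?_
        have hexp : max (n+0+1) 1 = max (n+1) 1 := by norm_num
        rw [hexp]
        exact mul_le_mul_of_nonneg_right hD1le (E_nonneg hη _)
    · -- τ derivative bounds
      intro j hj h1j hjk y
      rcases Nat.lt_or_ge j (n+1) with hlt | hge
      · exact (ihT j (by omega) h1j hjk y).trans
          (mul_le_mul_of_nonneg_right hCle (E_nonneg hη _))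
      · have hjeq : j = n+1 := by omega
        subst hjeq
        have hnk : n + 1 ≤ k := hjk
        have hrw : iteratedDeriv (n+1+1) τ =
            iteratedDeriv n (fun y =>
              -(iteratedDeriv 2 h (τ y)) * (deriv τ y * (deriv τ y * deriv τ y))) := by
          rw [iteratedDeriv_succ' (n := n+1), iteratedDeriv_succ' (n := n), H.deriv_τ'_eq]
          rw [show (fun y => -(iteratedDeriv 2 h (τ y)) * (deriv τ y)^3)
              = (fun y => -(iteratedDeriv 2 h (τ y)) * (deriv τ y * (deriv τ y * deriv τ y)))
              from funext fun z => by ring]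
        rw [hrw]
        have hu : ∀ i ≤ n, ∀ y,
            |iteratedDeriv i (fun z => -(iteratedDeriv 2 h (τ z))) y| ≤
              C*(η+η^(max (i+0) 1)) := by
          intro i hin y
          rw [iteratedDeriv_fun_neg, abs_neg]
          simpa using ihH i (by omega) 2 (by omega) (by omega) y
        have hcv' := hcv (by omega)
        have hsq := b_mul hη hBpos.le hBpos.le hv0 (hvIH (by omega)) hv0
          (hvIH (by omega)) hcv' hcv'
        have hcube := b_mul (n := n) hη hBpos.le hC2pos.le hv0 (hvIH (by omega))
          hsq.1 hsq.2 hcv' (hcv'.mul hcv')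
        have hcu : ContDiff ℝ (n:ℕ) (fun z => -(iteratedDeriv 2 h (τ z))) := by
          refine ContDiff.neg ?_
          refine (H.cd_Hc (by omega : 2 ≤ k+1)).of_le ?_
          exact_mod_cast (by omega : n ≤ k+1-2)
        have := vb_mul hη hCpos.le hC3pos.le hu hcube.1 hcube.2
          hcu (hcv'.mul (hcv'.mul hcv')) n le_rfl y
        refine this.trans ?_
        have hexp : max (n+0+1) 1 = n+1 := by omega
        rw [hexp]
        exact mul_le_mul_of_nonneg_right hD2le (E_nonneg hη _)

/-- variant of `vb_mul` for offset `s ≥ 1`: the exponent does not increase -/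
lemma vb_mul' {C C' : ℝ} {u v : ℝ → ℝ} {s n : ℕ} (hη : 0 ≤ η) (hC : 0 ≤ C) (hC' : 0 ≤ C')
    (hs : 1 ≤ s)
    (hu : ∀ j ≤ n, ∀ y, |iteratedDeriv j u y| ≤ C*(η+η^(j+s)))
    (hv0 : ∀ y, |v y| ≤ C')
    (hv : ∀ j, 1 ≤ j → j ≤ n → ∀ y, |iteratedDeriv j v y| ≤ C'*(η+η^j))
    (hcu : ContDiff ℝ (n : ℕ) u) (hcv : ContDiff ℝ (n : ℕ) v) :
    ∀ j ≤ n, ∀ y, |iteratedDeriv j (fun z => u z * v z) y| ≤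
      ((2:ℝ)^n*8*C*C')*(η+η^(j+s)) := by
  intro j hj y
  have hcu' : ContDiff ℝ (j : ℕ) u := hcu.of_le (by exact_mod_cast hj)
  have hcv' : ContDiff ℝ (j : ℕ) v := hcv.of_le (by exact_mod_cast hj)
  refine (abs_itd_mul_le hcu' hcv' y).trans ?_
  have key : ∀ i ∈ Finset.range (j+1),
      (j.choose i : ℝ) * |iteratedDeriv i u y| * |iteratedDeriv (j-i) v y| ≤
      (j.choose i : ℝ) * (8*C*C'*(η+η^(j+s))) := by
    intro i hi
    rw [Finset.mem_range] at hi
    have hij : i ≤ j := by omega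
    have hchoose : (0:ℝ) ≤ (j.choose i : ℝ) := by positivity
    have hui := hu i (le_trans hij hj) y
    rw [mul_assoc]
    apply mul_le_mul_of_nonneg_left _ hchoose
    rcases Nat.eq_zero_or_pos (j - i) with hji | hji
    · have hij' : i = j := by omega
      subst hij'
      rw [hji, iteratedDeriv_zero]
      have h1 : |iteratedDeriv i u y| * |v y| ≤ (C*(η+η^(i+s))) * C' :=
        mul_le_mul hui (hv0 y) (abs_nonneg _) (by positivity)
      refine h1.trans ?_
      have hE := E_nonneg hη (i+s)
      nlinarith [mul_nonneg (mul_nonneg hC hC') hE]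
    · have hvji := hv (j-i) hji (by omega) y
      have hEmul : (η+η^(i+s)) * (η+η^(j-i)) ≤ 4*(η+η^((i+s)+(j-i))) :=
        E_mul hη (by omega) hji
      have hii : (i+s) + (j-i) = j+s := by omega
      rw [hii] at hEmul
      calc |iteratedDeriv i u y| * |iteratedDeriv (j-i) v y|
          ≤ (C*(η+η^(i+s))) * (C'*(η+η^(j-i))) :=
            mul_le_mul hui hvji (abs_nonneg _) (by positivity)
        _ = (C*C') * ((η+η^(i+s))*(η+η^(j-i))) := by ring
        _ ≤ (C*C') * (4*(η+η^(j+s))) :=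
            mul_le_mul_of_nonneg_left hEmul (mul_nonneg hC hC')
        _ ≤ 8*C*C'*(η+η^(j+s)) := by
            have hpos : 0 ≤ C*C'*(η+η^(j+s)) :=
              mul_nonneg (mul_nonneg hC hC') (E_nonneg hη (j+s))
            nlinarith [hpos]
  refine (Finset.sum_le_sum key).trans ?_
  rw [← Finset.sum_mul]
  have hsum : ∑ i ∈ Finset.range (j+1), (j.choose i : ℝ) = 2^j := by
    exact_mod_cast Nat.sum_range_choose j
  rw [hsum]
  calc (2:ℝ)^j * (8*C*C'*(η+η^(j+s)))
      ≤ (2:ℝ)^n * (8*C*C'*(η+η^(j+s))) :=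
        mul_le_mul_of_nonneg_right (pow_le_pow_right₀ one_le_two hj) (by positivity)
    _ = 2^n*8*C*C'*(η+η^(j+s)) := by ring

/-- The α functions, defined by recursion. -/
noncomputable def A (τ : ℝ → ℝ) : ℕ → ℕ → ℝ → ℝ
  | 0 => fun r y => if r = 0 then deriv τ y - 1 else 0
  | (l+1) => fun r y =>
      (if r ≤ l then deriv (A τ l r) y else 0) +
      (if 1 ≤ r then deriv τ y * A τ l (r-1) y else 0) +
      (if r = l+1 then deriv τ y - 1 else 0)

lemma A_diag (τ : ℝ → ℝ) : ∀ l : ℕ, A τ l l = fun y => (deriv τ y)^(l+1) - 1 := by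
  intro l
  induction l with
  | zero => funext y; simp [A]
  | succ l ih =>
    funext y
    show (if l+1 ≤ l then _ else (0:ℝ)) + _ + _ = _
    rw [if_neg (by omega), if_pos (by omega), if_pos rfl]
    have : l + 1 - 1 = l := by omega
    rw [this, ih]
    ring

lemma Hyp.A_cd (H : Hyp k c₀ η h τ) : ∀ l, l ≤ k → ∀ r, ContDiff ℝ ((k-l : ℕ)) (A τ l r) := by
  intro l
  induction l with
  | zero =>
    intro _ r
    rcases Nat.eq_zero_or_pos r with hr | hr
    · subst hr
      have : A τ 0 0 = fun y => deriv τ y - 1 := by funext y; simp [A]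
      rw [this]
      have : (k - 0 : ℕ) = k := by omega
      rw [this]
      exact H.cd_τ'.sub contDiff_const
    · have : A τ 0 r = fun _ => (0:ℝ) := by
        funext y; simp [A, Nat.pos_iff_ne_zero.mp hr]
      rw [this]; exact contDiff_const
  | succ l ih =>
    intro hl r
    have hlk : l ≤ k := by omega
    have hcd1 : ContDiff ℝ ((k-(l+1) : ℕ)) (deriv (A τ l r)) := by
      have hA := ih hlk r
      have hcast : ((k-l : ℕ) : WithTop ℕ∞) = ((k-(l+1) : ℕ) : WithTop ℕ∞) + 1 := by
        have : (k-l : ℕ) = (k-(l+1)) + 1 := by omega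
        rw [this]; push_cast; ring
      rw [hcast] at hA
      exact (contDiff_succ_iff_deriv.mp hA).2.2
    have hcd2 : ContDiff ℝ ((k-(l+1) : ℕ)) (fun y => deriv τ y * A τ l (r-1) y) := by
      refine ContDiff.mul (H.cd_τ'.of_le ?_) ((ih hlk (r-1)).of_le ?_)
      · exact_mod_cast (by omega : k-(l+1) ≤ k)
      · exact_mod_cast (by omega : k-(l+1) ≤ k-l)
    have hcd3 : ContDiff ℝ ((k-(l+1) : ℕ)) (fun y => deriv τ y - 1) :=
      (H.cd_τ'.of_le (by exact_mod_cast (by omega : k-(l+1) ≤ k))).sub contDiff_const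
    by_cases h3 : r = l + 1
    · subst h3
      rw [A_diag τ (l+1)]
      refine ContDiff.sub ?_ contDiff_const
      exact (H.cd_τ'.of_le (by exact_mod_cast (by omega : k-(l+1) ≤ k))).pow _
    · by_cases h1 : r ≤ l
      · by_cases h2 : 1 ≤ r
        · have e : A τ (l+1) r = fun y => deriv (A τ l r) y + deriv τ y * A τ l (r-1) y := by
            funext y
            show (if r ≤ l then _ else _) + _ + _ = _
            rw [if_pos h1, if_pos h2, if_neg h3]; ring
          rw [e]; exact hcd1.add hcd2
        · have hr0 : r = 0 := by omega
          subst hr0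
          have e : A τ (l+1) 0 = fun y => deriv (A τ l 0) y := by
            funext y
            show (if 0 ≤ l then _ else _) + _ + _ = _
            rw [if_pos (Nat.zero_le l), if_neg (by omega), if_neg (by omega)]; ring
          rw [e]; exact hcd1
      · have e : A τ (l+1) r = fun y => deriv τ y * A τ l (r-1) y := by
          funext y
          show (if r ≤ l then _ else _) + _ + _ = _
          rw [if_neg h1, if_pos (by omega), if_neg h3]; ring
        rw [e]; exact hcd2
lemma Hyp.itd_τ'_bound (H : Hyp k c₀ η h τ) {Cm : ℝ}
    (hm : ∀ j, j ≤ k → 1 ≤ j → j ≤ k → ∀ y, |iteratedDeriv (j+1) τ y| ≤ Cm * (η + η^j)) :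
    ∀ j, 1 ≤ j → j ≤ k → ∀ y, |iteratedDeriv j (deriv τ) y| ≤ Cm*(η+η^j) := by
  intro j h1 h2 y
  rw [← iteratedDeriv_succ']
  exact hm j h2 h1 h2 y

lemma pow_bnd (k : ℕ) (c₀ : ℝ) (hk : 1 ≤ k) (hc₀ : 0 < c₀) (M : ℕ) :
    ∃ C : ℝ, 0 < C ∧ ∀ {η : ℝ} {h τ : ℝ → ℝ}, Hyp k c₀ η h τ → ∀ m, m ≤ M →
      (∀ y, |(deriv τ y)^m| ≤ C) ∧
      (∀ j, 1 ≤ j → j ≤ k → ∀ y,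
        |iteratedDeriv j (fun z => (deriv τ z)^m) y| ≤ C*(η+η^j)) ∧
      (∀ y, |(deriv τ y)^m - 1| ≤ C*η) := by
  obtain ⟨Cm, hCmpos, hmaster⟩ := master k c₀ hk hc₀ k
  induction M with
  | zero =>
    refine ⟨1, one_pos, fun {η h τ} H m hm => ?_⟩
    have hm0 : m = 0 := by omega
    subst hm0
    refine ⟨fun y => by norm_num, fun j h1 h2 y => ?_, fun y => by norm_num; exact H.hη⟩
    have e : (fun z => (deriv τ z)^0) = fun _ : ℝ => (1:ℝ) := by funext z; norm_num
    rw [e, itd_const j h1 1 y, abs_zero]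
    exact mul_nonneg one_pos.le (E_nonneg H.hη j)
  | succ M IH =>
    obtain ⟨Cp, hCppos, hIH⟩ := IH
    set B : ℝ := max c₀⁻¹ Cm with hB
    have hBpos : 0 < B := lt_of_lt_of_le (inv_pos.2 hc₀) (le_max_left _ _)
    set Cnew : ℝ := (2:ℝ)^k*4*B*Cp + B*Cp + B + Cp with hCnew
    have hCnewpos : 0 < Cnew := by positivity
    refine ⟨max Cp Cnew, by positivity, fun {η h τ} H m hm => ?_⟩
    have hη := H.hη
    rcases Nat.lt_or_ge m (M+1) with hlt | hge
    · obtain ⟨b1, b2, b3⟩ := hIH H m (by omega)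
      exact ⟨fun y => (b1 y).trans (le_max_left _ _),
        fun j h1 h2 y => (b2 j h1 h2 y).trans
          (mul_le_mul_of_nonneg_right (le_max_left _ _) (E_nonneg hη j)),
        fun y => (b3 y).trans (mul_le_mul_of_nonneg_right (le_max_left _ _) hη)⟩
    · have hmeq : m = M+1 := by omega
      subst hmeq
      obtain ⟨b1, b2, b3⟩ := hIH H M le_rfl
      have hτ'bd := H.itd_τ'_bound (fun j _ h1 h2 y => (hmaster H).2 j h2 h1 h2 y)
      have hτ'bdB : ∀ j, 1 ≤ j → j ≤ k → ∀ y,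
          |iteratedDeriv j (deriv τ) y| ≤ B*(η+η^j) := fun j h1 h2 y =>
        (hτ'bd j h1 h2 y).trans
          (mul_le_mul_of_nonneg_right (le_max_right _ _) (E_nonneg hη j))
      have hτ'0 : ∀ y, |deriv τ y| ≤ B := fun y => (H.abs_τ' y).trans (le_max_left _ _)
      have hcd1 : ContDiff ℝ (k : ℕ) (deriv τ) := H.cd_τ'
      have hcd2 : ContDiff ℝ (k : ℕ) (fun z => (deriv τ z)^M) := hcd1.pow M
      have hmul := b_mul (n := k) hη hBpos.le hCppos.le hτ'0 hτ'bdB b1 b2 hcd1 hcd2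
      have e : (fun z => (deriv τ z)^(M+1)) = fun z => deriv τ z * (deriv τ z)^M := by
        funext z; rw [pow_succ']
      constructor
      · intro y
        rw [show ((deriv τ y)^(M+1)) = deriv τ y * (deriv τ y)^M from by rw [pow_succ']]
        refine (hmul.1 y).trans ?_
        refine le_trans ?_ (le_max_right _ _)
        rw [hCnew]
        nlinarith [mul_nonneg hBpos.le hCppos.le, hBpos.le, hCppos.le]
      constructor
      · intro j h1 h2 y
        rw [e]
        refine (hmul.2 j h1 h2 y).trans ?_
        have hE := E_nonneg hη j
        refine mul_le_mul_of_nonneg_right (le_trans ?_ (le_max_right _ _)) hE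
        rw [hCnew]
        nlinarith [mul_nonneg hBpos.le hCppos.le, hBpos.le, hCppos.le]
      · intro y
        have key : (deriv τ y)^(M+1) - 1 =
            deriv τ y * ((deriv τ y)^M - 1) + (deriv τ y - 1) := by ring
        rw [key]
        refine (abs_add_le _ _).trans ?_
        have t1 : |deriv τ y * ((deriv τ y)^M - 1)| ≤ B * (Cp * η) := by
          rw [abs_mul]
          exact mul_le_mul (hτ'0 y) (b3 y) (abs_nonneg _) hBpos.le
        have t2 : |deriv τ y - 1| ≤ c₀⁻¹ * η := H.abs_deriv_τ_sub_one y
        have t2' : |deriv τ y - 1| ≤ B * η := by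
          refine t2.trans (mul_le_mul_of_nonneg_right (le_max_left _ _) hη)
        have : B * (Cp * η) + B * η ≤ max Cp Cnew * η := by
          have hle : B*Cp + B ≤ Cnew := by
            rw [hCnew]
            nlinarith [mul_nonneg hBpos.le hCppos.le, hBpos.le, hCppos.le,
              pow_pos (two_pos (α := ℝ)) k]
          have : B*(Cp*η) + B*η = (B*Cp + B)*η := by ring
          rw [this]
          exact mul_le_mul_of_nonneg_right (hle.trans (le_max_right _ _)) hη
        linarith

lemma Abound (k : ℕ) (c₀ : ℝ) (hk : 1 ≤ k) (hc₀ : 0 < c₀) :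
    ∀ L : ℕ, ∃ C : ℝ, 0 < C ∧ ∀ {η : ℝ} {h τ : ℝ → ℝ}, Hyp k c₀ η h τ → L ≤ k →
      ∀ r, r ≤ L → ∀ j, j ≤ k - L → ∀ y,
        |iteratedDeriv j (A τ L r) y| ≤ C * (η + η^(max (L-r+j) 1)) := by
  obtain ⟨Cm, hCmpos, hmaster⟩ := master k c₀ hk hc₀ k
  obtain ⟨Cp, hCppos, hpow⟩ := pow_bnd k c₀ hk hc₀ (k+2)
  intro L
  induction L with
  | zero =>
    refine ⟨max c₀⁻¹ Cm, by positivity, fun {η h τ} H _ r hr j hj y => ?_⟩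
    have hη := H.hη
    have hr0 : r = 0 := by omega
    subst hr0
    have e : A τ 0 0 = fun y => deriv τ y - 1 := by funext y; simp [A]
    rw [e]
    rcases Nat.eq_zero_or_pos j with hj0 | hj0
    · subst hj0
      rw [iteratedDeriv_zero]
      have := H.abs_deriv_τ_sub_one y
      have hmax : max (0-0+0) 1 = 1 := by omega
      rw [hmax, pow_one]
      have hE : η ≤ η + η := by linarith
      calc |deriv τ y - 1| ≤ c₀⁻¹ * η := this
        _ ≤ max c₀⁻¹ Cm * (η+η) := by
            have h1 : c₀⁻¹ ≤ max c₀⁻¹ Cm := le_max_left _ _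
            nlinarith [inv_pos.2 hc₀, hη]
    · have hcd : ContDiff ℝ (j : ℕ) (deriv τ) :=
        H.cd_τ'.of_le (by exact_mod_cast (by omega : j ≤ k))
      rw [itd_sub_const hcd 1 hj0 y, ← iteratedDeriv_succ']
      have := (hmaster H).2 j (by omega) hj0 (by omega) y
      have hmax : max (0-0+j) 1 = j := by omega
      rw [hmax]
      refine this.trans (mul_le_mul_of_nonneg_right (le_max_right _ _) (E_nonneg hη j))
  | succ L IH =>
    obtain ⟨C, hCpos, hIH⟩ := IH
    set B : ℝ := max c₀⁻¹ Cm with hB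
    have hBpos : 0 < B := lt_of_lt_of_le (inv_pos.2 hc₀) (le_max_left _ _)
    set D : ℝ := 2*C + (2:ℝ)^k*8*C*B + 2*Cp with hD
    have hDpos : 0 < D := by positivity
    refine ⟨D, hDpos, fun {η h τ} H hL r hr j hj y => ?_⟩
    have hη := H.hη
    have hLk : L ≤ k := by omega
    have hτ'bd : ∀ j, 1 ≤ j → j ≤ k → ∀ y,
        |iteratedDeriv j (deriv τ) y| ≤ B*(η+η^j) := by
      intro j h1 h2 y
      rw [← iteratedDeriv_succ']
      exact ((hmaster H).2 j h2 h1 h2 y).trans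
        (mul_le_mul_of_nonneg_right (le_max_right _ _) (E_nonneg hη j))
    have hτ'0 : ∀ y, |deriv τ y| ≤ B := fun y => (H.abs_τ' y).trans (le_max_left _ _)
    by_cases h3 : r = L + 1
    · -- diagonal
      subst h3
      rw [A_diag τ (L+1)]
      obtain ⟨p1, p2, p3⟩ := hpow H (L+1+1) (by omega)
      rcases Nat.eq_zero_or_pos j with hj0 | hj0
      · subst hj0
        rw [iteratedDeriv_zero]
        have hmax : max (L+1-(L+1)+0) 1 = 1 := by omega
        rw [hmax, pow_one]
        have := p3 y
        have hCpD : Cp ≤ D := by rw [hD]; nlinarith [mul_nonneg (mul_nonneg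
          (pow_pos (two_pos (α:=ℝ)) k).le hCpos.le) hBpos.le]
        nlinarith [hCppos.le, hη, hDpos.le]
      · have hcd : ContDiff ℝ (j : ℕ) (fun z => (deriv τ z)^(L+1+1)) :=
          (H.cd_τ'.pow _).of_le (by exact_mod_cast (by omega : j ≤ k))
        rw [itd_sub_const hcd 1 hj0 y]
        have := p2 j hj0 (by omega) y
        have hmax : max (L+1-(L+1)+j) 1 = j := by omega
        rw [hmax]
        refine this.trans ?_
        have hCpD : Cp ≤ D := by rw [hD]; nlinarith [mul_nonneg (mul_nonneg
          (pow_pos (two_pos (α:=ℝ)) k).le hCpos.le) hBpos.le]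
        exact mul_le_mul_of_nonneg_right hCpD (E_nonneg hη j)
    · by_cases h1 : r ≤ L
      · by_cases h2 : 1 ≤ r
        · -- main case
          have e : A τ (L+1) r = fun y => deriv (A τ L r) y + deriv τ y * A τ L (r-1) y := by
            funext y
            show (if r ≤ L then _ else _) + _ + _ = _
            rw [if_pos h1, if_pos h2, if_neg h3]; ring
          rw [e]
          have hcdA : ContDiff ℝ ((k-L : ℕ)) (A τ L r) := H.A_cd L hLk r
          have hcd1 : ContDiff ℝ (j : ℕ) (deriv (A τ L r)) := by
            have hcast : ((k-L : ℕ) : WithTop ℕ∞) = ((k-(L+1) : ℕ) : WithTop ℕ∞) + 1 := by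
              have : (k-L : ℕ) = (k-(L+1)) + 1 := by omega
              rw [this]; push_cast; ring
            rw [hcast] at hcdA
            exact (contDiff_succ_iff_deriv.mp hcdA).2.2.of_le
              (by exact_mod_cast (by omega : j ≤ k-(L+1)))
          have hcd2 : ContDiff ℝ (j : ℕ) (fun y => deriv τ y * A τ L (r-1) y) := by
            refine ContDiff.mul (H.cd_τ'.of_le ?_) ((H.A_cd L hLk (r-1)).of_le ?_)
            · exact_mod_cast (by omega : j ≤ k)
            · exact_mod_cast (by omega : j ≤ k-L)
          rw [itd_add hcd1 hcd2 y]
          refine (abs_add_le _ _).trans ?_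
          -- first term
          have t1 : |iteratedDeriv j (deriv (A τ L r)) y| ≤ C * (η+η^(max (L+1-r+j) 1)) := by
            rw [← iteratedDeriv_succ']
            have := hIH H hLk r h1 (j+1) (by omega) y
            have hmax : L - r + (j+1) = L+1-r+j := by omega
            rw [hmax] at this
            exact this
          -- second term : vb_mul'
          have hu : ∀ i, i ≤ k-(L+1) → ∀ y,
              |iteratedDeriv i (A τ L (r-1)) y| ≤ C*(η+η^(i+(L-r+1))) := by
            intro i hi y
            have := hIH H hLk (r-1) (by omega) i (by omega) y
            have hmax : max (L-(r-1)+i) 1 = i+(L-r+1) := by omega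
            rw [hmax] at this
            exact this
          have hcu : ContDiff ℝ ((k-(L+1) : ℕ)) (A τ L (r-1)) :=
            (H.A_cd L hLk (r-1)).of_le (by exact_mod_cast (by omega : k-(L+1) ≤ k-L))
          have hcv : ContDiff ℝ ((k-(L+1) : ℕ)) (deriv τ) :=
            H.cd_τ'.of_le (by exact_mod_cast (by omega : k-(L+1) ≤ k))
          have hτ'bd' : ∀ i, 1 ≤ i → i ≤ k-(L+1) → ∀ y,
              |iteratedDeriv i (deriv τ) y| ≤ B*(η+η^i) := fun i hi1 hi2 y =>
            hτ'bd i hi1 (by omega) y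
          have t2all := vb_mul' (s := L-r+1) (n := k-(L+1)) hη hCpos.le hBpos.le
            (by omega) hu hτ'0 hτ'bd' hcu hcv
          have t2pre := t2all j hj y
          have t2 : |iteratedDeriv j (fun z => deriv τ z * A τ L (r-1) z) y| ≤
              ((2:ℝ)^(k-(L+1))*8*C*B) * (η+η^(max (L+1-r+j) 1)) := by
            have e2 : (fun z => A τ L (r-1) z * deriv τ z) =
                fun z => deriv τ z * A τ L (r-1) z := by
              funext z; ring
            rw [e2] at t2pre
            have hmax : j + (L-r+1) = max (L+1-r+j) 1 := by omega
            rw [hmax] at t2pre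
            exact t2pre
          have hE := E_nonneg hη (max (L+1-r+j) 1)
          have h2k : (2:ℝ)^(k-(L+1)) ≤ 2^k := pow_le_pow_right₀ one_le_two (by omega)
          calc |iteratedDeriv j (deriv (A τ L r)) y| +
              |iteratedDeriv j (fun z => deriv τ z * A τ L (r-1) z) y|
              ≤ C * (η+η^(max (L+1-r+j) 1)) +
                ((2:ℝ)^(k-(L+1))*8*C*B) * (η+η^(max (L+1-r+j) 1)) := add_le_add t1 t2
            _ ≤ D * (η+η^(max (L+1-r+j) 1)) := by
                rw [hD]
                have : (2:ℝ)^(k-(L+1))*8*C*B ≤ (2:ℝ)^k*8*C*B := by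
                  have := mul_nonneg hCpos.le hBpos.le
                  nlinarith
                nlinarith [hCppos.le, hCpos.le, hE, mul_nonneg (mul_nonneg
                  (pow_pos (two_pos (α:=ℝ)) k).le hCpos.le) hBpos.le]
        · -- r = 0
          have hr0 : r = 0 := by omega
          subst hr0
          have e : A τ (L+1) 0 = fun y => deriv (A τ L 0) y := by
            funext y
            show (if 0 ≤ L then _ else _) + _ + _ = _
            rw [if_pos (Nat.zero_le L), if_neg (by omega), if_neg (by omega)]; ring
          rw [e, ← iteratedDeriv_succ']
          have := hIH H hLk 0 (by omega) (j+1) (by omega) y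
          have hmax : L - 0 + (j+1) = L+1-0+j := by omega
          rw [hmax] at this
          refine this.trans ?_
          refine mul_le_mul_of_nonneg_right ?_ (E_nonneg hη _)
          rw [hD]
          nlinarith [hCpos.le, hCppos.le, mul_nonneg (mul_nonneg
            (pow_pos (two_pos (α:=ℝ)) k).le hCpos.le) hBpos.le]
      · omega

lemma cd_itd {n m : ℕ} {φ : ℝ → ℝ} (hφ : ContDiff ℝ (n:ℕ) φ) (hm : m ≤ n) :
    ContDiff ℝ ((n-m : ℕ)) (iteratedDeriv m φ) := by
  rw [iteratedDeriv_eq_iterate]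
  apply ContDiff.iterate_deriv'
  have : (n-m) + m = n := by omega
  rw [this]
  exact hφ

lemma hasDerivAt_itd {n m : ℕ} {φ : ℝ → ℝ} (hφ : ContDiff ℝ (n:ℕ) φ) (hm : m + 1 ≤ n)
    (z : ℝ) : HasDerivAt (iteratedDeriv m φ) (iteratedDeriv (m+1) φ z) z := by
  have hd : DifferentiableAt ℝ (iteratedDeriv m φ) z := by
    have := cd_itd hφ (by omega : m ≤ n)
    have h1 : ((n-m : ℕ) : WithTop ℕ∞) ≠ 0 := by
      exact_mod_cast (by omega : n-m ≠ 0)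
    exact (this.differentiable h1).differentiableAt
  have := hd.hasDerivAt
  rwa [show deriv (iteratedDeriv m φ) z = iteratedDeriv (m+1) φ z by
    rw [iteratedDeriv_succ]] at this

lemma Hyp.hasDerivAt_τonly (H : Hyp k c₀ η h τ) (y : ℝ) :
    HasDerivAt τ (deriv τ y) y := by
  have := (H.hasStrictDerivAt_τ y).hasDerivAt
  rwa [← H.deriv_τ y] at this

lemma Hyp.identity (H : Hyp k c₀ η h τ) : ∀ l, l ≤ k → ∀ φ : ℝ → ℝ,
    ContDiff ℝ (l:ℕ) φ → ∀ y,
    iteratedDeriv l (fun x => φ (τ x) * deriv τ x) y =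
      iteratedDeriv l φ (τ y) +
        ∑ r ∈ Finset.range (l + 1), A τ l r y * iteratedDeriv r φ (τ y) := by
  intro l
  induction l with
  | zero =>
    intro _ φ _ y
    simp only [iteratedDeriv_zero, zero_add, Finset.range_one, Finset.sum_singleton]
    have : A τ 0 0 y = deriv τ y - 1 := by simp [A]
    rw [this]
    ring
  | succ l IH =>
    intro hl φ hφ y
    have hlk : l ≤ k := by omega
    have hφl : ContDiff ℝ (l:ℕ) φ := hφ.of_le (by exact_mod_cast (by omega : l ≤ l+1))
    have hIHfun : iteratedDeriv l (fun x => φ (τ x) * deriv τ x) =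
        fun x => iteratedDeriv l φ (τ x) +
          ∑ r ∈ Finset.range (l + 1), A τ l r x * iteratedDeriv r φ (τ x) :=
      funext (IH hlk φ hφl)
    rw [iteratedDeriv_succ, hIHfun]
    -- derivative of each piece
    have hτd : HasDerivAt τ (deriv τ y) y := H.hasDerivAt_τonly y
    have hlead : HasDerivAt (fun x => iteratedDeriv l φ (τ x))
        (iteratedDeriv (l+1) φ (τ y) * deriv τ y) y :=
      (hasDerivAt_itd hφ (by omega) (τ y)).comp y hτd
    have hAdiff : ∀ r, HasDerivAt (A τ l r) (deriv (A τ l r) y) y := by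
      intro r
      have hcd := H.A_cd l hlk r
      have h1 : ((k-l : ℕ) : WithTop ℕ∞) ≠ 0 := by
        exact_mod_cast (by omega : k-l ≠ 0)
      exact ((hcd.differentiable h1).differentiableAt).hasDerivAt
    have hterm : ∀ r ∈ Finset.range (l+1),
        HasDerivAt (fun x => A τ l r x * iteratedDeriv r φ (τ x))
          (deriv (A τ l r) y * iteratedDeriv r φ (τ y) +
            A τ l r y * (iteratedDeriv (r+1) φ (τ y) * deriv τ y)) y := by
      intro r hr
      rw [Finset.mem_range] at hr
      have hg : HasDerivAt (fun x => iteratedDeriv r φ (τ x))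
          (iteratedDeriv (r+1) φ (τ y) * deriv τ y) y :=
        (hasDerivAt_itd hφ (by omega) (τ y)).comp y hτd
      exact (hAdiff r).mul hg
    have hsum : HasDerivAt
        (fun x => ∑ r ∈ Finset.range (l+1), A τ l r x * iteratedDeriv r φ (τ x))
        (∑ r ∈ Finset.range (l+1), (deriv (A τ l r) y * iteratedDeriv r φ (τ y) +
            A τ l r y * (iteratedDeriv (r+1) φ (τ y) * deriv τ y))) y :=
      HasDerivAt.fun_sum hterm
    have htotal := hlead.fun_add hsum
    rw [htotal.deriv]
    -- now pure algebra
    have hA1 : ∀ r, A τ (l+1) r y =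
        (if r ≤ l then deriv (A τ l r) y else 0) +
        (if 1 ≤ r then deriv τ y * A τ l (r-1) y else 0) +
        (if r = l+1 then deriv τ y - 1 else 0) := fun r => rfl
    -- expand RHS sum
    have hsplit : ∑ r ∈ Finset.range (l+2), A τ (l+1) r y * iteratedDeriv r φ (τ y) =
        (∑ r ∈ Finset.range (l+2),
          (if r ≤ l then deriv (A τ l r) y else 0) * iteratedDeriv r φ (τ y)) +
        (∑ r ∈ Finset.range (l+2),
          (if 1 ≤ r then deriv τ y * A τ l (r-1) y else 0) * iteratedDeriv r φ (τ y)) +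
        (∑ r ∈ Finset.range (l+2),
          (if r = l+1 then deriv τ y - 1 else 0) * iteratedDeriv r φ (τ y)) := by
      rw [← Finset.sum_add_distrib, ← Finset.sum_add_distrib]
      refine Finset.sum_congr rfl fun r _ => ?_
      rw [hA1 r]; ring
    have hS1 : ∑ r ∈ Finset.range (l+2),
        (if r ≤ l then deriv (A τ l r) y else 0) * iteratedDeriv r φ (τ y) =
        ∑ r ∈ Finset.range (l+1), deriv (A τ l r) y * iteratedDeriv r φ (τ y) := by
      rw [Finset.sum_range_succ, if_neg (by omega)]
      rw [zero_mul, add_zero]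
      refine Finset.sum_congr rfl fun r hr => ?_
      rw [Finset.mem_range] at hr
      rw [if_pos (by omega)]
    have hS2 : ∑ r ∈ Finset.range (l+2),
        (if 1 ≤ r then deriv τ y * A τ l (r-1) y else 0) * iteratedDeriv r φ (τ y) =
        ∑ r ∈ Finset.range (l+1),
          deriv τ y * A τ l r y * iteratedDeriv (r+1) φ (τ y) := by
      rw [Finset.sum_range_succ']
      rw [if_neg (by omega), zero_mul, add_zero]
      refine Finset.sum_congr rfl fun r _ => ?_
      rw [if_pos (by omega)]
      have : r + 1 - 1 = r := by omega
      rw [this]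
    have hS3 : ∑ r ∈ Finset.range (l+2),
        (if r = l+1 then deriv τ y - 1 else 0) * iteratedDeriv r φ (τ y) =
        (deriv τ y - 1) * iteratedDeriv (l+1) φ (τ y) := by
      rw [Finset.sum_range_succ, if_pos rfl]
      have : ∑ r ∈ Finset.range (l+1),
          (if r = l+1 then deriv τ y - 1 else 0) * iteratedDeriv r φ (τ y) = 0 := by
        refine Finset.sum_eq_zero fun r hr => ?_
        rw [Finset.mem_range] at hr
        rw [if_neg (by omega), zero_mul]
      rw [this, zero_add]
    rw [show l + 1 + 1 = l + 2 from rfl] at *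
    rw [hsplit, hS1, hS2, hS3]
    -- split the derivative sum
    rw [Finset.sum_add_distrib]
    have hS2' : ∑ r ∈ Finset.range (l+1),
        A τ l r y * (iteratedDeriv (r+1) φ (τ y) * deriv τ y) =
        ∑ r ∈ Finset.range (l+1),
          deriv τ y * A τ l r y * iteratedDeriv (r+1) φ (τ y) := by
      refine Finset.sum_congr rfl fun r _ => ?_
      ring
    rw [hS2']
    ring

lemma Abound_all (k : ℕ) (c₀ : ℝ) (hk : 1 ≤ k) (hc₀ : 0 < c₀) : ∀ N : ℕ,
    ∃ C : ℝ, 0 < C ∧ ∀ {η : ℝ} {h τ : ℝ → ℝ}, Hyp k c₀ η h τ →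
      ∀ L, L ≤ N → L ≤ k → ∀ r, r ≤ L → ∀ y,
        |A τ L r y| ≤ C * (η + η^(max (L-r) 1)) := by
  intro N
  induction N with
  | zero =>
    obtain ⟨C, hC, hb⟩ := Abound k c₀ hk hc₀ 0
    refine ⟨C, hC, fun {η h τ} H L hL0 hLk r hr y => ?_⟩
    have hL : L = 0 := by omega
    subst hL
    have := hb H hLk r hr 0 (by omega) y
    rw [iteratedDeriv_zero] at this
    simpa using this
  | succ N IH =>
    obtain ⟨C1, hC1, hb1⟩ := IH
    obtain ⟨C2, hC2, hb2⟩ := Abound k c₀ hk hc₀ (N+1)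
    refine ⟨max C1 C2, by positivity, fun {η h τ} H L hLN hLk r hr y => ?_⟩
    have hE := E_nonneg H.hη (max (L-r) 1)
    rcases Nat.lt_or_ge L (N+1) with hlt | hge
    · exact (hb1 H L (by omega) hLk r hr y).trans
        (mul_le_mul_of_nonneg_right (le_max_left _ _) hE)
    · have hLeq : L = N+1 := by omega
      subst hLeq
      have := hb2 H hLk r hr 0 (by omega) y
      rw [iteratedDeriv_zero] at this
      simpa using this.trans (mul_le_mul_of_nonneg_right (le_max_right _ _)
        (by simpa using E_nonneg H.hη (max (N+1-r+0) 1)))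

end Stmt3Aux

open Stmt3Aux in
/-- Formulae (cuh3)-(cuh4) -/
theorem stmt_3' (k : ℕ) (hk : 1 ≤ k) (c₀ : ℝ) (hc₀ : 0 < c₀) :
    ∃ K : ℝ, ∀ (η : ℝ), 0 ≤ η → ∀ (h τ : ℝ → ℝ),
      ContDiff ℝ (k + 1) h →
      (∀ l ≤ k + 1, ∀ y : ℝ, |iteratedDeriv l h y| ≤ η) →
      (∀ y : ℝ, c₀ ≤ 1 + deriv h y) →
      (∀ y : ℝ, τ y + h (τ y) = y) →
      ∃ α : ℕ → ℕ → ℝ → ℝ,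
        (∀ l ≤ k, ∀ φ : ℝ → ℝ, ContDiff ℝ l φ → ∀ y : ℝ,
            iteratedDeriv l (fun x => φ (τ x) * deriv τ x) y =
              iteratedDeriv l φ (τ y) +
                ∑ r ∈ Finset.range (l + 1), α l r y * iteratedDeriv r φ (τ y)) ∧
        (∀ l ≤ k, ∀ y : ℝ,
            (1 + 1 / deriv τ y) * ∑ r ∈ Finset.range (l + 1), |α l r y|
              ≤ K * (1 + η) * (η + η ^ k)) := by
  obtain ⟨CA, hCApos, hAb⟩ := Abound_all k c₀ hk hc₀ k
  refine ⟨4*(k+1)*CA, fun η hη h τ hch hbd hlow hinv => ?_⟩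
  have H : Hyp k c₀ η h τ := ⟨hk, hc₀, hη, hch, hbd, hlow, hinv⟩
  refine ⟨A τ, fun l hl φ hφ y => H.identity l hl φ hφ y, fun l hl y => ?_⟩
  -- part (b)
  have hsum : ∑ r ∈ Finset.range (l+1), |A τ l r y| ≤ (k+1) * (CA * (2*(η+η^k))) := by
    have hterm : ∀ r ∈ Finset.range (l+1), |A τ l r y| ≤ CA * (2*(η+η^k)) := by
      intro r hr
      rw [Finset.mem_range] at hr
      refine (hAb H l hl hl r (by omega) y).trans ?_
      refine mul_le_mul_of_nonneg_left ?_ hCApos.le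
      exact E_mono hη (le_max_right _ _) (by omega)
    refine (Finset.sum_le_sum hterm).trans ?_
    rw [Finset.sum_const, Finset.card_range, nsmul_eq_mul]
    have h1 : ((l:ℝ)+1) ≤ (k:ℝ)+1 := by exact_mod_cast Nat.succ_le_succ hl
    have h2 : (0:ℝ) ≤ CA * (2*(η+η^k)) := by positivity
    push_cast
    nlinarith
  have hfrac : 1 + 1 / deriv τ y = 2 + deriv h (τ y) := by
    rw [H.one_div_deriv_τ y]; ring
  have hfracle : 1 + 1 / deriv τ y ≤ 2 + η := by
    rw [hfrac]
    have := (abs_le.mp (H.abs_deriv_h_le (τ y))).2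
    linarith
  have hfracpos : 0 < 1 + 1 / deriv τ y := by
    rw [hfrac]
    have := H.dpos (τ y)
    linarith [hc₀]
  have hsumnn : 0 ≤ ∑ r ∈ Finset.range (l+1), |A τ l r y| :=
    Finset.sum_nonneg fun r _ => abs_nonneg _
  calc (1 + 1 / deriv τ y) * ∑ r ∈ Finset.range (l + 1), |A τ l r y|
      ≤ (2+η) * ((k+1) * (CA * (2*(η+η^k)))) := by
        refine mul_le_mul hfracle hsum hsumnn (by linarith)
    _ ≤ (4*(k+1)*CA) * (1 + η) * (η + η ^ k) := by
        have hkk : (0:ℝ) ≤ (k:ℝ)+1 := by positivity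
        have hE := add_nonneg hη (pow_nonneg hη k)
        nlinarith [mul_nonneg (mul_nonneg hkk hCApos.le) hE, mul_nonneg hη hE,
          mul_nonneg (mul_nonneg (mul_nonneg hkk hCApos.le) hE) hη]



/-- Formulae (cuh3)-(cuh4): there are a constant `K = K(k, c₀)` and functions `α_{l,r}`
such that `[φ(τ(y))τ'(y)]^{(l)} = φ^{(l)}(τ(y)) + Σ_{r=0}^{l} α_{l,r}(y) φ^{(r)}(τ(y))`
and `(1 + 1/τ'(y)) Σ_{r=0}^{l} |α_{l,r}(y)| ≤ K(1+η)(η+η^k)` for `0 ≤ l ≤ k`. -/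
theorem stmt_3 (k : ℕ) (hk : 1 ≤ k) (c₀ : ℝ) (hc₀ : 0 < c₀) :
    ∃ K : ℝ, ∀ (η : ℝ), 0 ≤ η → ∀ (h τ : ℝ → ℝ),
      ContDiff ℝ (k + 1) h →
      (∀ l ≤ k + 1, ∀ y : ℝ, |iteratedDeriv l h y| ≤ η) →
      (∀ y : ℝ, c₀ ≤ 1 + deriv h y) →
      (∀ y : ℝ, τ y + h (τ y) = y) →
      ∃ α : ℕ → ℕ → ℝ → ℝ,
        (∀ l ≤ k, ∀ φ : ℝ → ℝ, ContDiff ℝ l φ → ∀ y : ℝ,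
            iteratedDeriv l (fun x => φ (τ x) * deriv τ x) y =
              iteratedDeriv l φ (τ y) +
                ∑ r ∈ Finset.range (l + 1), α l r y * iteratedDeriv r φ (τ y)) ∧
        (∀ l ≤ k, ∀ y : ℝ,
            (1 + 1 / deriv τ y) * ∑ r ∈ Finset.range (l + 1), |α l r y|
              ≤ K * (1 + η) * (η + η ^ k)) := by
  exact stmt_3' k hk c₀ hc₀
end

section
/- Let k ≥ 1 be an integer and let b : ℝ → ℝ be of class C^{k+1} with all derivatives of order 0 to k+1 bounded. Let i be an integer with i ≥ 2‖b'‖_∞ and i ≥ 1. Then the map y ↦ y + b(y)/i is an increasing C^{k+1}-diffeomorphism from ℝ onto ℝ, and its inverse τ_i (defined by τ_i(y) + b(τ_i(y))/i = y) is C^{k+1} and satisfies, for constants c > 0 and K > 0 depending only on k and the bounds on b (not on i): |τ_i(y) − y| ≤ K/i, |τ_i'(y) − 1| ≤ K/i, and c < τ_i'(y) ≤ K for all y. Moreover there exist functions β^i_{l,r} : ℝ → ℝ, for 0 ≤ r ≤ l ≤ k, with Σ_{r=0}^{l} i|β^i_{l,r}(y)| ≤ K for all y, such that for every φ ∈ C^l(ℝ)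 the l-th derivative of y ↦ φ(τ_i(y))τ_i'(y) equals φ^{(l)}(τ_i(y)) + Σ_{r=0}^{l} β^i_{l,r}(y) φ^{(r)}(τ_i(y)). -/
open Finset

namespace Stmt4

lemma abs_itd (n : ℕ) (f : ℝ → ℝ) (x : ℝ) :
    ‖iteratedFDeriv ℝ n f x‖ = |iteratedDeriv n f x| := by
  rw [norm_iteratedFDeriv_eq_norm_iteratedDeriv, Real.norm_eq_abs]

lemma itd_add {n : ℕ} {f g : ℝ → ℝ} (hf : ContDiff ℝ n f) (hg : ContDiff ℝ n g) (x : ℝ) :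
    iteratedDeriv n (fun y => f y + g y) x = iteratedDeriv n f x + iteratedDeriv n g x := by
  have := iteratedDerivWithin_add (Set.mem_univ x) uniqueDiffOn_univ hf.contDiffWithinAt hg.contDiffWithinAt
  simp only [iteratedDerivWithin_univ] at this
  exact this

lemma itd_const_add (c : ℝ) {n : ℕ} (hn : 0 < n) (f : ℝ → ℝ) (x : ℝ) :
    iteratedDeriv n (fun y => c + f y) x = iteratedDeriv n f x := by
  have := iteratedDerivWithin_const_add (x := x) (s := Set.univ) hn (f := f) c
  simpa [iteratedDerivWithin_univ] using this

lemma itd_const_mul (c : ℝ) {n : ℕ} {f : ℝ → ℝ} (hf : ContDiff ℝ n f) (x : ℝ) :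
    iteratedDeriv n (fun y => c * f y) x = c * iteratedDeriv n f x := by
  have := iteratedDerivWithin_const_mul (Set.mem_univ x) uniqueDiffOn_univ c hf.contDiffWithinAt
  simpa [iteratedDerivWithin_univ] using this

lemma itd_sub_const (c : ℝ) {n : ℕ} (hn : 0 < n) (f : ℝ → ℝ) (x : ℝ) :
    iteratedDeriv n (fun y => f y - c) x = iteratedDeriv n f x := by
  obtain ⟨m, rfl⟩ := Nat.exists_eq_succ_of_ne_zero hn.ne'
  rw [iteratedDeriv_succ', iteratedDeriv_succ']
  congr 1
  funext y
  exact deriv_sub_const c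

lemma itd_of_deriv (n : ℕ) (f : ℝ → ℝ) :
    iteratedDeriv n (deriv f) = iteratedDeriv (n + 1) f := (iteratedDeriv_succ').symm

structure Pack (k : ℕ) (M : ℝ) : Type where
  b : ℝ → ℝ
  i : ℕ
  τ : ℝ → ℝ
  hb : ContDiff ℝ (k + 1) b
  hbM : ∀ l ≤ k + 1, ∀ y : ℝ, |iteratedDeriv l b y| ≤ M
  hi : 1 ≤ i
  hib : ∀ y : ℝ, 2 * |deriv b y| ≤ (i : ℝ)
  hτ : ∀ y : ℝ, τ y + b (τ y) / i = y

namespace Pack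

variable {k : ℕ} {M : ℝ} (S : Pack k M)

lemma hi0 : (0 : ℝ) < S.i := by exact_mod_cast S.hi

lemma habs_b (y : ℝ) : |S.b y| ≤ M := by simpa using S.hbM 0 (Nat.zero_le _) y

lemma habs_b' (y : ℝ) : |deriv S.b y| ≤ M := by
  have := S.hbM 1 (by omega) y
  simpa [iteratedDeriv_one] using this

lemma hb' : ContDiff ℝ k (deriv S.b) := (contDiff_succ_iff_deriv.mp S.hb).2.2

noncomputable def f : ℝ → ℝ := fun y => y + S.b y / S.i

lemma hbdiff : Differentiable ℝ S.b := S.hb.differentiable (by simp)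

lemma hf_hasDeriv (y : ℝ) : HasDerivAt S.f (1 + deriv S.b y / S.i) y :=
  (hasDerivAt_id y).add (((S.hbdiff y).hasDerivAt).div_const _)

lemma habs_b'_div (y : ℝ) : |deriv S.b y / S.i| ≤ 1 / 2 := by
  rw [abs_div, abs_of_pos S.hi0, div_le_div_iff₀ S.hi0 (by norm_num)]
  have := S.hib y
  linarith

lemma hg_lb (y : ℝ) : 1 / 2 ≤ 1 + deriv S.b y / S.i := by
  have := abs_le.mp (S.habs_b'_div y)
  linarith

lemma hg_ub (y : ℝ) : 1 + deriv S.b y / S.i ≤ 3 / 2 := by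
  have := abs_le.mp (S.habs_b'_div y)
  linarith

lemma hg_pos (y : ℝ) : 0 < 1 + deriv S.b y / S.i := lt_of_lt_of_le (by norm_num) (S.hg_lb y)

lemma f_strictMono : StrictMono S.f :=
  strictMono_of_hasDerivAt_pos S.hf_hasDeriv S.hg_pos

lemma f_τ (y : ℝ) : S.f (S.τ y) = y := S.hτ y

lemma τ_f (x : ℝ) : S.τ (S.f x) = x := S.f_strictMono.injective (S.f_τ (S.f x))

lemma f_surj : Function.Surjective S.f := fun y => ⟨S.τ y, S.f_τ y⟩

lemma f_bij : Function.Bijective S.f := ⟨S.f_strictMono.injective, S.f_surj⟩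

lemma τ_strictMono : StrictMono S.τ := by
  intro a c hac
  have h1 : S.f (S.τ a) < S.f (S.τ c) := by rw [S.f_τ, S.f_τ]; exact hac
  exact S.f_strictMono.lt_iff_lt.mp h1

lemma τ_surj : Function.Surjective S.τ := fun x => ⟨S.f x, S.τ_f x⟩

lemma τ_continuous : Continuous S.τ := by
  have := (StrictMono.orderIsoOfSurjective S.τ S.τ_strictMono S.τ_surj).continuous
  rwa [StrictMono.coe_orderIsoOfSurjective] at this

lemma τ_hasDeriv (y : ℝ) :
    HasDerivAt S.τ ((1 + deriv S.b (S.τ y) / S.i)⁻¹) y := by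
  apply HasDerivAt.of_local_left_inverse S.τ_continuous.continuousAt
    (S.hf_hasDeriv (S.τ y)) (ne_of_gt (S.hg_pos (S.τ y)))
  exact Filter.Eventually.of_forall fun x => S.f_τ x

lemma deriv_τ (y : ℝ) : deriv S.τ y = (1 + deriv S.b (S.τ y) / S.i)⁻¹ :=
  (S.τ_hasDeriv y).deriv

lemma h_lb (y : ℝ) : 2 / 3 ≤ deriv S.τ y := by
  rw [S.deriv_τ]
  rw [le_inv_comm₀ (by norm_num) (S.hg_pos _)]
  calc 1 + deriv S.b (S.τ y) / S.i ≤ 3 / 2 := S.hg_ub _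
  _ = (2/3 : ℝ)⁻¹ := by norm_num

lemma h_ub (y : ℝ) : deriv S.τ y ≤ 2 := by
  rw [S.deriv_τ]
  rw [inv_le_comm₀ (S.hg_pos _) (by norm_num)]
  calc (2:ℝ)⁻¹ = 1/2 := by norm_num
  _ ≤ _ := S.hg_lb _

lemma h_pos (y : ℝ) : 0 < deriv S.τ y := lt_of_lt_of_le (by norm_num) (S.h_lb y)

end Pack

open Finset
namespace Pack
variable {k : ℕ} {M : ℝ} (S : Pack k M)

lemma τ_contDiff_nat : ∀ m : ℕ, m ≤ k + 1 → ContDiff ℝ m S.τ := by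
  intro m
  induction m with
  | zero => intro _; exact contDiff_zero.mpr S.τ_continuous
  | succ m ih =>
    intro hm
    have hτm : ContDiff ℝ m S.τ := ih (by omega)
    have hcomp : ContDiff ℝ m (fun y => deriv S.b (S.τ y)) := by
      have : ContDiff ℝ m (deriv S.b) := S.hb'.of_le (by exact_mod_cast (by omega : m ≤ k))
      exact this.comp hτm
    have hdτ : ContDiff ℝ m (deriv S.τ) := by
      have hder : deriv S.τ = fun y => (1 + deriv S.b (S.τ y) / S.i)⁻¹ :=
        funext fun y => S.deriv_τ y
      rw [hder]
      exact ((contDiff_const.add (hcomp.div_const _))).inv fun y => (ne_of_gt (S.hg_pos _))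
    have : ContDiff ℝ ((m : WithTop ℕ∞) + 1) S.τ := by
      refine contDiff_succ_iff_deriv.mpr ⟨fun y => (S.τ_hasDeriv y).differentiableAt, ?_, hdτ⟩
      intro h
      simp at h
    exact_mod_cast this

lemma τ_contDiff : ContDiff ℝ (k + 1) S.τ := by
  have := S.τ_contDiff_nat (k + 1) le_rfl
  exact_mod_cast this

lemma h_contDiff : ContDiff ℝ k (deriv S.τ) := by
  have := (contDiff_succ_iff_deriv.mp S.τ_contDiff).2.2
  exact this

lemma h_eq (y : ℝ) :
    deriv S.τ y = 1 - deriv S.b (S.τ y) * deriv S.τ y / S.i := by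
  have hg : (1 + deriv S.b (S.τ y) / S.i) ≠ 0 := ne_of_gt (S.hg_pos _)
  have hi : (S.i : ℝ) ≠ 0 := ne_of_gt S.hi0
  rw [S.deriv_τ, eq_sub_iff_add_eq]
  have : (1 + deriv S.b (S.τ y) / S.i)⁻¹ + deriv S.b (S.τ y) * (1 + deriv S.b (S.τ y) / S.i)⁻¹ / S.i
      = (1 + deriv S.b (S.τ y) / S.i)⁻¹ * (1 + deriv S.b (S.τ y) / S.i) := by ring
  rw [this, inv_mul_cancel₀ hg]

lemma habs_h_sub_one (y : ℝ) : |deriv S.τ y - 1| ≤ 2 * M / S.i := by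
  have h1 : deriv S.τ y - 1 = -(deriv S.b (S.τ y) * deriv S.τ y / S.i) := by
    have := S.h_eq y; linarith
  rw [h1, abs_neg, abs_div, abs_of_pos S.hi0, abs_mul]
  rw [div_le_div_iff_of_pos_right S.hi0]
  have hh2 : |deriv S.τ y| ≤ 2 := by rw [abs_of_pos (S.h_pos y)]; exact S.h_ub y
  calc |deriv S.b (S.τ y)| * |deriv S.τ y|
      ≤ M * 2 := mul_le_mul (S.habs_b' (S.τ y)) hh2 (abs_nonneg _) ((abs_nonneg (deriv S.b (S.τ y))).trans (S.habs_b' (S.τ y)))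
    _ = 2 * M := by ring

lemma habs_τ_sub (y : ℝ) : |S.τ y - y| ≤ M / S.i := by
  have h1 : S.τ y - y = -(S.b (S.τ y) / S.i) := by
    have := S.hτ y; linarith
  rw [h1, abs_neg, abs_div, abs_of_pos S.hi0]
  exact (div_le_div_iff_of_pos_right S.hi0).mpr (S.habs_b (S.τ y))

lemma habs_itd_b' (s : ℕ) (hs : s ≤ k) (z : ℝ) :
    |iteratedDeriv s (deriv S.b) z| ≤ M := by
  rw [itd_of_deriv]
  exact S.hbM (s + 1) (by omega) z

end Pack

lemma choose_le_two_pow_real (n m : ℕ) : (n.choose m : ℝ) ≤ 2 ^ n := by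
  have h : n.choose m ≤ 2 ^ n := by
    rcases le_or_gt m n with h | h
    · calc n.choose m ≤ ∑ r ∈ range (n + 1), n.choose r :=
            Finset.single_le_sum (fun _ _ => Nat.zero_le _) (mem_range.mpr (by omega))
        _ = 2 ^ n := Nat.sum_range_choose n
    · simp [Nat.choose_eq_zero_of_lt h]
  exact_mod_cast h

namespace Pack

variable {k : ℕ} {M : ℝ} (S : Pack k M)

lemma itd_τ (s : ℕ) (hs : 1 ≤ s) :
    iteratedDeriv s S.τ = iteratedDeriv (s - 1) (deriv S.τ) := by
  obtain ⟨m, rfl⟩ := Nat.exists_eq_succ_of_ne_zero (by omega : s ≠ 0)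
  rw [iteratedDeriv_succ']
  simp

lemma comp_bound (hM : 0 ≤ M) {m : ℕ} (hm : m ≤ k) {D : ℝ} (hD : 1 ≤ D)
    (hDh : ∀ s, 1 ≤ s → s ≤ m → ∀ y : ℝ, |iteratedDeriv s S.τ y| ≤ D) (y : ℝ) :
    |iteratedDeriv m (fun z => deriv S.b (S.τ z)) y| ≤ (Nat.factorial m) * (M + 1) * D ^ m := by
  have hshape : (fun z => deriv S.b (S.τ z)) = (deriv S.b) ∘ S.τ := rfl
  rw [hshape, ← abs_itd]
  apply norm_iteratedFDeriv_comp_le (N := (k : WithTop ℕ∞)) S.hb'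
    (S.τ_contDiff_nat k (by omega)) (by exact_mod_cast hm) y
  · intro s hs
    rw [abs_itd]
    exact (S.habs_itd_b' s (hs.trans hm) _).trans (by linarith)
  · intro s h1 hs
    rw [abs_itd]
    exact (hDh s h1 hs y).trans (le_self_pow₀ hD (by omega))

lemma hcomp_contDiff : ContDiff ℝ k (fun z => deriv S.b (S.τ z)) := by
  have := S.hb'.comp (S.τ_contDiff_nat k (by omega))
  simpa [Function.comp_def] using this

lemma habs_b'_le_i (z : ℝ) : |deriv S.b z| ≤ (S.i : ℝ) / 2 := by
  have := S.hib z; linarith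

end Pack

lemma h_derivs (k : ℕ) (M : ℝ) (hM : 0 ≤ M) :
    ∀ j, j ≤ k → ∃ C : ℝ, 2 ≤ C ∧ ∀ S : Pack k M, ∀ j' ≤ j, ∀ y : ℝ,
      |iteratedDeriv j' (deriv S.τ) y| ≤ C ∧
      (1 ≤ j' → |iteratedDeriv j' (deriv S.τ) y| ≤ C / S.i) := by
  intro j
  induction j with
  | zero =>
    intro _
    refine ⟨2, le_rfl, fun S j' hj' y => ?_⟩
    interval_cases j'
    refine ⟨?_, fun h => absurd h (by omega)⟩
    rw [iteratedDeriv_zero, abs_of_pos (S.h_pos y)]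
    exact S.h_ub y
  | succ j ih =>
    intro hjk
    obtain ⟨C, hC2, hC⟩ := ih (by omega)
    have hC0 : (0 : ℝ) < C := by linarith
    set D : ℝ := C + 1 with hD_def
    have hD1 : (1 : ℝ) ≤ D := by rw [hD_def]; linarith
    set Ek : ℝ := (Nat.factorial k) * (M + 1) * D ^ k with hEk_def
    have hkfac : (0:ℝ) < (Nat.factorial k) := by exact_mod_cast Nat.factorial_pos k
    have hEk : 0 < Ek := by
      rw [hEk_def]
      apply mul_pos (mul_pos hkfac (by linarith)) (by positivity)
    set B : ℝ := 2 ^ k * Ek * C with hB_def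
    have hB : 0 < B := by rw [hB_def]; positivity
    have hjB : (0:ℝ) ≤ 2 * (j + 1) * B := by positivity
    refine ⟨C + 2 * (j + 1) * B, by linarith, fun S j' hj' y => ?_⟩
    have hi0 := S.hi0
    by_cases hle : j' ≤ j
    · obtain ⟨h1, h2⟩ := hC S j' hle y
      exact ⟨h1.trans (by linarith), fun hj1 => (h2 hj1).trans
        ((div_le_div_iff_of_pos_right hi0).mpr (by linarith))⟩
    · have hj'eq : j' = j + 1 := by omega
      subst hj'eq
      have hwk : ContDiff ℝ (k : WithTop ℕ∞) (fun z => deriv S.b (S.τ z) * deriv S.τ z) :=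
        S.hcomp_contDiff.mul S.h_contDiff
      have heq : deriv S.τ
          = fun z => 1 + (-(S.i : ℝ)⁻¹) * (deriv S.b (S.τ z) * deriv S.τ z) := by
        funext z
        have h1 := S.h_eq z
        conv_lhs => rw [h1]
        ring
      have hXeq : iteratedDeriv (j + 1) (deriv S.τ) y
          = -(S.i : ℝ)⁻¹ * iteratedDeriv (j + 1)
              (fun z => deriv S.b (S.τ z) * deriv S.τ z) y := by
        conv_lhs => rw [heq]
        rw [itd_const_add 1 (Nat.succ_pos j) _ y,
          itd_const_mul (-(S.i : ℝ)⁻¹) (hwk.of_le (by exact_mod_cast hjk)) y]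
      have habsX : |iteratedDeriv (j + 1) (deriv S.τ) y|
          = (S.i : ℝ)⁻¹ * |iteratedDeriv (j + 1)
              (fun z => deriv S.b (S.τ z) * deriv S.τ z) y| := by
        rw [hXeq, abs_mul, abs_neg, abs_inv, Nat.abs_cast]
      have hleib := norm_iteratedFDeriv_mul_le (𝕜 := ℝ)
        S.hcomp_contDiff S.h_contDiff y (n := j + 1) (by exact_mod_cast hjk)
      simp only [abs_itd] at hleib
      have hsum : ∑ m ∈ range (j + 1 + 1), ((j + 1).choose m : ℝ)
            * |iteratedDeriv m (fun z => deriv S.b (S.τ z)) y|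
            * |iteratedDeriv (j + 1 - m) (deriv S.τ) y|
          ≤ (S.i : ℝ) / 2 * |iteratedDeriv (j + 1) (deriv S.τ) y| + (j + 1) * B := by
        rw [Finset.sum_range_succ']
        have hterm0 : ((j + 1).choose 0 : ℝ)
              * |iteratedDeriv 0 (fun z => deriv S.b (S.τ z)) y|
              * |iteratedDeriv (j + 1 - 0) (deriv S.τ) y|
            ≤ (S.i : ℝ) / 2 * |iteratedDeriv (j + 1) (deriv S.τ) y| := by
          simp only [Nat.choose_zero_right, Nat.cast_one, one_mul, iteratedDeriv_zero,
            Nat.sub_zero]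
          exact mul_le_mul_of_nonneg_right (S.habs_b'_le_i _) (abs_nonneg _)
        have hterms : ∀ m ∈ range (j + 1), ((j + 1).choose (m + 1) : ℝ)
              * |iteratedDeriv (m + 1) (fun z => deriv S.b (S.τ z)) y|
              * |iteratedDeriv (j + 1 - (m + 1)) (deriv S.τ) y| ≤ B := by
          intro m hm
          rw [mem_range] at hm
          have hch : ((j + 1).choose (m + 1) : ℝ) ≤ 2 ^ k :=
            (choose_le_two_pow_real (j + 1) (m + 1)).trans
              (pow_le_pow_right₀ (by norm_num) hjk)
          have hcompb : |iteratedDeriv (m + 1) (fun z => deriv S.b (S.τ z)) y| ≤ Ek := by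
            have hb := S.comp_bound hM (m := m + 1) (by omega) hD1 ?_ y
            · refine hb.trans ?_
              rw [hEk_def]
              have hfac : ((Nat.factorial (m + 1)) : ℝ) ≤ ((Nat.factorial k) : ℝ) :=
                Nat.cast_le.mpr (Nat.factorial_le (by omega))
              have hpow : D ^ (m + 1) ≤ D ^ k := pow_le_pow_right₀ hD1 (by omega)
              exact mul_le_mul (mul_le_mul hfac le_rfl (by linarith) (by linarith)) hpow
                (by positivity) (by positivity)
            · intro s h1 hs z
              rw [S.itd_τ s h1]
              have := (hC S (s - 1) (by omega) z).1
              calc |iteratedDeriv (s - 1) (deriv S.τ) z| ≤ C := this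
                _ ≤ D := by rw [hD_def]; linarith
          have hidx : j + 1 - (m + 1) = j - m := by omega
          have hh : |iteratedDeriv (j + 1 - (m + 1)) (deriv S.τ) y| ≤ C := by
            rw [hidx]; exact (hC S (j - m) (by omega) y).1
          calc ((j + 1).choose (m + 1) : ℝ)
                * |iteratedDeriv (m + 1) (fun z => deriv S.b (S.τ z)) y|
                * |iteratedDeriv (j + 1 - (m + 1)) (deriv S.τ) y|
              ≤ 2 ^ k * Ek * C := by
                apply mul_le_mul (mul_le_mul hch hcompb (abs_nonneg _) (by positivity)) hh
                  (abs_nonneg _) (by positivity)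
            _ = B := hB_def.symm
        have hsum2 : ∑ m ∈ range (j + 1), ((j + 1).choose (m + 1) : ℝ)
              * |iteratedDeriv (m + 1) (fun z => deriv S.b (S.τ z)) y|
              * |iteratedDeriv (j + 1 - (m + 1)) (deriv S.τ) y| ≤ (j + 1) * B := by
          have := Finset.sum_le_card_nsmul (range (j + 1)) _ B hterms
          rwa [Finset.card_range, nsmul_eq_mul, Nat.cast_add, Nat.cast_one] at this
        linarith [hterm0, hsum2]
      have hmain : |iteratedDeriv (j + 1) (deriv S.τ) y| ≤ (C + 2 * (j + 1) * B) / S.i := by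
        have hi' : (S.i : ℝ) ≠ 0 := ne_of_gt hi0
        have h1 : |iteratedDeriv (j + 1) (deriv S.τ) y|
            ≤ (S.i : ℝ)⁻¹ * ((S.i : ℝ) / 2 * |iteratedDeriv (j + 1) (deriv S.τ) y|
                + (j + 1) * B) := by
          calc |iteratedDeriv (j + 1) (deriv S.τ) y|
              = (S.i : ℝ)⁻¹ * |iteratedDeriv (j + 1)
                  (fun z => deriv S.b (S.τ z) * deriv S.τ z) y| := habsX
            _ ≤ _ := mul_le_mul_of_nonneg_left (hleib.trans hsum) (by positivity)
        have h2 : (S.i : ℝ)⁻¹ * ((S.i : ℝ) / 2 * |iteratedDeriv (j + 1) (deriv S.τ) y|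
                + (j + 1) * B)
            = |iteratedDeriv (j + 1) (deriv S.τ) y| / 2 + (j + 1) * B / S.i := by
          field_simp
        rw [h2] at h1
        have h4 : |iteratedDeriv (j + 1) (deriv S.τ) y| ≤ 2 * ((j + 1) * B / S.i) := by
          linarith
        have h5 : 2 * (((j:ℝ) + 1) * B / S.i) = (2 * (j + 1) * B) / S.i := by ring
        rw [h5] at h4
        exact h4.trans ((div_le_div_iff_of_pos_right hi0).mpr (by linarith))
      exact ⟨hmain.trans (div_le_self (by positivity) (by exact_mod_cast S.hi)),
        fun _ => hmain⟩

lemma deriv_zero_fun : deriv (0 : ℝ → ℝ) = 0 := by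
  funext x; exact deriv_const x 0

noncomputable def Af (h : ℝ → ℝ) : ℕ → ℕ → ℝ → ℝ
  | 0, r => if r = 0 then h else 0
  | l + 1, r => fun y => (if r = 0 then 0 else Af h l (r - 1) y * h y) + deriv (Af h l r) y

lemma Af_zero (h : ℝ → ℝ) (r : ℕ) : Af h 0 r = if r = 0 then h else 0 := rfl

lemma Af_succ (h : ℝ → ℝ) (l r : ℕ) : Af h (l + 1) r
    = fun y => (if r = 0 then 0 else Af h l (r - 1) y * h y) + deriv (Af h l r) y := rfl

lemma Af_zero_of_lt (h : ℝ → ℝ) : ∀ l r, l < r → Af h l r = 0 := by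
  intro l
  induction l with
  | zero =>
    intro r hr
    have : r ≠ 0 := by omega
    simp [Af_zero, this]
  | succ l ih =>
    intro r hr
    have hr0 : r ≠ 0 := by omega
    have h1 : Af h l (r - 1) = 0 := ih _ (by omega)
    have h2 : Af h l r = 0 := ih _ (by omega)
    funext y
    simp [Af_succ, hr0, h1, h2, deriv_zero_fun]

lemma Af_deriv_contDiff {k : ℕ} {h : ℝ → ℝ} (hh : ContDiff ℝ (k : WithTop ℕ∞) h) :
    ∀ l, l ≤ k → ∀ r, ContDiff ℝ ((k - l : ℕ) : WithTop ℕ∞) (Af h l r) ∧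
      (l + 1 ≤ k → ContDiff ℝ ((k - (l + 1) : ℕ) : WithTop ℕ∞) (deriv (Af h l r))) := by
  intro l
  induction l with
  | zero =>
    intro _ r
    constructor
    · rw [Af_zero]
      split
      · simpa using hh
      · exact contDiff_const
    · intro h1k
      have hA : ContDiff ℝ ((k : ℕ) : WithTop ℕ∞) (Af h 0 r) := by
        rw [Af_zero]; split
        · exact hh
        · exact contDiff_const
      have hkk : k = (k - 1) + 1 := by omega
      rw [hkk] at hA
      have : ContDiff ℝ (((k - 1 : ℕ) : WithTop ℕ∞) + 1) (Af h 0 r) := by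
        exact_mod_cast hA
      have hd := (contDiff_succ_iff_deriv.mp this).2.2
      have : ((k - 1 : ℕ) : WithTop ℕ∞) = ((k - (0 + 1) : ℕ) : WithTop ℕ∞) := by norm_num
      rwa [this] at hd
  | succ l ih =>
    intro hl r
    have hAl : ∀ r', ContDiff ℝ ((k - l : ℕ) : WithTop ℕ∞) (Af h l r') :=
      fun r' => (ih (by omega) r').1
    have hdAl : ∀ r', ContDiff ℝ ((k - (l + 1) : ℕ) : WithTop ℕ∞) (deriv (Af h l r')) :=
      fun r' => (ih (by omega) r').2 hl
    have hcast1 : ((k - (l + 1) : ℕ) : WithTop ℕ∞) ≤ ((k - l : ℕ) : WithTop ℕ∞) := by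
      exact_mod_cast (by omega : k - (l + 1) ≤ k - l)
    have hcast2 : ((k - (l + 1) : ℕ) : WithTop ℕ∞) ≤ ((k : ℕ) : WithTop ℕ∞) := by
      exact_mod_cast (by omega : k - (l + 1) ≤ k)
    have hmain : ContDiff ℝ ((k - (l + 1) : ℕ) : WithTop ℕ∞) (Af h (l + 1) r) := by
      rw [Af_succ]
      by_cases hr : r = 0
      · subst hr
        have h0 : (fun y => (if (0 : ℕ) = 0 then (0 : ℝ) else Af h l (0 - 1) y * h y)
            + deriv (Af h l 0) y) = deriv (Af h l 0) := by
          funext y; simp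
        rw [h0]
        exact hdAl 0
      · simp only [if_neg hr]
        exact (((hAl (r - 1)).of_le hcast1).mul (hh.of_le hcast2)).add (hdAl r)
    refine ⟨hmain, fun hl1 => ?_⟩
    have hkk : k - (l + 1) = (k - (l + 2)) + 1 := by omega
    rw [hkk] at hmain
    have : ContDiff ℝ (((k - (l + 2) : ℕ) : WithTop ℕ∞) + 1) (Af h (l + 1) r) := by
      exact_mod_cast hmain
    have hd := (contDiff_succ_iff_deriv.mp this).2.2
    have heq : ((k - (l + 2) : ℕ) : WithTop ℕ∞) = ((k - (l + 1 + 1) : ℕ) : WithTop ℕ∞) := by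
      norm_num
    rwa [heq] at hd

lemma Af_contDiff {k : ℕ} {h : ℝ → ℝ} (hh : ContDiff ℝ (k : WithTop ℕ∞) h)
    (l : ℕ) (hl : l ≤ k) (r : ℕ) :
    ContDiff ℝ ((k - l : ℕ) : WithTop ℕ∞) (Af h l r) :=
  (Af_deriv_contDiff hh l hl r).1

namespace Pack

variable {k : ℕ} {M : ℝ} (S : Pack k M)

lemma τ_hasDerivAt_deriv (y : ℝ) : HasDerivAt S.τ (deriv S.τ y) y :=
  (S.τ_hasDeriv y).differentiableAt.hasDerivAt

lemma formula : ∀ l, l ≤ k → ∀ φ : ℝ → ℝ, ContDiff ℝ l φ → ∀ y : ℝ,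
    iteratedDeriv l (fun x => φ (S.τ x) * deriv S.τ x) y
      = ∑ r ∈ range (l + 1), Af (deriv S.τ) l r y * iteratedDeriv r φ (S.τ y) := by
  intro l
  induction l with
  | zero =>
    intro _ φ _ y
    rw [iteratedDeriv_zero, Finset.sum_range_one]
    simp only [Af_zero, reduceIte, iteratedDeriv_zero]
    ring
  | succ l ih =>
    intro hl φ hφ y
    have hφl : ContDiff ℝ l φ := hφ.of_le (by exact_mod_cast Nat.le_succ l)
    have hfun : iteratedDeriv l (fun x => φ (S.τ x) * deriv S.τ x)
        = fun z => ∑ r ∈ range (l + 1), Af (deriv S.τ) l r z * iteratedDeriv r φ (S.τ z) :=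
      funext (ih (by omega) φ hφl)
    rw [iteratedDeriv_succ, hfun]
    have hkl1 : (1 : ℕ) ≤ k - l := by omega
    have hAder : ∀ r, DifferentiableAt ℝ (Af (deriv S.τ) l r) y := fun r => by
      have hA := Af_contDiff S.h_contDiff l (by omega) r
      exact (hA.differentiable (by exact_mod_cast (by omega : k - l ≠ 0))).differentiableAt
    have hφr : ∀ r, r ≤ l → DifferentiableAt ℝ (iteratedDeriv r φ) (S.τ y) := fun r hr => by
      have := hφ.differentiable_iteratedDeriv r (by exact_mod_cast (by omega : r < l + 1))
      exact this.differentiableAt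
    have hcompd : ∀ r, r ≤ l → HasDerivAt (fun z => iteratedDeriv r φ (S.τ z))
        (iteratedDeriv (r + 1) φ (S.τ y) * deriv S.τ y) y := by
      intro r hr
      have h1 : HasDerivAt (iteratedDeriv r φ) (iteratedDeriv (r + 1) φ (S.τ y)) (S.τ y) := by
        rw [iteratedDeriv_succ]
        exact (hφr r hr).hasDerivAt
      exact h1.comp y (S.τ_hasDerivAt_deriv y)
    have hderivterm : ∀ r ∈ range (l + 1),
        HasDerivAt (fun z => Af (deriv S.τ) l r z * iteratedDeriv r φ (S.τ z))
          (deriv (Af (deriv S.τ) l r) y * iteratedDeriv r φ (S.τ y)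
            + Af (deriv S.τ) l r y * (iteratedDeriv (r + 1) φ (S.τ y) * deriv S.τ y)) y := by
      intro r hr
      rw [mem_range] at hr
      exact ((hAder r).hasDerivAt).mul (hcompd r (by omega))
    have hds : deriv (fun z => ∑ r ∈ range (l + 1),
          Af (deriv S.τ) l r z * iteratedDeriv r φ (S.τ z)) y
        = ∑ r ∈ range (l + 1), (deriv (Af (deriv S.τ) l r) y * iteratedDeriv r φ (S.τ y)
            + Af (deriv S.τ) l r y * (iteratedDeriv (r + 1) φ (S.τ y) * deriv S.τ y)) :=
      (HasDerivAt.fun_sum hderivterm).deriv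
    rw [hds]
    have hAf11 : Af (deriv S.τ) l (l + 1) = 0 := Af_zero_of_lt _ _ _ (by omega)
    rw [Finset.sum_add_distrib]
    conv_rhs => rw [Finset.sum_range_succ']
    have hterm : ∀ r ∈ range (l + 1),
        Af (deriv S.τ) (l + 1) (r + 1) y * iteratedDeriv (r + 1) φ (S.τ y)
          = Af (deriv S.τ) l r y * (iteratedDeriv (r + 1) φ (S.τ y) * deriv S.τ y)
            + deriv (Af (deriv S.τ) l (r + 1)) y * iteratedDeriv (r + 1) φ (S.τ y) := by
      intro r _
      rw [Af_succ]
      simp only [Nat.succ_ne_zero, if_false, Nat.add_sub_cancel]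
      ring
    rw [Finset.sum_congr rfl hterm, Finset.sum_add_distrib]
    have hzero : Af (deriv S.τ) (l + 1) 0 y * iteratedDeriv 0 φ (S.τ y)
        = deriv (Af (deriv S.τ) l 0) y * iteratedDeriv 0 φ (S.τ y) := by
      rw [Af_succ]; norm_num
    rw [hzero]
    have hshift : ∑ r ∈ range (l + 1), deriv (Af (deriv S.τ) l r) y * iteratedDeriv r φ (S.τ y)
        = ∑ r ∈ range (l + 1), deriv (Af (deriv S.τ) l (r + 1)) y
            * iteratedDeriv (r + 1) φ (S.τ y)
          + deriv (Af (deriv S.τ) l 0) y * iteratedDeriv 0 φ (S.τ y) := by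
      have h0 : ∑ r ∈ range (l + 1), deriv (Af (deriv S.τ) l r) y * iteratedDeriv r φ (S.τ y)
          = ∑ r ∈ range (l + 1 + 1), deriv (Af (deriv S.τ) l r) y
              * iteratedDeriv r φ (S.τ y) := by
        conv_rhs => rw [Finset.sum_range_succ]
        simp [hAf11, deriv_zero_fun]
      rw [h0, Finset.sum_range_succ']
    rw [hshift]
    ring

end Pack

lemma mul_bound {K n : ℕ} (hn : n ≤ K) {f g : ℝ → ℝ}
    (hf : ContDiff ℝ (K : WithTop ℕ∞) f) (hg : ContDiff ℝ (K : WithTop ℕ∞) g)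
    {Cf Cg : ℝ}
    (hf' : ∀ m ≤ n, ∀ y : ℝ, |iteratedDeriv m f y| ≤ Cf)
    (hg' : ∀ m ≤ n, ∀ y : ℝ, |iteratedDeriv m g y| ≤ Cg) (y : ℝ) :
    |iteratedDeriv n (fun z => f z * g z) y| ≤ 2 ^ n * Cf * Cg := by
  have hCf0 : 0 ≤ Cf := (abs_nonneg _).trans (hf' 0 (Nat.zero_le _) y)
  have hCg0 : 0 ≤ Cg := (abs_nonneg _).trans (hg' 0 (Nat.zero_le _) y)
  have hleib := norm_iteratedFDeriv_mul_le (𝕜 := ℝ) hf hg y (n := n) (by exact_mod_cast hn)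
  simp only [abs_itd] at hleib
  refine hleib.trans ?_
  have hstep : ∑ m ∈ range (n + 1), (n.choose m : ℝ) * |iteratedDeriv m f y|
        * |iteratedDeriv (n - m) g y|
      ≤ ∑ m ∈ range (n + 1), (n.choose m : ℝ) * Cf * Cg := by
    apply Finset.sum_le_sum
    intro m hm
    rw [mem_range] at hm
    exact mul_le_mul (mul_le_mul le_rfl (hf' m (by omega) y) (abs_nonneg _)
      (Nat.cast_nonneg _)) (hg' (n - m) (by omega) y) (abs_nonneg _) (by positivity)
  refine hstep.trans ?_
  rw [← Finset.sum_mul, ← Finset.sum_mul]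
  have hcs : ∑ m ∈ range (n + 1), (n.choose m : ℝ) = 2 ^ n := by
    exact_mod_cast Nat.sum_range_choose n
  rw [hcs]

noncomputable def Bf (h : ℝ → ℝ) (l r : ℕ) : ℝ → ℝ :=
  fun y => Af h l r y - if r = l then 1 else 0

lemma Bf_contDiff {k : ℕ} {h : ℝ → ℝ} (hh : ContDiff ℝ (k : WithTop ℕ∞) h)
    (l : ℕ) (hl : l ≤ k) (r : ℕ) :
    ContDiff ℝ ((k - l : ℕ) : WithTop ℕ∞) (Bf h l r) :=
  (Af_contDiff hh l hl r).sub contDiff_const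

lemma deriv_Bf (h : ℝ → ℝ) (l r : ℕ) : deriv (Bf h l r) = deriv (Af h l r) := by
  funext y
  exact deriv_sub_const _

lemma Bf_zero_zero (h : ℝ → ℝ) : Bf h 0 0 = fun z => h z - 1 := by
  funext z
  simp [Bf, Af_zero]

lemma Bf_succ_zero (h : ℝ → ℝ) (l : ℕ) : Bf h (l + 1) 0 = deriv (Bf h l 0) := by
  funext y
  rw [deriv_Bf]
  simp [Bf, Af_succ]

lemma Bf_succ_mid (h : ℝ → ℝ) (l r : ℕ) (hr : 1 ≤ r) (hrl : r ≤ l) :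
    Bf h (l + 1) r = fun y => Bf h l (r - 1) y * h y + deriv (Bf h l r) y := by
  funext y
  rw [deriv_Bf]
  simp only [Bf, Af_succ, if_neg (by omega : ¬ r = 0), if_neg (by omega : ¬ r = l + 1),
    if_neg (by omega : ¬ r - 1 = l)]
  ring

lemma Bf_succ_top (h : ℝ → ℝ) (l : ℕ) :
    Bf h (l + 1) (l + 1) = fun y => Bf h l l y * h y + (h y - 1) := by
  funext y
  have hA0 : Af h l (l + 1) = 0 := Af_zero_of_lt h l (l + 1) (by omega)
  simp [Bf, Af_succ, hA0, deriv_zero_fun]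
  ring

lemma B_bounds (k : ℕ) (M : ℝ) (hM : 0 ≤ M) :
    ∃ Cb : ℝ, 0 < Cb ∧ ∀ l ≤ k, ∀ S : Pack k M, ∀ r ≤ l, ∀ j ≤ k - l, ∀ y : ℝ,
      |iteratedDeriv j (Bf (deriv S.τ) l r) y| ≤ Cb / S.i := by
  obtain ⟨Ch, hCh2, hCh⟩ := h_derivs k M hM k le_rfl
  have hCh0 : (0 : ℝ) < Ch := by linarith
  -- bound on h - 1 and its derivatives
  have hh1 : ∀ S : Pack k M, ∀ j ≤ k, ∀ y : ℝ,
      |iteratedDeriv j (fun z => deriv S.τ z - 1) y| ≤ (2 * M + Ch) / S.i := by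
    intro S j hj y
    rcases Nat.eq_zero_or_pos j with rfl | hj1
    · rw [iteratedDeriv_zero]
      exact (S.habs_h_sub_one y).trans
        ((div_le_div_iff_of_pos_right S.hi0).mpr (by linarith))
    · rw [itd_sub_const 1 hj1]
      exact ((hCh S j hj y).2 hj1).trans
        ((div_le_div_iff_of_pos_right S.hi0).mpr (by linarith))
  suffices hmain : ∀ l, ∃ Cb : ℝ, 0 < Cb ∧ ∀ l' ≤ l, l' ≤ k → ∀ S : Pack k M, ∀ r ≤ l',
      ∀ j ≤ k - l', ∀ y : ℝ, |iteratedDeriv j (Bf (deriv S.τ) l' r) y| ≤ Cb / S.i by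
    obtain ⟨Cb, hCb0, hCb⟩ := hmain k
    exact ⟨Cb, hCb0, fun l hl S r hr j hj y => hCb l hl hl S r hr j hj y⟩
  intro l
  induction l with
  | zero =>
    refine ⟨2 * M + Ch, by linarith, fun l' hl' _ S r hr j hj y => ?_⟩
    interval_cases l'
    interval_cases r
    rw [Bf_zero_zero]
    exact hh1 S j (by omega) y
  | succ l ihl =>
    obtain ⟨Cb, hCb0, hCb⟩ := ihl
    set Cb' : ℝ := 2 ^ k * Cb * Ch + Cb + (2 * M + Ch) with hCb'_def
    have hCb'0 : 0 < Cb' := by rw [hCb'_def]; positivity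
    have hCbCb' : Cb ≤ Cb' := by
      have h1 : (0:ℝ) < 2 ^ k * Cb * Ch := by positivity
      rw [hCb'_def]; linarith
    refine ⟨Cb', hCb'0, fun l' hl' hl'k S r hr j hj y => ?_⟩
    have hi0 := S.hi0
    by_cases hle : l' ≤ l
    · exact (hCb l' hle (by omega) S r hr j hj y).trans
        ((div_le_div_iff_of_pos_right hi0).mpr hCbCb')
    · have hl'eq : l' = l + 1 := by omega
      subst hl'eq
      have hlk : l ≤ k := by omega
      have hcjkl : ((j : ℕ) : WithTop ℕ∞) ≤ ((k - l : ℕ) : WithTop ℕ∞) := by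
        exact_mod_cast (by omega : j ≤ k - l)
      have hcjk : ((j : ℕ) : WithTop ℕ∞) ≤ ((k : ℕ) : WithTop ℕ∞) := by
        exact_mod_cast (by omega : j ≤ k)
      have hcklk : ((k - l : ℕ) : WithTop ℕ∞) ≤ ((k : ℕ) : WithTop ℕ∞) := by
        exact_mod_cast (by omega : k - l ≤ k)
      -- generic bound for the product term Bf l r' * h
      have hprod : ∀ r' ≤ l, |iteratedDeriv j (fun z => Bf (deriv S.τ) l r' z * deriv S.τ z) y|
          ≤ 2 ^ k * Cb * Ch / S.i := by
        intro r' hr'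
        have hjkl : j ≤ k - l := by omega
        have hb1 := mul_bound (K := k - l) hjkl
          (Bf_contDiff S.h_contDiff l hlk r')
          (S.h_contDiff.of_le hcklk)
          (fun m hm z => hCb l le_rfl hlk S r' hr' m (by omega) z)
          (fun m hm z => (hCh S m (by omega) z).1) y
        refine hb1.trans ?_
        have h2j : (2:ℝ) ^ j ≤ 2 ^ k := pow_le_pow_right₀ (by norm_num) (by omega)
        have heq : (2:ℝ) ^ j * (Cb / S.i) * Ch = 2 ^ j * Cb * Ch / S.i := by ring
        rw [heq]
        apply (div_le_div_iff_of_pos_right hi0).mpr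
        have : (0:ℝ) ≤ Cb * Ch := by positivity
        nlinarith
      -- bound for the deriv term
      have hder : ∀ r' ≤ l, |iteratedDeriv j (deriv (Bf (deriv S.τ) l r')) y| ≤ Cb / S.i := by
        intro r' hr'
        rw [itd_of_deriv]
        exact hCb l le_rfl hlk S r' hr' (j + 1) (by omega) y
      -- smoothness facts for itd_add
      have hT1smooth : ∀ r', ContDiff ℝ (j : WithTop ℕ∞)
          (fun z => Bf (deriv S.τ) l r' z * deriv S.τ z) := fun r' => by
        exact ((Bf_contDiff S.h_contDiff l hlk r').of_le hcjkl).mul (S.h_contDiff.of_le hcjk)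
      have hT2smooth : ∀ r', ContDiff ℝ (j : WithTop ℕ∞) (deriv (Bf (deriv S.τ) l r')) :=
        fun r' => by
          rw [deriv_Bf]
          exact ((Af_deriv_contDiff S.h_contDiff l hlk r').2 (by omega)).of_le
            (show ((j : ℕ) : WithTop ℕ∞) ≤ ((k - (l + 1) : ℕ) : WithTop ℕ∞) by
              exact_mod_cast (by omega : j ≤ k - (l + 1)))
      by_cases hr0 : r = 0
      · subst hr0
        rw [Bf_succ_zero]
        exact (hder 0 (by omega)).trans ((div_le_div_iff_of_pos_right hi0).mpr hCbCb')
      · by_cases hrtop : r = l + 1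
        · subst hrtop
          rw [Bf_succ_top]
          have hsub : ContDiff ℝ (j : WithTop ℕ∞) (fun z => deriv S.τ z - 1) :=
            (S.h_contDiff.of_le hcjk).sub contDiff_const
          have hadd := itd_add (n := j) (hT1smooth l) hsub y
          rw [hadd]
          calc |iteratedDeriv j (fun z => Bf (deriv S.τ) l l z * deriv S.τ z) y
                + iteratedDeriv j (fun z => deriv S.τ z - 1) y|
              ≤ |iteratedDeriv j (fun z => Bf (deriv S.τ) l l z * deriv S.τ z) y|
                + |iteratedDeriv j (fun z => deriv S.τ z - 1) y| := abs_add_le _ _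
            _ ≤ 2 ^ k * Cb * Ch / S.i + (2 * M + Ch) / S.i :=
                add_le_add (hprod l le_rfl) (hh1 S j (by omega) y)
            _ ≤ Cb' / S.i := by
                rw [← add_div]
                apply (div_le_div_iff_of_pos_right hi0).mpr
                rw [hCb'_def]
                linarith
        · rw [Bf_succ_mid _ _ _ (by omega) (by omega)]
          have hadd := itd_add (n := j) (hT1smooth (r - 1)) (hT2smooth r) y
          rw [hadd]
          calc |iteratedDeriv j (fun z => Bf (deriv S.τ) l (r - 1) z * deriv S.τ z) y
                + iteratedDeriv j (deriv (Bf (deriv S.τ) l r)) y|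
              ≤ |iteratedDeriv j (fun z => Bf (deriv S.τ) l (r - 1) z * deriv S.τ z) y|
                + |iteratedDeriv j (deriv (Bf (deriv S.τ) l r)) y| := abs_add_le _ _
            _ ≤ 2 ^ k * Cb * Ch / S.i + Cb / S.i :=
                add_le_add (hprod (r - 1) (by omega)) (hder r (by omega))
            _ ≤ Cb' / S.i := by
                rw [← add_div]
                apply (div_le_div_iff_of_pos_right hi0).mpr
                rw [hCb'_def]
                linarith

end Stmt4

open Stmt4 Finset in
/-- Lemma inv-(ii): for `i ≥ 2‖b'‖_∞`, the map `y ↦ y + b(y)/i` is an increasing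
`C^{k+1}`-diffeomorphism of `ℝ`, whose inverse `τ_i` satisfies `|τ_i(y) − y| ≤ K/i`,
`|τ_i'(y) − 1| ≤ K/i`, `c < τ_i'(y) ≤ K`, together with the expansion
`[φ(τ_i(y))τ_i'(y)]^{(l)} = φ^{(l)}(τ_i(y)) + Σ_{r≤l} β^i_{l,r}(y)φ^{(r)}(τ_i(y))`
where `Σ_{r≤l} i|β^i_{l,r}(y)| ≤ K`; the constants `c, K` depend only on `k` and the
bound `M` on the derivatives of `b`, not on `i`. -/
theorem stmt_4 (k : ℕ) (hk : 1 ≤ k) (M : ℝ) (hM : 0 ≤ M) :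
    ∃ c K : ℝ, 0 < c ∧ 0 < K ∧
      ∀ (b : ℝ → ℝ), ContDiff ℝ (k + 1) b →
        (∀ l ≤ k + 1, ∀ y : ℝ, |iteratedDeriv l b y| ≤ M) →
        ∀ (i : ℕ), 1 ≤ i → (∀ y : ℝ, 2 * |deriv b y| ≤ (i : ℝ)) →
          (StrictMono (fun y : ℝ => y + b y / i) ∧
            Function.Bijective (fun y : ℝ => y + b y / i) ∧
            ContDiff ℝ (k + 1) (fun y : ℝ => y + b y / i)) ∧
          ∀ τi : ℝ → ℝ, (∀ y : ℝ, τi y + b (τi y) / i = y) →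
            ContDiff ℝ (k + 1) τi ∧
            (∀ y : ℝ, |τi y - y| ≤ K / i ∧ |deriv τi y - 1| ≤ K / i ∧
              c < deriv τi y ∧ deriv τi y ≤ K) ∧
            ∃ β : ℕ → ℕ → ℝ → ℝ,
              (∀ l ≤ k, ∀ y : ℝ,
                  ∑ r ∈ Finset.range (l + 1), (i : ℝ) * |β l r y| ≤ K) ∧
              (∀ l ≤ k, ∀ φ : ℝ → ℝ, ContDiff ℝ l φ → ∀ y : ℝ,
                  iteratedDeriv l (fun x => φ (τi x) * deriv τi x) y =
                    iteratedDeriv l φ (τi y) +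
                      ∑ r ∈ Finset.range (l + 1), β l r y * iteratedDeriv r φ (τi y)) := by
  obtain ⟨Cb, hCb0, hCb⟩ := Stmt4.B_bounds k M hM
  set K : ℝ := max (2 * M + 2) ((k + 1) * Cb) with hK_def
  have hK1 : 2 * M + 2 ≤ K := le_max_left _ _
  have hK2 : (k + 1 : ℝ) * Cb ≤ K := le_max_right _ _
  have hK0 : 0 < K := lt_of_lt_of_le (by linarith) hK1
  refine ⟨1 / 2, K, by norm_num, hK0, ?_⟩
  intro b hb hbM i hi hib
  have hi0 : (0 : ℝ) < (i : ℝ) := by exact_mod_cast hi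
  have hbdiff : Differentiable ℝ b := hb.differentiable (by simp)
  have hfd : ∀ y : ℝ, HasDerivAt (fun z : ℝ => z + b z / i) (1 + deriv b y / i) y :=
    fun y => (hasDerivAt_id y).add ((hbdiff y).hasDerivAt.div_const _)
  have hpos : ∀ y : ℝ, 0 < 1 + deriv b y / i := by
    intro y
    have h1 := hib y
    have h2 : |deriv b y / i| ≤ 1 / 2 := by
      rw [abs_div, abs_of_pos hi0, div_le_div_iff₀ hi0 (by norm_num)]
      linarith
    have := abs_le.mp h2
    linarith
  have hsm : StrictMono (fun z : ℝ => z + b z / i) := strictMono_of_hasDerivAt_pos hfd hpos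
  have hcd : ContDiff ℝ (k + 1) (fun z : ℝ => z + b z / i) := contDiff_id.add (hb.div_const _)
  have habsb : ∀ y : ℝ, |b y / i| ≤ M := by
    intro y
    rw [abs_div, abs_of_pos hi0]
    calc |b y| / i ≤ M / i :=
          (div_le_div_iff_of_pos_right hi0).mpr (by simpa using hbM 0 (by omega) y)
      _ ≤ M := div_le_self hM (by exact_mod_cast hi)
  have hsurj : Function.Surjective (fun z : ℝ => z + b z / i) := by
    intro z
    have hle : z - M ≤ z + M := by linarith
    have hmem : z ∈ Set.Icc ((fun z : ℝ => z + b z / i) (z - M))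
        ((fun z : ℝ => z + b z / i) (z + M)) := by
      constructor
      · have := abs_le.mp (habsb (z - M))
        simp only
        linarith
      · have := abs_le.mp (habsb (z + M))
        simp only
        linarith
    obtain ⟨x, _, hx⟩ := intermediate_value_Icc hle hcd.continuous.continuousOn hmem
    exact ⟨x, hx⟩
  refine ⟨⟨hsm, ⟨hsm.injective, hsurj⟩, hcd⟩, ?_⟩
  intro τi hτi
  set S : Pack k M := ⟨b, i, τi, hb, hbM, hi, hib, hτi⟩ with hS_def
  have hSτ : S.τ = τi := rfl
  refine ⟨?_, ?_, ?_⟩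
  · have := S.τ_contDiff
    rwa [hSτ] at this
  · intro y
    have hτs := S.habs_τ_sub y
    have hh1 := S.habs_h_sub_one y
    have hlb := S.h_lb y
    have hub := S.h_ub y
    rw [hSτ] at hτs hh1 hlb hub
    refine ⟨hτs.trans ?_, hh1.trans ?_, by linarith, by linarith⟩
    · exact (div_le_div_iff_of_pos_right hi0).mpr (by linarith)
    · exact (div_le_div_iff_of_pos_right hi0).mpr (by linarith)
  · refine ⟨fun l r => Bf (deriv τi) l r, ?_, ?_⟩
    · intro l hl y
      have hterm : ∀ r ∈ range (l + 1), (i : ℝ) * |Bf (deriv τi) l r y| ≤ Cb := by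
        intro r hr
        rw [mem_range] at hr
        have hB := hCb l hl S r (by omega) 0 (by omega) y
        rw [iteratedDeriv_zero, hSτ] at hB
        calc (i : ℝ) * |Bf (deriv τi) l r y| ≤ i * (Cb / i) :=
              mul_le_mul_of_nonneg_left hB (by positivity)
          _ = Cb := by field_simp
      calc ∑ r ∈ range (l + 1), (i : ℝ) * |Bf (deriv τi) l r y|
          ≤ (l + 1) * Cb := by
            have := Finset.sum_le_card_nsmul (range (l + 1)) _ Cb hterm
            rwa [Finset.card_range, nsmul_eq_mul, Nat.cast_add, Nat.cast_one] at this
        _ ≤ (k + 1) * Cb := by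
            have : ((l : ℝ) + 1) ≤ (k : ℝ) + 1 := by exact_mod_cast Nat.succ_le_succ hl
            nlinarith
        _ ≤ K := hK2
    · intro l hl φ hφ y
      have hf := S.formula l hl φ hφ y
      rw [hSτ] at hf
      rw [hf]
      have hsplit : ∀ r ∈ range (l + 1),
          Af (deriv τi) l r y * iteratedDeriv r φ (τi y)
            = Bf (deriv τi) l r y * iteratedDeriv r φ (τi y)
              + (if r = l then iteratedDeriv r φ (τi y) else 0) := by
        intro r _
        rw [show Bf (deriv τi) l r y = Af (deriv τi) l r y - if r = l then 1 else 0 from rfl]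
        by_cases hrl : r = l <;> simp [hrl] <;> ring
      rw [Finset.sum_congr rfl hsplit, Finset.sum_add_distrib]
      rw [Finset.sum_ite_eq' (range (l + 1)) l (fun r => iteratedDeriv r φ (τi y))]
      rw [if_pos (mem_range.mpr (by omega : l < l + 1))]
      ring
end

section
/- Let (G,𝒢,q) be a σ-finite measure space and G_i ∈ 𝒢 with q(G_i) < ∞. Let b, γ : ℝ → ℝ be bounded measurable with γ ≥ 0, h : ℝ × G → ℝ measurable, and i ≥ 1 an integer. Define, for bounded measurable φ : ℝ → ℝ, L^i φ(y) = i[φ(y + b(y)/i) − φ(y)] + γ(y)∫_{G_i} [φ(y + h(y,z)) − φ(y)] q(dz). Let f_i be a probability measure on ℝ. Then there is at most one family (f_i(t, dy))_{t ≥ 0} of finite signed measures on ℝ such that t ↦ f_i(t, A) is measurable for each Borel A, sup_{t ∈ [0,T]} ‖f_i(t)‖_{TV} < ∞ for all T > 0, and for all bounded measurable φ and all t ≥ 0: ∫_ℝ φ(y) f_i(t, dy) = ∫_ℝ φ(y) f_i(dy) + ∫_0^t ∫_ℝ L^i φ(y) f_i(s, dy) ds. -/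
open MeasureTheory
open scoped ENNReal

/-- Integral of a function against a finite signed measure, via the Jordan decomposition. -/
noncomputable def signedIntegral (φ : ℝ → ℝ) (s : SignedMeasure ℝ) : ℝ :=
  (∫ y, φ y ∂s.toJordanDecomposition.posPart) - ∫ y, φ y ∂s.toJordanDecomposition.negPart

/-- The approximate generator
`L^i φ(y) = i[φ(y + b(y)/i) − φ(y)] + γ(y)∫_{G_i}[φ(y + h(y,z)) − φ(y)] q(dz)`. -/
noncomputable def LiOp {G : Type*} [MeasurableSpace G] (q : Measure G) (Gi : Set G)
    (b γ : ℝ → ℝ) (h : ℝ → G → ℝ) (i : ℕ) (φ : ℝ → ℝ) : ℝ → ℝ := fun y =>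
  (i : ℝ) * (φ (y + b y / i) - φ y) + γ y * ∫ z in Gi, (φ (y + h y z) - φ y) ∂q

/-- The family `(f(t,dy))_{t ≥ 0}` of finite signed measures is a solution of the weak
Fokker–Planck equation (eql) for `L^i`, with initial condition the probability
measure `f₀`: measurability in `t`, local boundedness in total variation, and
`∫ φ df(t) = ∫ φ df₀ + ∫_0^t ∫ L^i φ df(s) ds` for all bounded measurable `φ`. -/
def IsWeakSol {G : Type*} [MeasurableSpace G] (q : Measure G) (Gi : Set G)
    (b γ : ℝ → ℝ) (h : ℝ → G → ℝ) (i : ℕ) (f₀ : Measure ℝ)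
    (f : ℝ → SignedMeasure ℝ) : Prop :=
  (∀ A : Set ℝ, MeasurableSet A → Measurable fun t => f t A) ∧
  (∀ T : ℝ, 0 < T → ∃ C : ℝ≥0∞, C < ⊤ ∧
      ∀ t ∈ Set.Icc (0 : ℝ) T, (f t).totalVariation Set.univ ≤ C) ∧
  (∀ φ : ℝ → ℝ, Measurable φ → (∃ M : ℝ, ∀ y : ℝ, |φ y| ≤ M) →
      ∀ t : ℝ, 0 ≤ t →
        signedIntegral φ (f t)
          = (∫ y, φ y ∂f₀)
            + ∫ s in (0:ℝ)..t, signedIntegral (LiOp q Gi b γ h i φ) (f s))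

open Set Filter Topology

section Helpers

lemma integrable_of_bdd {α : Type*} [MeasurableSpace α] {ψ : α → ℝ} (hm : Measurable ψ)
    {M : ℝ} (hb : ∀ y, |ψ y| ≤ M)
    (μ : Measure α) [IsFiniteMeasure μ] : Integrable ψ μ :=
  (integrable_const M).mono' hm.aestronglyMeasurable
    (Filter.Eventually.of_forall (by simpa [Real.norm_eq_abs] using hb))

lemma sm_apply (s : SignedMeasure ℝ) {A : Set ℝ} (hA : MeasurableSet A) :
    s A = (s.toJordanDecomposition.posPart A).toReal
      - (s.toJordanDecomposition.negPart A).toReal := by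
  conv_lhs => rw [← s.toSignedMeasure_toJordanDecomposition]
  rw [JordanDecomposition.toSignedMeasure, VectorMeasure.sub_apply,
    Measure.toSignedMeasure_apply_measurable hA, Measure.toSignedMeasure_apply_measurable hA]
  rfl

lemma signedIntegral_indicator (s : SignedMeasure ℝ) {A : Set ℝ} (hA : MeasurableSet A) (c : ℝ) :
    signedIntegral (A.indicator fun _ => c) s = c * s A := by
  unfold signedIntegral
  rw [integral_indicator_const c hA, integral_indicator_const c hA, sm_apply s hA]
  simp [smul_eq_mul]
  unfold Measure.real
  ring

lemma signedIntegral_sub_measure (s₁ s₂ : SignedMeasure ℝ) {ψ : ℝ → ℝ}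
    (hm : Measurable ψ) {M : ℝ} (hb : ∀ y, |ψ y| ≤ M) :
    signedIntegral ψ (s₁ - s₂) = signedIntegral ψ s₁ - signedIntegral ψ s₂ := by
  set P := (s₁ - s₂).toJordanDecomposition.posPart with hP
  set N := (s₁ - s₂).toJordanDecomposition.negPart with hN
  set p₁ := s₁.toJordanDecomposition.posPart
  set n₁ := s₁.toJordanDecomposition.negPart
  set p₂ := s₂.toJordanDecomposition.posPart
  set n₂ := s₂.toJordanDecomposition.negPart
  have key : P + n₁ + p₂ = N + p₁ + n₂ := by
    ext A hA
    have h1 : (s₁ - s₂) A = s₁ A - s₂ A := VectorMeasure.sub_apply _ _ _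
    rw [sm_apply _ hA, sm_apply s₁ hA, sm_apply s₂ hA] at h1
    rw [Measure.add_apply, Measure.add_apply, Measure.add_apply, Measure.add_apply]
    rw [← ENNReal.toReal_eq_toReal_iff' (by finiteness) (by finiteness)]
    rw [ENNReal.toReal_add (by finiteness) (by finiteness),
      ENNReal.toReal_add (by finiteness) (by finiteness),
      ENNReal.toReal_add (by finiteness) (by finiteness),
      ENNReal.toReal_add (by finiteness) (by finiteness)]
    linarith
  have hi : ∀ μ : Measure ℝ, IsFiniteMeasure μ → Integrable ψ μ := fun μ hμ =>
    @integrable_of_bdd _ _ _ hm M hb μ hμ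
  have hint : ∫ y, ψ y ∂(P + n₁ + p₂) = ∫ y, ψ y ∂(N + p₁ + n₂) := by rw [key]
  rw [integral_add_measure ((hi _ inferInstance).add_measure (hi _ inferInstance))
      (hi _ inferInstance),
    integral_add_measure (hi _ inferInstance) (hi _ inferInstance),
    integral_add_measure ((hi _ inferInstance).add_measure (hi _ inferInstance))
      (hi _ inferInstance),
    integral_add_measure (hi _ inferInstance) (hi _ inferInstance)] at hint
  unfold signedIntegral
  linarith

lemma abs_apply_le_tv (s : SignedMeasure ℝ) {A : Set ℝ} (hA : MeasurableSet A) :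
    |s A| ≤ (s.totalVariation Set.univ).toReal := by
  rw [sm_apply s hA]
  have h1 : (s.toJordanDecomposition.posPart A).toReal
      ≤ (s.toJordanDecomposition.posPart Set.univ).toReal :=
    ENNReal.toReal_mono (measure_ne_top _ _) (measure_mono (subset_univ A))
  have h2 : (s.toJordanDecomposition.negPart A).toReal
      ≤ (s.toJordanDecomposition.negPart Set.univ).toReal :=
    ENNReal.toReal_mono (measure_ne_top _ _) (measure_mono (subset_univ A))
  rw [SignedMeasure.totalVariation, Measure.add_apply,
    ENNReal.toReal_add (measure_ne_top _ _) (measure_ne_top _ _)]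
  have := ENNReal.toReal_nonneg (a := s.toJordanDecomposition.posPart A)
  have := ENNReal.toReal_nonneg (a := s.toJordanDecomposition.negPart A)
  rw [abs_sub_le_iff]
  constructor <;> linarith

lemma abs_signedIntegral_le (s : SignedMeasure ℝ) {ψ : ℝ → ℝ} (hm : Measurable ψ)
    {M : ℝ} (hM : 0 ≤ M) (hb : ∀ y, |ψ y| ≤ M) :
    |signedIntegral ψ s| ≤ M * (s.totalVariation Set.univ).toReal := by
  unfold signedIntegral
  have h1 : ‖∫ y, ψ y ∂s.toJordanDecomposition.posPart‖
      ≤ M * (s.toJordanDecomposition.posPart Set.univ).toReal :=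
    norm_integral_le_of_norm_le_const (Filter.Eventually.of_forall
      (by simpa [Real.norm_eq_abs] using hb))
  have h2 : ‖∫ y, ψ y ∂s.toJordanDecomposition.negPart‖
      ≤ M * (s.toJordanDecomposition.negPart Set.univ).toReal :=
    norm_integral_le_of_norm_le_const (Filter.Eventually.of_forall
      (by simpa [Real.norm_eq_abs] using hb))
  rw [Real.norm_eq_abs] at h1 h2
  rw [SignedMeasure.totalVariation, Measure.add_apply,
    ENNReal.toReal_add (measure_ne_top _ _) (measure_ne_top _ _)]
  calc |(∫ y, ψ y ∂s.toJordanDecomposition.posPart) - ∫ y, ψ y ∂s.toJordanDecomposition.negPart|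
      ≤ |∫ y, ψ y ∂s.toJordanDecomposition.posPart|
        + |∫ y, ψ y ∂s.toJordanDecomposition.negPart| := abs_sub _ _
    _ ≤ _ := by rw [mul_add]; exact add_le_add h1 h2

lemma tv_toReal_eq (s : SignedMeasure ℝ) :
    ∃ S : Set ℝ, MeasurableSet S ∧ (s.totalVariation Set.univ).toReal = s S - s Sᶜ := by
  obtain ⟨u, hu, hpu, hnuc⟩ := s.toJordanDecomposition.mutuallySingular
  refine ⟨uᶜ, hu.compl, ?_⟩
  have h1 : s uᶜ = (s.toJordanDecomposition.posPart uᶜ).toReal := by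
    rw [sm_apply s hu.compl, hnuc, ENNReal.toReal_zero, sub_zero]
  have h2 : s uᶜᶜ = -(s.toJordanDecomposition.negPart u).toReal := by
    rw [compl_compl, sm_apply s hu, hpu, ENNReal.toReal_zero, zero_sub]
  have hp : s.toJordanDecomposition.posPart Set.univ = s.toJordanDecomposition.posPart uᶜ := by
    rw [← measure_add_measure_compl hu, hpu, zero_add]
  have hn : s.toJordanDecomposition.negPart Set.univ = s.toJordanDecomposition.negPart u := by
    rw [← measure_add_measure_compl hu, hnuc, add_zero]
  rw [SignedMeasure.totalVariation, Measure.add_apply,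
    ENNReal.toReal_add (measure_ne_top _ _) (measure_ne_top _ _), hp, hn, h1, h2]
  ring

lemma measurable_LiOp {G : Type*} [MeasurableSpace G] (q : Measure G) [SigmaFinite q]
    (Gi : Set G) (b γ : ℝ → ℝ) (hbmeas : Measurable b) (hγmeas : Measurable γ)
    (h : ℝ → G → ℝ) (hhmeas : Measurable (Function.uncurry h)) (i : ℕ)
    {φ : ℝ → ℝ} (hφ : Measurable φ) :
    Measurable (LiOp q Gi b γ h i φ) := by
  have h1 : Measurable fun y => φ (y + b y / i) :=
    hφ.comp (measurable_id.add (hbmeas.div_const _))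
  have hF : StronglyMeasurable fun p : ℝ × G => φ (p.1 + h p.1 p.2) - φ p.1 := by
    apply Measurable.stronglyMeasurable
    exact (hφ.comp (measurable_fst.add hhmeas)).sub (hφ.comp measurable_fst)
  have h2 : StronglyMeasurable fun y => ∫ z in Gi, (φ (y + h y z) - φ y) ∂q :=
    hF.integral_prod_right'
  exact ((measurable_const.mul (h1.sub hφ)).add (hγmeas.mul h2.measurable))

lemma abs_LiOp_le {G : Type*} [MeasurableSpace G] (q : Measure G)
    (Gi : Set G) (hGifin : q Gi < ⊤) (b γ : ℝ → ℝ)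
    {Mγ : ℝ} (hγ : ∀ y, |γ y| ≤ Mγ)
    (h : ℝ → G → ℝ) (i : ℕ)
    {φ : ℝ → ℝ} {Mφ : ℝ} (hMφ : 0 ≤ Mφ) (hφ : ∀ y, |φ y| ≤ Mφ) :
    ∀ y, |LiOp q Gi b γ h i φ y| ≤ (2 * i + 2 * Mγ * (q Gi).toReal) * Mφ := by
  intro y
  have hMγ : 0 ≤ Mγ := le_trans (abs_nonneg _) (hγ 0)
  haveI : IsFiniteMeasure (q.restrict Gi) :=
    ⟨by rwa [Measure.restrict_apply_univ]⟩
  have hint : ‖∫ z in Gi, (φ (y + h y z) - φ y) ∂q‖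
      ≤ (2 * Mφ) * (q.restrict Gi Set.univ).toReal := by
    apply norm_integral_le_of_norm_le_const
    apply Filter.Eventually.of_forall
    intro z
    rw [Real.norm_eq_abs]
    calc |φ (y + h y z) - φ y| ≤ |φ (y + h y z)| + |φ y| := abs_sub _ _
      _ ≤ Mφ + Mφ := add_le_add (hφ _) (hφ _)
      _ = 2 * Mφ := by ring
  rw [Measure.restrict_apply_univ, Real.norm_eq_abs] at hint
  have h1 : |(i : ℝ) * (φ (y + b y / i) - φ y)| ≤ (i : ℝ) * (2 * Mφ) := by
    rw [abs_mul, Nat.abs_cast]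
    apply mul_le_mul_of_nonneg_left _ (by positivity)
    calc |φ (y + b y / i) - φ y| ≤ |φ (y + b y / i)| + |φ y| := abs_sub _ _
      _ ≤ 2 * Mφ := by linarith [hφ (y + b y / i), hφ y]
  have h2 : |γ y * ∫ z in Gi, (φ (y + h y z) - φ y) ∂q|
      ≤ Mγ * ((2 * Mφ) * (q Gi).toReal) := by
    rw [abs_mul]
    exact mul_le_mul (hγ y) hint (abs_nonneg _) hMγ
  calc |LiOp q Gi b γ h i φ y|
      ≤ |(i : ℝ) * (φ (y + b y / i) - φ y)|
        + |γ y * ∫ z in Gi, (φ (y + h y z) - φ y) ∂q| := abs_add_le _ _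
    _ ≤ (i : ℝ) * (2 * Mφ) + Mγ * ((2 * Mφ) * (q Gi).toReal) := add_le_add h1 h2
    _ = (2 * i + 2 * Mγ * (q Gi).toReal) * Mφ := by ring

lemma measurable_signedIntegral_comp {f : ℝ → SignedMeasure ℝ}
    (hf : ∀ A : Set ℝ, MeasurableSet A → Measurable fun t => f t A)
    {ψ : ℝ → ℝ} (hm : Measurable ψ) {M : ℝ} (hb : ∀ y, |ψ y| ≤ M) :
    Measurable fun t => signedIntegral ψ (f t) := by
  have hsimple : ∀ g : SimpleFunc ℝ ℝ, Measurable fun t => signedIntegral g (f t) := by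
    intro g
    induction g using SimpleFunc.induction with
    | const c hA =>
      rename_i A
      have hcoe : ⇑(SimpleFunc.piecewise A hA (SimpleFunc.const ℝ c) (SimpleFunc.const ℝ 0))
          = A.indicator fun _ => c := by
        funext x
        simp [SimpleFunc.coe_piecewise, Set.piecewise, Set.indicator]
      simp only [hcoe]
      have : (fun t => signedIntegral (A.indicator fun _ => c) (f t))
          = fun t => c * f t A := by
        funext t; exact signedIntegral_indicator (f t) hA c
      rw [this]
      exact (hf A hA).const_mul c
    | @add g₁ g₂ hdisj hg₁ hg₂ =>
      have hadd : ∀ t, signedIntegral (⇑(g₁ + g₂)) (f t)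
          = signedIntegral g₁ (f t) + signedIntegral g₂ (f t) := by
        intro t
        obtain ⟨M₁, hM₁⟩ : ∃ M₁, ∀ y, |(g₁ : ℝ → ℝ) y| ≤ M₁ := by
          obtain ⟨C, hC⟩ := g₁.exists_forall_norm_le
          exact ⟨C, fun y => by simpa [Real.norm_eq_abs] using hC y⟩
        obtain ⟨M₂, hM₂⟩ : ∃ M₂, ∀ y, |(g₂ : ℝ → ℝ) y| ≤ M₂ := by
          obtain ⟨C, hC⟩ := g₂.exists_forall_norm_le
          exact ⟨C, fun y => by simpa [Real.norm_eq_abs] using hC y⟩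
        unfold signedIntegral
        simp only [SimpleFunc.coe_add, Pi.add_apply]
        rw [integral_add (integrable_of_bdd g₁.measurable hM₁ _)
            (integrable_of_bdd g₂.measurable hM₂ _),
          integral_add (integrable_of_bdd g₁.measurable hM₁ _)
            (integrable_of_bdd g₂.measurable hM₂ _)]
        ring
      simpa only [hadd, Pi.add_def] using hg₁.add hg₂
  set gn := fun n => SimpleFunc.approxOn ψ hm Set.univ 0 (Set.mem_univ 0) n with hgn
  have hlim : ∀ t, Tendsto (fun n => signedIntegral (gn n) (f t)) atTop
      (𝓝 (signedIntegral ψ (f t))) := by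
    intro t
    have hbd : ∀ n y, ‖(gn n : ℝ → ℝ) y‖ ≤ M + M := by
      intro n y
      calc ‖(gn n : ℝ → ℝ) y‖ ≤ ‖ψ y‖ + ‖ψ y‖ := SimpleFunc.norm_approxOn_zero_le hm _ y n
        _ ≤ M + M := by
          rw [Real.norm_eq_abs]; have := hb y; linarith
    have htend : ∀ y, Tendsto (fun n => (gn n : ℝ → ℝ) y) atTop (𝓝 (ψ y)) := fun y =>
      SimpleFunc.tendsto_approxOn hm _ (by simp)
    have hpos : Tendsto (fun n => ∫ y, (gn n : ℝ → ℝ) y ∂(f t).toJordanDecomposition.posPart)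
        atTop (𝓝 (∫ y, ψ y ∂(f t).toJordanDecomposition.posPart)) := by
      apply tendsto_integral_of_dominated_convergence (fun _ => M + M)
        (fun n => (gn n).measurable.aestronglyMeasurable)
        (integrable_const _)
        (fun n => Filter.Eventually.of_forall (fun y => hbd n y))
        (Filter.Eventually.of_forall htend)
    have hneg : Tendsto (fun n => ∫ y, (gn n : ℝ → ℝ) y ∂(f t).toJordanDecomposition.negPart)
        atTop (𝓝 (∫ y, ψ y ∂(f t).toJordanDecomposition.negPart)) := by
      apply tendsto_integral_of_dominated_convergence (fun _ => M + M)
        (fun n => (gn n).measurable.aestronglyMeasurable)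
        (integrable_const _)
        (fun n => Filter.Eventually.of_forall (fun y => hbd n y))
        (Filter.Eventually.of_forall htend)
    exact hpos.sub hneg
  apply measurable_of_tendsto_metrizable (fun n => hsimple (gn n))
  rw [tendsto_pi_nhds]
  exact hlim

lemma intervalIntegrable_of_bdd {F : ℝ → ℝ} (hm : Measurable F) {M t : ℝ} (ht : 0 ≤ t)
    (hb : ∀ s ∈ Set.Ioc (0:ℝ) t, |F s| ≤ M) : IntervalIntegrable F volume 0 t := by
  rw [intervalIntegrable_iff, Set.uIoc_of_le ht]
  haveI : IsFiniteMeasure (volume.restrict (Set.Ioc (0:ℝ) t)) :=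
    ⟨by rw [Measure.restrict_apply_univ]; exact measure_Ioc_lt_top⟩
  apply (integrable_const M).mono' hm.aestronglyMeasurable
  rw [ae_restrict_iff' measurableSet_Ioc]
  exact Filter.Eventually.of_forall fun s hs => by simpa [Real.norm_eq_abs] using hb s hs

end Helpers

/-- Uniqueness part of Lemma cestparti-(i): for `q(G_i) < ∞`, `b, γ` bounded measurable
with `γ ≥ 0`, `h` measurable and `i ≥ 1`, there is at most one family of finite signed
measures solving the weak equation (eql) with initial condition `f₀`. -/
theorem stmt_6 {G : Type*} [MeasurableSpace G]
    (q : Measure G) [SigmaFinite q]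
    (Gi : Set G) (hGimeas : MeasurableSet Gi) (hGifin : q Gi < ⊤)
    (b γ : ℝ → ℝ) (hbmeas : Measurable b) (hbbd : ∃ M : ℝ, ∀ y : ℝ, |b y| ≤ M)
    (hγmeas : Measurable γ) (hγbd : ∃ M : ℝ, ∀ y : ℝ, |γ y| ≤ M)
    (hγpos : ∀ y : ℝ, 0 ≤ γ y)
    (h : ℝ → G → ℝ) (hhmeas : Measurable (Function.uncurry h))
    (i : ℕ) (hi : 1 ≤ i)
    (f₀ : Measure ℝ) [IsProbabilityMeasure f₀]
    (f g : ℝ → SignedMeasure ℝ)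
    (hf : IsWeakSol q Gi b γ h i f₀ f) (hg : IsWeakSol q Gi b γ h i f₀ g) :
    ∀ t : ℝ, 0 ≤ t → f t = g t := by
  obtain ⟨hf1, hf2, hf3⟩ := hf
  obtain ⟨hg1, hg2, hg3⟩ := hg
  obtain ⟨Mγ, hMγ⟩ := hγbd
  have hMγ0 : 0 ≤ Mγ := le_trans (abs_nonneg _) (hMγ 0)
  obtain ⟨K₀, hK₀def⟩ : ∃ x : ℝ, x = 2 * i + 2 * Mγ * (q Gi).toReal := ⟨_, rfl⟩
  have hK₀ : 0 ≤ K₀ := by rw [hK₀def]; positivity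
  obtain ⟨K, hKdef⟩ : ∃ x : ℝ, x = 2 * K₀ := ⟨_, rfl⟩
  have hK : 0 ≤ K := by rw [hKdef]; positivity
  have main : ∀ T : ℝ, 0 < T → ∀ t ∈ Set.Icc (0:ℝ) T, ∀ A : Set ℝ, MeasurableSet A →
      f t A = g t A := by
    intro T hT
    obtain ⟨Cf, hCf_lt, hCf⟩ := hf2 T hT
    obtain ⟨Cg, hCg_lt, hCg⟩ := hg2 T hT
    obtain ⟨B, hBdef⟩ : ∃ x : ℝ, x = Cf.toReal + Cg.toReal := ⟨_, rfl⟩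
    have hB : 0 ≤ B := by rw [hBdef]; positivity
    have claim : ∀ n : ℕ, ∀ t ∈ Set.Icc (0:ℝ) T, ∀ A : Set ℝ, MeasurableSet A →
        |f t A - g t A| ≤ B * (K * t) ^ n / n.factorial := by
      intro n
      induction n with
      | zero =>
        intro t ht A hA
        simp only [pow_zero, Nat.factorial_zero, Nat.cast_one, mul_one, div_one]
        have h1 : |f t A| ≤ Cf.toReal :=
          (abs_apply_le_tv (f t) hA).trans (ENNReal.toReal_mono hCf_lt.ne (hCf t ht))
        have h2 : |g t A| ≤ Cg.toReal :=
          (abs_apply_le_tv (g t) hA).trans (ENNReal.toReal_mono hCg_lt.ne (hCg t ht))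
        calc |f t A - g t A| ≤ |f t A| + |g t A| := abs_sub _ _
          _ ≤ B := by rw [hBdef]; exact add_le_add h1 h2
      | succ n ih =>
        intro t ht A hA
        set φA : ℝ → ℝ := A.indicator fun _ => (1:ℝ) with hφAdef
        have hφAm : Measurable φA := measurable_const.indicator hA
        have hφAb : ∀ y, |φA y| ≤ 1 := by
          intro y; by_cases hy : y ∈ A <;> simp [hφAdef, Set.indicator, hy]
        have eqf := hf3 φA hφAm ⟨1, hφAb⟩ t ht.1
        have eqg := hg3 φA hφAm ⟨1, hφAb⟩ t ht.1
        set ψ : ℝ → ℝ := LiOp q Gi b γ h i φA with hψdef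
        have hψm : Measurable ψ := measurable_LiOp q Gi b γ hbmeas hγmeas h hhmeas i hφAm
        have hψb : ∀ y, |ψ y| ≤ K₀ := by
          intro y
          have := abs_LiOp_le q Gi hGifin b γ hMγ h i (φ := φA) zero_le_one hφAb y
          rw [mul_one] at this
          rw [hK₀def]
          exact this
        have hfA : f t A = signedIntegral φA (f t) := by
          rw [hφAdef, signedIntegral_indicator (f t) hA, one_mul]
        have hgA : g t A = signedIntegral φA (g t) := by
          rw [hφAdef, signedIntegral_indicator (g t) hA, one_mul]
        have hFfb : ∀ s ∈ Set.Ioc (0:ℝ) t, |signedIntegral ψ (f s)| ≤ K₀ * Cf.toReal := by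
          intro s hs
          refine (abs_signedIntegral_le (f s) hψm hK₀ hψb).trans ?_
          exact mul_le_mul_of_nonneg_left
            (ENNReal.toReal_mono hCf_lt.ne (hCf s ⟨hs.1.le, hs.2.trans ht.2⟩)) hK₀
        have hFgb : ∀ s ∈ Set.Ioc (0:ℝ) t, |signedIntegral ψ (g s)| ≤ K₀ * Cg.toReal := by
          intro s hs
          refine (abs_signedIntegral_le (g s) hψm hK₀ hψb).trans ?_
          exact mul_le_mul_of_nonneg_left
            (ENNReal.toReal_mono hCg_lt.ne (hCg s ⟨hs.1.le, hs.2.trans ht.2⟩)) hK₀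
        have hFf : IntervalIntegrable (fun s => signedIntegral ψ (f s)) volume 0 t :=
          intervalIntegrable_of_bdd (measurable_signedIntegral_comp hf1 hψm hψb) ht.1 hFfb
        have hFg : IntervalIntegrable (fun s => signedIntegral ψ (g s)) volume 0 t :=
          intervalIntegrable_of_bdd (measurable_signedIntegral_comp hg1 hψm hψb) ht.1 hFgb
        have hsub : f t A - g t A
            = ∫ s in (0:ℝ)..t, (signedIntegral ψ (f s) - signedIntegral ψ (g s)) := by
          rw [hfA, hgA, eqf, eqg, intervalIntegral.integral_sub hFf hFg]
          ring
        set ρ : ℝ → ℝ := fun s => (K * B * K ^ n / n.factorial) * s ^ n with hρdef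
        have hbound : ∀ s ∈ Set.uIoc (0:ℝ) t,
            ‖signedIntegral ψ (f s) - signedIntegral ψ (g s)‖ ≤ ρ s := by
          intro s hs
          rw [Set.uIoc_of_le ht.1] at hs
          have hsT : s ∈ Set.Icc (0:ℝ) T := ⟨hs.1.le, hs.2.trans ht.2⟩
          rw [Real.norm_eq_abs, ← signedIntegral_sub_measure (f s) (g s) hψm hψb]
          obtain ⟨S, hS, hTV⟩ := tv_toReal_eq (f s - g s)
          have h1 : |signedIntegral ψ (f s - g s)|
              ≤ K₀ * ((f s - g s).totalVariation Set.univ).toReal :=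
            abs_signedIntegral_le _ hψm hK₀ hψb
          have hSS : (f s - g s) S = f s S - g s S := VectorMeasure.sub_apply _ _ _
          have hSc : (f s - g s) Sᶜ = f s Sᶜ - g s Sᶜ := VectorMeasure.sub_apply _ _ _
          have i1 := abs_le.mp (ih s hsT S hS)
          have i2 := abs_le.mp (ih s hsT Sᶜ hS.compl)
          have h2 : ((f s - g s).totalVariation Set.univ).toReal
              ≤ 2 * (B * (K * s) ^ n / n.factorial) := by
            rw [hTV, hSS, hSc]
            linarith [i1.1, i1.2, i2.1, i2.2]
          calc |signedIntegral ψ (f s - g s)|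
              ≤ K₀ * ((f s - g s).totalVariation Set.univ).toReal := h1
            _ ≤ K₀ * (2 * (B * (K * s) ^ n / n.factorial)) :=
                mul_le_mul_of_nonneg_left h2 hK₀
            _ = ρ s := by simp only [hρdef, hKdef]; ring
        have hρint : IntervalIntegrable ρ volume 0 t :=
          (continuous_const.mul (continuous_pow n)).intervalIntegrable 0 t
        have habs := intervalIntegral.norm_integral_le_abs_of_norm_le
          ((ae_restrict_iff' measurableSet_uIoc).mpr (Filter.Eventually.of_forall hbound)) hρint
        have hρval : ∫ s in (0:ℝ)..t, ρ s = B * (K * t) ^ (n + 1) / (n + 1).factorial := by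
          rw [hρdef]
          rw [intervalIntegral.integral_const_mul, integral_pow]
          rw [Nat.factorial_succ]
          have hnf : ((n.factorial : ℝ)) ≠ 0 := Nat.cast_ne_zero.mpr n.factorial_ne_zero
          push_cast
          field_simp
          ring
        have hfin : (0:ℝ) ≤ B * (K * t) ^ (n + 1) / (n + 1).factorial := by
          apply div_nonneg _ (Nat.cast_nonneg _)
          exact mul_nonneg hB (pow_nonneg (mul_nonneg hK ht.1) _)
        rw [hsub]
        calc |∫ s in (0:ℝ)..t, (signedIntegral ψ (f s) - signedIntegral ψ (g s))|
            = ‖∫ s in (0:ℝ)..t, (signedIntegral ψ (f s) - signedIntegral ψ (g s))‖ :=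
              (Real.norm_eq_abs _).symm
          _ ≤ |∫ s in (0:ℝ)..t, ρ s| := habs
          _ = B * (K * t) ^ (n + 1) / (n + 1).factorial := by
              rw [hρval, abs_of_nonneg hfin]
    intro t ht A hA
    have hl : Tendsto (fun n : ℕ => B * (K * t) ^ n / n.factorial) atTop (𝓝 0) := by
      have h1 := FloorSemiring.tendsto_pow_div_factorial_atTop (K * t)
      have h2 := h1.const_mul B
      simpa [mul_div_assoc] using h2
    have hle : |f t A - g t A| ≤ 0 :=
      ge_of_tendsto hl (Filter.Eventually.of_forall fun n => claim n t ht A hA)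
    have : f t A - g t A = 0 := abs_nonpos_iff.mp hle
    linarith
  intro t ht
  apply VectorMeasure.ext
  intro A hA
  exact main (t + 1) (by linarith) t ⟨ht, by linarith⟩ A hA
end

section
/- Let k ≥ 1 be an integer, d > 0, δ > 1, Γ > 0. Let γ : ℝ → (0, Γ] and let g : ℝ × (0,∞) → ℝ be measurable with 0 < |g(y,z)| ≤ e^{−d z^δ} for all y ∈ ℝ, z > 0. Then for every θ > 0, every p ≥ 0 and every constant C > 0 there exist an integer n ≥ 1 and y ∈ ℝ such that (γ(y)/n) ∫_0^{n/γ(y)} |g(y,z)|^{−2k} dz > C(1 + |y|^p) e^{θn}. In fact, for every fixed y ∈ ℝ the left-hand side grows faster in n than any exponential e^{θn}. -/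
open MeasureTheory Filter
open scoped ENNReal

/-- Counterexample: if `0 < |g(y,z)| ≤ e^{−dz^δ}` with `δ > 1` and `γ` is bounded, then
the bound (albr) never holds: for every `θ, p, C` there are `n, y` violating it, and in
fact for each fixed `y` the quantity `(γ(y)/n)∫_0^{n/γ(y)}|g(y,z)|^{−2k}dz` grows faster
than any exponential `e^{θn}`. -/
theorem stmt_12 (k : ℕ) (hk : 1 ≤ k)
    (d δ Γ : ℝ) (hd : 0 < d) (hδ : 1 < δ) (hΓ : 0 < Γ)
    (γ : ℝ → ℝ) (hγ : ∀ y : ℝ, 0 < γ y ∧ γ y ≤ Γ)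
    (g : ℝ → ℝ → ℝ) (hgmeas : Measurable (Function.uncurry g))
    (hgub : ∀ y z : ℝ, 0 < z → 0 < |g y z| ∧ |g y z| ≤ Real.exp (-d * z ^ δ)) :
    (∀ θ : ℝ, 0 < θ → ∀ p : ℝ, 0 ≤ p → ∀ C : ℝ, 0 < C →
      ∃ n : ℕ, 1 ≤ n ∧ ∃ y : ℝ,
        ENNReal.ofReal (C * (1 + |y| ^ p) * Real.exp (θ * n)) <
          ENNReal.ofReal (γ y / n) *
            ∫⁻ z in Set.Ioc (0 : ℝ) ((n : ℝ) / γ y),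
              ENNReal.ofReal ((|g y z| ^ (2 * k))⁻¹)) ∧
    (∀ y : ℝ, ∀ θ : ℝ, 0 < θ →
      Tendsto (fun n : ℕ =>
          (ENNReal.ofReal (γ y / n) *
            ∫⁻ z in Set.Ioc (0 : ℝ) ((n : ℝ) / γ y),
              ENNReal.ofReal ((|g y z| ^ (2 * k))⁻¹)) /
            ENNReal.ofReal (Real.exp (θ * n)))
        atTop (nhds ⊤)) := by
  -- notation
  set Q : ℝ → ℕ → ℝ≥0∞ := fun y n =>
    ENNReal.ofReal (γ y / n) *
      ∫⁻ z in Set.Ioc (0 : ℝ) ((n : ℝ) / γ y),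
        ENNReal.ofReal ((|g y z| ^ (2 * k))⁻¹) with hQdef
  -- key lower bound
  have key : ∀ y : ℝ, ∀ n : ℕ, 1 ≤ n →
      ENNReal.ofReal (1 / 2 * Real.exp (2 * k * d * ((n : ℝ) / (2 * γ y)) ^ δ)) ≤ Q y n := by
    intro y n hn
    obtain ⟨ha, _⟩ := hγ y
    have hn' : (0 : ℝ) < n := by exact_mod_cast hn
    set T : ℝ := (n : ℝ) / γ y with hT
    have hT0 : 0 < T := div_pos hn' ha
    have hhalf : (0 : ℝ) < T / 2 := by linarith
    set E : ℝ := Real.exp (2 * k * d * (T / 2) ^ δ) with hE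
    have hTn : T / 2 = (n : ℝ) / (2 * γ y) := by
      rw [hT, div_div]; ring_nf
    rw [← hTn]
    -- lower bound the integral by the integral over Ioc (T/2) T of the constant E
    have hmeas : Measurable fun z : ℝ => ENNReal.ofReal ((|g y z| ^ (2 * k))⁻¹) := by
      have : Measurable (g y) := hgmeas.comp (measurable_prodMk_left)
      exact (((this.abs.pow_const _).inv)).ennreal_ofReal
    have hsub : Set.Ioc (T / 2) T ⊆ Set.Ioc (0 : ℝ) T := Set.Ioc_subset_Ioc (le_of_lt hhalf) le_rfl
    have hbound : ∀ z ∈ Set.Ioc (T / 2) T,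
        ENNReal.ofReal E ≤ ENNReal.ofReal ((|g y z| ^ (2 * k))⁻¹) := by
      intro z hz
      have hz0 : 0 < z := lt_trans hhalf hz.1
      obtain ⟨hg0, hgle⟩ := hgub y z hz0
      have h1 : |g y z| ^ (2 * k) ≤ Real.exp (-(2 * k * d * z ^ δ)) := by
        calc |g y z| ^ (2 * k) ≤ (Real.exp (-d * z ^ δ)) ^ (2 * k) :=
              pow_le_pow_left₀ (abs_nonneg _) hgle _
          _ = Real.exp (-(2 * k * d * z ^ δ)) := by
              rw [← Real.exp_nat_mul]; congr 1; push_cast; ring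
      have h2 : Real.exp (2 * k * d * z ^ δ) ≤ (|g y z| ^ (2 * k))⁻¹ := by
        have := inv_anti₀ (pow_pos hg0 _) h1
        rwa [Real.exp_neg, inv_inv] at this
      have h3 : E ≤ Real.exp (2 * k * d * z ^ δ) := by
        apply Real.exp_le_exp.2
        have : (T / 2) ^ δ ≤ z ^ δ :=
          Real.rpow_le_rpow (le_of_lt hhalf) (le_of_lt hz.1) (by linarith)
        have hkd : (0 : ℝ) ≤ 2 * k * d := by positivity
        nlinarith
      exact ENNReal.ofReal_le_ofReal (le_trans h3 h2)
    have hint : ENNReal.ofReal E * ENNReal.ofReal (T / 2) ≤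
        ∫⁻ z in Set.Ioc (0 : ℝ) T, ENNReal.ofReal ((|g y z| ^ (2 * k))⁻¹) := by
      calc ENNReal.ofReal E * ENNReal.ofReal (T / 2)
          = ∫⁻ _ in Set.Ioc (T / 2) T, ENNReal.ofReal E := by
            rw [setLIntegral_const, Real.volume_Ioc]
            congr 1
            ring_nf
        _ ≤ ∫⁻ z in Set.Ioc (T / 2) T, ENNReal.ofReal ((|g y z| ^ (2 * k))⁻¹) :=
            setLIntegral_mono hmeas hbound
        _ ≤ ∫⁻ z in Set.Ioc (0 : ℝ) T, ENNReal.ofReal ((|g y z| ^ (2 * k))⁻¹) :=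
            lintegral_mono_set hsub
    calc ENNReal.ofReal (1 / 2 * E)
        = ENNReal.ofReal (γ y / n) * (ENNReal.ofReal E * ENNReal.ofReal (T / 2)) := by
          rw [← ENNReal.ofReal_mul (by positivity), ← ENNReal.ofReal_mul (by positivity)]
          congr 1
          field_simp [hT]
          rw [hT, mul_assoc, mul_div_assoc', mul_comm (γ y), mul_div_assoc, div_self ha.ne', mul_one]
      _ ≤ Q y n := by
          exact mul_le_mul_right hint _
  -- the tendsto statement
  have part2 : ∀ y : ℝ, ∀ θ : ℝ, 0 < θ →
      Tendsto (fun n : ℕ => Q y n / ENNReal.ofReal (Real.exp (θ * n))) atTop (nhds ⊤) := by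
    intro y θ hθ
    obtain ⟨ha, _⟩ := hγ y
    set c : ℝ := 2 * k * d / (2 * γ y) ^ δ with hc
    have hc0 : 0 < c := by
      apply div_pos
      · have : (1 : ℝ) ≤ (k : ℝ) := by exact_mod_cast hk
        nlinarith
      · exact Real.rpow_pos_of_pos (by linarith) _
    -- real-valued lower bound function tends to atTop
    have hreal : Tendsto (fun n : ℕ => 1 / 2 * Real.exp (c * (n : ℝ) ^ δ - θ * n)) atTop atTop := by
      apply Tendsto.const_mul_atTop (by norm_num : (0:ℝ) < 1/2)
      apply Real.tendsto_exp_atTop.comp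
      have hpow : Tendsto (fun n : ℕ => (n : ℝ) ^ (δ - 1)) atTop atTop :=
        (tendsto_rpow_atTop (by linarith)).comp tendsto_natCast_atTop_atTop
      have hev : ∀ᶠ n : ℕ in atTop, (n : ℝ) ≤ c * (n : ℝ) ^ δ - θ * n := by
        filter_upwards [eventually_ge_atTop 1,
          hpow.eventually_ge_atTop ((θ + 1) / c)] with n hn1 hn2
        have hn0 : (0 : ℝ) < n := by exact_mod_cast hn1
        have h1 : θ + 1 ≤ c * (n : ℝ) ^ (δ - 1) := by
          rw [div_le_iff₀ hc0] at hn2; linarith [hn2]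
        have h2 : (n : ℝ) ^ δ = (n : ℝ) ^ (δ - 1) * n := by
          rw [← Real.rpow_add_one (ne_of_gt hn0)]; ring_nf
        have h3 : (θ + 1) * n ≤ c * (n : ℝ) ^ (δ - 1) * n :=
          mul_le_mul_of_nonneg_right h1 (le_of_lt hn0)
        nlinarith [h2, h3]
      exact tendsto_atTop_mono' _ hev tendsto_natCast_atTop_atTop
    -- ENNReal lower bound on the quotient
    have hev : ∀ᶠ n : ℕ in atTop,
        ENNReal.ofReal (1 / 2 * Real.exp (c * (n : ℝ) ^ δ - θ * n)) ≤
          Q y n / ENNReal.ofReal (Real.exp (θ * n)) := by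
      filter_upwards [eventually_ge_atTop 1] with n hn
      have hexp : (0 : ℝ) < Real.exp (θ * n) := Real.exp_pos _
      have hEq : ((n : ℝ) / (2 * γ y)) ^ δ = (n : ℝ) ^ δ / (2 * γ y) ^ δ :=
        Real.div_rpow (Nat.cast_nonneg n) (by linarith : (0:ℝ) ≤ 2 * γ y) δ
      have h1 : ENNReal.ofReal (1 / 2 * Real.exp (c * (n : ℝ) ^ δ - θ * n)) =
          ENNReal.ofReal (1 / 2 * Real.exp (2 * k * d * ((n : ℝ) / (2 * γ y)) ^ δ)) /
            ENNReal.ofReal (Real.exp (θ * n)) := by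
        rw [← ENNReal.ofReal_div_of_pos hexp]
        congr 1
        rw [hEq, mul_div_assoc, ← Real.exp_sub]
        congr 2
        rw [hc]
        ring
      rw [h1]
      exact ENNReal.div_le_div_right (key y n hn) _
    exact tendsto_nhds_top_mono (ENNReal.tendsto_ofReal_atTop.comp hreal) hev
  refine ⟨?_, part2⟩
  intro θ hθ p hp C hC
  have h := part2 0 θ hθ
  set K : ℝ := C * (1 + |(0:ℝ)| ^ p) with hK
  have hev : ∀ᶠ n : ℕ in atTop, ENNReal.ofReal K < Q 0 n / ENNReal.ofReal (Real.exp (θ * n)) :=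
    h.eventually (eventually_gt_nhds (by simp [ENNReal.ofReal_lt_top] : ENNReal.ofReal K < ⊤))
  obtain ⟨n, hn1, hn2⟩ := ((hev.and (eventually_ge_atTop 1)).exists)
  refine ⟨n, hn2, 0, ?_⟩
  have hexp : (0 : ℝ) < Real.exp (θ * n) := Real.exp_pos _
  have := (ENNReal.lt_div_iff_mul_lt (Or.inl ((ENNReal.ofReal_pos.2 hexp).ne'))
    (Or.inl ENNReal.ofReal_ne_top)).1 hn1
  calc ENNReal.ofReal (K * Real.exp (θ * n))
      = ENNReal.ofReal K * ENNReal.ofReal (Real.exp (θ * n)) :=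
        ENNReal.ofReal_mul (by positivity)
    _ < Q 0 n := this
end

section
/- Let l ≥ 1 be an integer and M > 0. Let J ⊆ ℝ be an open interval and f : J → ℝ a C^l function with f'(u) ≠ 0 for all u ∈ J and |f^{(j)}(u)| ≤ M for all u ∈ J and j = 1,…,l. Let ξ be the inverse of f, defined on the open interval f(J). Then ξ is C^l and there exists a constant K, depending only on l and M, such that for all u ∈ f(J): |ξ^{(l)}(u)| ≤ K |f'(ξ(u))|^{−2l+1}. -/
open Set Filter Topology

noncomputable def Dc (M : ℝ) : ℕ → ℕ → ℝ
  | 0, _ => 1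
  | 1, _ => 1
  | (k+2), j => ∑ i ∈ Finset.range (j+1), (j.choose i : ℝ) *
      (Dc M (k+1) (i+1) * M + (2*(k:ℝ)+1) * (Dc M (k+1) i * M))

theorem Dc_nonneg {M : ℝ} (hM : 0 ≤ M) : ∀ k j, 0 ≤ Dc M k j := by
  intro k
  induction k with
  | zero => intro j; simp [Dc]
  | succ k ih =>
    intro j
    match k, ih with
    | 0, _ => simp [Dc]
    | (m+1), ih =>
      rw [show (m+1+1) = m+2 from rfl]
      simp only [Dc]
      refine Finset.sum_nonneg fun i _ => ?_
      have h1 := ih (i+1)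
      have h2 := ih i
      have h3 : (0:ℝ) ≤ 2*(m:ℝ)+1 := by positivity
      apply mul_nonneg (by positivity)
      exact add_nonneg (mul_nonneg h1 hM) (mul_nonneg h3 (mul_nonneg h2 hM))

theorem itDW_of_isOpen {s : Set ℝ} (f : ℝ → ℝ) (n : ℕ) (hs : IsOpen s) {x : ℝ} (hx : x ∈ s) :
    iteratedDerivWithin n f s x = iteratedDeriv n f x := by
  rw [iteratedDerivWithin_eq_iteratedFDerivWithin, iteratedDeriv_eq_iteratedFDeriv,
    iteratedFDerivWithin_of_isOpen n hs hx]

theorem itDW_sub_const_mul {J : Set ℝ} (hJu : UniqueDiffOn ℝ J) {u : ℝ} (hu : u ∈ J)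
    {A B : ℝ → ℝ} {j : ℕ} (hA : ContDiffOn ℝ j A J) (hB : ContDiffOn ℝ j B J) (c : ℝ) :
    iteratedDerivWithin j (fun u => A u - c * B u) J u =
      iteratedDerivWithin j A J u - c * iteratedDerivWithin j B J u := by
  have hgj : ContDiffOn ℝ j (fun u => c * B u) J := contDiffOn_const.mul hB
  have h1 := iteratedDerivWithin_sub hu hJu (hA u hu) (hgj u hu)
  have h2 := iteratedDerivWithin_const_mul hu hJu c (hB u hu)
  exact h1.trans (by rw [h2])

theorem itDW_mul_bound {J : Set ℝ} (hJu : UniqueDiffOn ℝ J) {u : ℝ} (hu : u ∈ J)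
    {A B : ℝ → ℝ} {j : ℕ} (hA : ContDiffOn ℝ j A J) (hB : ContDiffOn ℝ j B J) {a b : ℕ → ℝ}
    (ha : ∀ i ≤ j, |iteratedDerivWithin i A J u| ≤ a i)
    (hb : ∀ i ≤ j, |iteratedDerivWithin i B J u| ≤ b i)
    (ha0 : ∀ i, 0 ≤ a i) :
    |iteratedDerivWithin j (fun u => A u * B u) J u| ≤
      ∑ i ∈ Finset.range (j+1), (j.choose i : ℝ) * (a i * b (j - i)) := by
  rw [← Real.norm_eq_abs, ← norm_iteratedFDerivWithin_eq_norm_iteratedDerivWithin]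
  refine (norm_iteratedFDerivWithin_mul_le hA hB hJu hu le_rfl).trans ?_
  refine Finset.sum_le_sum fun i hi => ?_
  have hij : i ≤ j := by
    have := Finset.mem_range.1 hi; omega
  rw [norm_iteratedFDerivWithin_eq_norm_iteratedDerivWithin,
    norm_iteratedFDerivWithin_eq_norm_iteratedDerivWithin, Real.norm_eq_abs, Real.norm_eq_abs,
    mul_assoc]
  refine mul_le_mul_of_nonneg_left ?_ (by positivity)
  exact mul_le_mul (ha i hij) (hb (j-i) (by omega)) (abs_nonneg _) (ha0 i)

theorem step_bound {J : Set ℝ} (hJo : IsOpen J) (hJu : UniqueDiffOn ℝ J) {M : ℝ} (hM : 0 ≤ M)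
    {f P : ℝ → ℝ} {l k j : ℕ} (hk1 : 1 ≤ k) (hkl : k + 1 ≤ l) (hj : j ≤ l - (k+1))
    (hf : ContDiffOn ℝ l f J)
    (hfM : ∀ u ∈ J, ∀ i : ℕ, 1 ≤ i → i ≤ l → |iteratedDerivWithin i f J u| ≤ M)
    (hPc : ContDiffOn ℝ ((l - k : ℕ)) P J)
    (hPb : ∀ i : ℕ, i ≤ l - k → ∀ u ∈ J, |iteratedDerivWithin i P J u| ≤ Dc M k i)
    {u : ℝ} (hu : u ∈ J) :
    |iteratedDerivWithin j
        (fun u => deriv P u * deriv f u - (2*(k:ℝ)-1) * (P u * deriv (deriv f) u)) J u|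
      ≤ Dc M (k+1) j := by
  obtain ⟨m, rfl⟩ : ∃ m, k = m + 1 := ⟨k-1, by omega⟩
  have hshift : ∀ (g : ℝ → ℝ) (n : ℕ),
      iteratedDerivWithin n (deriv g) J u = iteratedDerivWithin (n+1) g J u := by
    intro g n
    rw [iteratedDerivWithin_succ']
    exact (iteratedDerivWithin_congr (fun y hy => derivWithin_of_isOpen hJo hy) hu).symm
  have hf1 : ContDiffOn ℝ ((l-1 : ℕ)) (deriv f) J :=
    hf.deriv_of_isOpen hJo (by exact_mod_cast (by omega : (l-1)+1 ≤ l))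
  have hf2 : ContDiffOn ℝ ((l-2 : ℕ)) (deriv (deriv f)) J :=
    hf1.deriv_of_isOpen hJo (by exact_mod_cast (by omega : (l-2)+1 ≤ l-1))
  have hP1 : ContDiffOn ℝ ((l-(m+1)-1 : ℕ)) (deriv P) J :=
    hPc.deriv_of_isOpen hJo (by exact_mod_cast (by omega : (l-(m+1)-1)+1 ≤ l-(m+1)))
  have hcast : ∀ {a b : ℕ}, a ≤ b → ((a:ℕ) : WithTop ℕ∞) ≤ ((b:ℕ) : WithTop ℕ∞) :=
    fun {a b} h => by exact_mod_cast h
  have hAc : ContDiffOn ℝ (j:ℕ) (fun u => deriv P u * deriv f u) J :=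
    (hP1.of_le (hcast (by omega))).mul (hf1.of_le (hcast (by omega)))
  have hBc : ContDiffOn ℝ (j:ℕ) (fun u => P u * deriv (deriv f) u) J :=
    (hPc.of_le (hcast (by omega))).mul (hf2.of_le (hcast (by omega)))
  have hsplit := itDW_sub_const_mul hJu hu hAc hBc (2*((m+1:ℕ):ℝ)-1)
  have hA : |iteratedDerivWithin j (fun u => deriv P u * deriv f u) J u| ≤
      ∑ i ∈ Finset.range (j+1), (j.choose i : ℝ) * (Dc M (m+1) (i+1) * M) := by
    refine itDW_mul_bound hJu hu (hP1.of_le (hcast (by omega)))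
      (hf1.of_le (hcast (by omega))) (b := fun _ => M) ?_ ?_ ?_
    · intro i hij
      rw [hshift P i]
      exact hPb (i+1) (by omega) u hu
    · intro i hij
      rw [hshift f i]
      exact hfM u hu (i+1) (by omega) (by omega)
    · exact fun i => Dc_nonneg hM _ _
  have hB : |iteratedDerivWithin j (fun u => P u * deriv (deriv f) u) J u| ≤
      ∑ i ∈ Finset.range (j+1), (j.choose i : ℝ) * (Dc M (m+1) i * M) := by
    refine itDW_mul_bound hJu hu (hPc.of_le (hcast (by omega)))
      (hf2.of_le (hcast (by omega))) (b := fun _ => M) ?_ ?_ ?_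
    · intro i hij
      exact hPb i (by omega) u hu
    · intro i hij
      rw [hshift (deriv f) i, hshift f (i+1)]
      exact hfM u hu (i+2) (by omega) (by omega)
    · exact fun i => Dc_nonneg hM _ _
  have hc0 : (0:ℝ) ≤ 2*((m+1:ℕ):ℝ)-1 := by push_cast; linarith [Nat.cast_nonneg (α := ℝ) m]
  rw [hsplit]
  calc |iteratedDerivWithin j (fun u => deriv P u * deriv f u) J u -
        (2*((m+1:ℕ):ℝ)-1) * iteratedDerivWithin j (fun u => P u * deriv (deriv f) u) J u|
      ≤ |iteratedDerivWithin j (fun u => deriv P u * deriv f u) J u| +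
        (2*((m+1:ℕ):ℝ)-1) * |iteratedDerivWithin j (fun u => P u * deriv (deriv f) u) J u| := by
        refine (abs_sub _ _).trans ?_
        rw [abs_mul, abs_of_nonneg hc0]
    _ ≤ (∑ i ∈ Finset.range (j+1), (j.choose i : ℝ) * (Dc M (m+1) (i+1) * M)) +
        (2*((m+1:ℕ):ℝ)-1) * ∑ i ∈ Finset.range (j+1), (j.choose i : ℝ) * (Dc M (m+1) i * M) :=
        add_le_add hA (mul_le_mul_of_nonneg_left hB hc0)
    _ = Dc M (m+2) j := by
        simp only [Dc]
        rw [Finset.mul_sum, ← Finset.sum_add_distrib]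
        refine Finset.sum_congr rfl fun i _ => ?_
        push_cast
        ring

theorem step_deriv {P g ξ : ℝ → ℝ} {v a q : ℝ} (m : ℕ)
    (hξ : HasDerivAt ξ (g (ξ v))⁻¹ v) (hP : HasDerivAt P a (ξ v))
    (hg : HasDerivAt g q (ξ v)) (hbne : g (ξ v) ≠ 0) :
    HasDerivAt (fun w => P (ξ w) / (g (ξ w)) ^ (2*m+1))
      ((a * g (ξ v) - (2*(m:ℝ)+1) * (P (ξ v) * q)) / (g (ξ v)) ^ (2*m+3)) v := by
  have h1 : HasDerivAt (fun w => P (ξ w)) (a * (g (ξ v))⁻¹) v := hP.comp v hξ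
  have h2 : HasDerivAt (fun w => g (ξ w)) (q * (g (ξ v))⁻¹) v := hg.comp v hξ
  have h3 := h2.pow (2*m+1)
  have h5 := h1.div h3 (pow_ne_zero (2*m+1) hbne)
  refine HasDerivAt.congr_deriv h5 ?_
  push_cast [Pi.pow_apply]
  field_simp
  ring

/-- Bound (bxi): if `f` is `C^l` on an open interval `J` with `f' ≠ 0` and
`|f^{(j)}| ≤ M` on `J` for `j = 1,…,l`, then its inverse `ξ`, defined on `f(J)`, is `C^l`
and satisfies `|ξ^{(l)}(u)| ≤ K |f'(ξ(u))|^{−2l+1}` for a constant `K = K(l, M)`. -/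
theorem stmt_14 (l : ℕ) (hl : 1 ≤ l) (M : ℝ) (hM : 0 < M) :
    ∃ K : ℝ, ∀ (J : Set ℝ), IsOpen J → J.OrdConnected →
      ∀ f ξ : ℝ → ℝ,
        ContDiffOn ℝ l f J →
        (∀ u ∈ J, derivWithin f J u ≠ 0) →
        (∀ u ∈ J, ∀ j : ℕ, 1 ≤ j → j ≤ l → |iteratedDerivWithin j f J u| ≤ M) →
        (∀ u ∈ J, ξ (f u) = u) →
        (∀ v ∈ f '' J, f (ξ v) = v ∧ ξ v ∈ J) →
        ContDiffOn ℝ l ξ (f '' J) ∧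
          ∀ v ∈ f '' J,
            |iteratedDerivWithin l ξ (f '' J) v|
              ≤ K * (|derivWithin f J (ξ v)| ^ (2 * l - 1))⁻¹ := by
  refine ⟨Dc M l 0, ?_⟩
  intro J hJo _hJoc f ξ hf hf'0 hfM hξf hfξ
  have hl1 : ((l : ℕ) : WithTop ℕ∞) ≠ 0 := by exact_mod_cast (by omega : l ≠ 0)
  have hJu : UniqueDiffOn ℝ J := hJo.uniqueDiffOn
  have hd : ∀ u ∈ J, deriv f u ≠ 0 := fun u hu => by
    rw [← derivWithin_of_isOpen hJo hu]; exact hf'0 u hu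
  have hstrict : ∀ u ∈ J, HasStrictDerivAt f (deriv f u) u := fun u hu =>
    (hf.contDiffAt (hJo.mem_nhds hu)).hasStrictDerivAt hl1
  have hIopen : IsOpen (f '' J) := by
    rw [isOpen_iff_mem_nhds]
    rintro v ⟨u, hu, rfl⟩
    rw [← (hstrict u hu).map_nhds_eq (hd u hu)]
    exact mem_map.2 (mem_of_superset (hJo.mem_nhds hu) (subset_preimage_image f J))
  have hξd : ∀ v ∈ f '' J, HasDerivAt ξ (deriv f (ξ v))⁻¹ v := by
    intro v hv
    obtain ⟨hfv, hvJ⟩ := hfξ v hv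
    have h1 : ∀ᶠ x in 𝓝 (ξ v), ξ (f x) = x := by
      filter_upwards [hJo.mem_nhds hvJ] with x hx using hξf x hx
    have := ((hstrict (ξ v) hvJ).to_local_left_inverse (hd _ hvJ) h1).hasDerivAt
    rwa [hfv] at this
  have hξsm : ContDiffOn ℝ l ξ (f '' J) := by
    intro v hv
    obtain ⟨hfv, hvJ⟩ := hfξ v hv
    have hcd : ContDiffAt ℝ l f (ξ v) := hf.contDiffAt (hJo.mem_nhds hvJ)
    have hfd : HasFDerivAt f
        (ContinuousLinearEquiv.unitsEquivAut ℝ (Units.mk0 (deriv f (ξ v)) (hd _ hvJ)) :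
          ℝ →L[ℝ] ℝ) (ξ v) :=
      ((hcd.differentiableAt hl1).hasDerivAt).hasFDerivAt_equiv (hd _ hvJ)
    have hloc : ContDiffAt ℝ l (hcd.localInverse hfd hl1) (f (ξ v)) :=
      hcd.to_localInverse hfd hl1
    have hst := hcd.hasStrictFDerivAt' hfd hl1
    have huniq : ∀ᶠ y in 𝓝 (f (ξ v)), ξ y = hcd.localInverse hfd hl1 y := by
      have h1 : ∀ᶠ x in 𝓝 (ξ v), ξ (f x) = x := by
        filter_upwards [hJo.mem_nhds hvJ] with x hx using hξf x hx
      exact hst.localInverse_unique h1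
    have : ContDiffAt ℝ l ξ (f (ξ v)) := hloc.congr_of_eventuallyEq huniq
    rw [hfv] at this
    exact this.contDiffWithinAt
  -- main representation claim
  have key : ∀ k : ℕ, 1 ≤ k → k ≤ l → ∃ P : ℝ → ℝ,
      ContDiffOn ℝ ((l - k : ℕ)) P J ∧
      (∀ j : ℕ, j ≤ l - k → ∀ u ∈ J, |iteratedDerivWithin j P J u| ≤ Dc M k j) ∧
      (∀ v ∈ f '' J, iteratedDeriv k ξ v = P (ξ v) / (deriv f (ξ v)) ^ (2*k - 1)) := by
    intro k hk
    induction k, hk using Nat.le_induction with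
    | base =>
      intro _
      refine ⟨fun _ => 1, contDiffOn_const, ?_, ?_⟩
      · intro j _ u hu
        match j with
        | 0 =>
          simp only [iteratedDerivWithin_zero]
          simp [Dc]
        | (m+1) =>
          rw [← Real.norm_eq_abs, ← norm_iteratedFDerivWithin_eq_norm_iteratedDerivWithin,
            iteratedFDerivWithin_const_of_ne (Nat.succ_ne_zero m) _]
          simp [Dc]
      · intro v hv
        rw [show (2*1-1 : ℕ) = 1 from rfl, pow_one, iteratedDeriv_one, (hξd v hv).deriv]
        simp
    | succ k hk1 ih =>
      intro hkl
      obtain ⟨P, hPc, hPb, hPr⟩ := ih (by omega)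
      refine ⟨fun u => deriv P u * deriv f u - (2*(k:ℝ)-1) * (P u * deriv (deriv f) u),
        ?_, ?_, ?_⟩
      · -- smoothness
        have hf1 : ContDiffOn ℝ ((l-1 : ℕ)) (deriv f) J :=
          hf.deriv_of_isOpen hJo (by exact_mod_cast (by omega : (l-1)+1 ≤ l))
        have hf2 : ContDiffOn ℝ ((l-2 : ℕ)) (deriv (deriv f)) J :=
          hf1.deriv_of_isOpen hJo (by exact_mod_cast (by omega : (l-2)+1 ≤ l-1))
        have hP1 : ContDiffOn ℝ ((l-k-1 : ℕ)) (deriv P) J :=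
          hPc.deriv_of_isOpen hJo (by exact_mod_cast (by omega : (l-k-1)+1 ≤ l-k))
        have hcast : ∀ {a b : ℕ}, a ≤ b → ((a:ℕ) : WithTop ℕ∞) ≤ ((b:ℕ) : WithTop ℕ∞) :=
          fun {a b} h => by exact_mod_cast h
        have h1 : ContDiffOn ℝ ((l-(k+1) : ℕ)) (fun u => deriv P u * deriv f u) J :=
          (hP1.of_le (hcast (by omega))).mul (hf1.of_le (hcast (by omega)))
        have h2 : ContDiffOn ℝ ((l-(k+1) : ℕ)) (fun u => P u * deriv (deriv f) u) J :=
          (hPc.of_le (hcast (by omega))).mul (hf2.of_le (hcast (by omega)))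
        exact h1.sub (contDiffOn_const.mul h2)
      · -- bounds
        intro j hj u hu
        obtain ⟨m, rfl⟩ : ∃ m, k = m + 1 := ⟨k-1, by omega⟩
        exact step_bound hJo hJu hM.le hk1 hkl hj hf hfM hPc hPb hu
      · -- representation
        intro v hv
        obtain ⟨hfv, hvJ⟩ := hfξ v hv
        obtain ⟨m, rfl⟩ : ∃ m, k = m + 1 := ⟨k-1, by omega⟩
        have hcast : ∀ {a b : ℕ}, a ≤ b → ((a:ℕ) : WithTop ℕ∞) ≤ ((b:ℕ) : WithTop ℕ∞) :=
          fun {a b} h => by exact_mod_cast h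
        have hf1 : ContDiffOn ℝ ((l-1 : ℕ)) (deriv f) J :=
          hf.deriv_of_isOpen hJo (by exact_mod_cast (by omega : (l-1)+1 ≤ l))
        have hPd : HasDerivAt P (deriv P (ξ v)) (ξ v) := by
          have : DifferentiableOn ℝ P J :=
            hPc.differentiableOn (by exact_mod_cast (by omega : l - (m+1) ≠ 0))
          exact (this.differentiableAt (hJo.mem_nhds hvJ)).hasDerivAt
        have hfd2 : HasDerivAt (deriv f) (deriv (deriv f) (ξ v)) (ξ v) := by
          have : DifferentiableOn ℝ (deriv f) J :=
            hf1.differentiableOn (by exact_mod_cast (by omega : l - 1 ≠ 0))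
          exact (this.differentiableAt (hJo.mem_nhds hvJ)).hasDerivAt
        have hstep := step_deriv m (hξd v hv) hPd hfd2 (hd _ hvJ)
        have heq : iteratedDeriv (m+1) ξ =ᶠ[𝓝 v]
            fun w => P (ξ w) / (deriv f (ξ w)) ^ (2*m+1) := by
          filter_upwards [hIopen.mem_nhds hv] with w hw
          rw [hPr w hw, show 2*(m+1)-1 = 2*m+1 from by omega]
        rw [show m+1+1 = (m+1)+1 from rfl, iteratedDeriv_succ, heq.deriv_eq, hstep.deriv]
        rw [show 2*(m+1+1)-1 = 2*m+3 from by omega]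
        push_cast
        ring_nf
      -- end
  refine ⟨hξsm, ?_⟩
  intro v hv
  obtain ⟨hfv, hvJ⟩ := hfξ v hv
  obtain ⟨P, hPc, hPb, hPr⟩ := key l hl le_rfl
  rw [itDW_of_isOpen ξ l hIopen hv, hPr v hv, derivWithin_of_isOpen hJo hvJ]
  rw [abs_div, abs_pow, div_eq_mul_inv]
  refine mul_le_mul_of_nonneg_right ?_ (by positivity)
  have := hPb 0 (Nat.zero_le _) (ξ v) hvJ
  rwa [iteratedDerivWithin_zero] at this
end
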